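/- arXiv:1801.08876 — 9 statements merged into one kernel-verified Lean document; each statement's English description precedes it below -/
import Mathlib

section
/- For every integer k > 2, there exists a finite tree T with maximum degree exactly k whose edge set cannot be partitioned into two parts M and I such that M is a matching and I is a locally irregular part. -/
open SimpleGraph

variable {V : Type*}

/-- The degree of a vertex `v` in an edge part `E`: the number of edges of `E` incident to `v`. -/
noncomputable def partDeg (E : Set (Sym2 V)) (v : V) : ℕ :=
  {e ∈ E | v ∈ e}.ncard

/-- A part is a matching if no two of its edges share a vertex. -/
def IsMatchingPart (E : Set (Sym2 V)) : Prop :=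
  ∀ e ∈ E, ∀ f ∈ E, e ≠ f → ∀ v : V, v ∈ e → v ∉ f

/-- A part is locally irregular if the endpoints of each of its edges have distinct degrees. -/
def IsLocallyIrregularPart (E : Set (Sym2 V)) : Prop :=
  ∀ u v : V, s(u, v) ∈ E → partDeg E u ≠ partDeg E v

/-- A part is locally regular if the endpoints of each of its edges have equal degrees. -/
def IsLocallyRegularPart (E : Set (Sym2 V)) : Prop :=
  ∀ u v : V, s(u, v) ∈ E → partDeg E u = partDeg E v

/-- A part is regular if all vertices incident to one of its edges have the same degree `r ≥ 1`. -/
def IsRegularPart (E : Set (Sym2 V)) : Prop :=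
  ∃ r : ℕ, 1 ≤ r ∧ ∀ v : V, (∃ e ∈ E, v ∈ e) → partDeg E v = r

/-- A part is `r`-regular if every vertex incident to one of its edges has degree `r` in it. -/
def IsRegularPartOfDeg (r : ℕ) (E : Set (Sym2 V)) : Prop :=
  ∀ v : V, (∃ e ∈ E, v ∈ e) → partDeg E v = r

/-- A part is locally `k`-irregular if endpoint degrees of each edge differ by at least `k`. -/
def IsLocallyKIrregularPart (k : ℕ) (E : Set (Sym2 V)) : Prop :=
  ∀ u v : V, s(u, v) ∈ E → (k : ℤ) ≤ |(partDeg E u : ℤ) - (partDeg E v : ℤ)|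

/-- The maximum degree of a finite graph. -/
noncomputable def maxDeg [Fintype V] (G : SimpleGraph V) : ℕ :=
  Finset.univ.sup fun v => partDeg G.edgeSet v

namespace Stmt0Aux

variable (k : ℕ)

def arms (i : Fin k) : ℕ := if (i : ℕ) < 2 then k - 2 else k - 1

abbrev A := (i : Fin k) × Fin (arms k i)

abbrev Vk := Unit ⊕ Fin k ⊕ (A k × Bool)

def root : Vk k := Sum.inl ()
def hub (i : Fin k) : Vk k := Sum.inr (Sum.inl i)
def mid (a : A k) : Vk k := Sum.inr (Sum.inr (a, false))
def leaf (a : A k) : Vk k := Sum.inr (Sum.inr (a, true))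

def par : Vk k → Option (Vk k)
  | Sum.inl _ => none
  | Sum.inr (Sum.inl _) => some (root k)
  | Sum.inr (Sum.inr (a, false)) => some (hub k a.1)
  | Sum.inr (Sum.inr (a, true)) => some (mid k a)

def Gk : SimpleGraph (Vk k) := SimpleGraph.fromRel (fun u v => par k u = some v)

variable {k}

lemma par_ne {u v : Vk k} (h : par k u = some v) : u ≠ v := by
  rcases u with _ | (i | ⟨a, _ | _⟩) <;>
    simp only [par, Option.some.injEq, reduceCtorEq] at h <;>
    subst h <;> simp [root, hub, mid, leaf]

lemma adj_iff {u v : Vk k} : (Gk k).Adj u v ↔ par k u = some v ∨ par k v = some u := by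
  rw [Gk, SimpleGraph.fromRel_adj]
  constructor
  · rintro ⟨-, h⟩; exact h
  · rintro (h | h)
    · exact ⟨par_ne h, Or.inl h⟩
    · exact ⟨(par_ne h).symm, Or.inr h⟩

lemma adj_elim {u v : Vk k} (h : (Gk k).Adj u v) :
    (∃ i, (u = root k ∧ v = hub k i) ∨ (v = root k ∧ u = hub k i)) ∨
    (∃ a : A k, (u = hub k a.1 ∧ v = mid k a) ∨ (v = hub k a.1 ∧ u = mid k a)) ∨
    (∃ a : A k, (u = mid k a ∧ v = leaf k a) ∨ (v = mid k a ∧ u = leaf k a)) := by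
  rw [adj_iff] at h
  rcases h with h | h
  · rcases u with _ | (i | ⟨a, _ | _⟩) <;>
      simp only [par, Option.some.injEq, reduceCtorEq] at h
    · exact Or.inl ⟨i, Or.inr ⟨h.symm, rfl⟩⟩
    · exact Or.inr (Or.inl ⟨a, Or.inr ⟨h.symm, rfl⟩⟩)
    · exact Or.inr (Or.inr ⟨a, Or.inr ⟨h.symm, rfl⟩⟩)
  · rcases v with _ | (i | ⟨a, _ | _⟩) <;>
      simp only [par, Option.some.injEq, reduceCtorEq] at h
    · exact Or.inl ⟨i, Or.inl ⟨h.symm, rfl⟩⟩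
    · exact Or.inr (Or.inl ⟨a, Or.inl ⟨h.symm, rfl⟩⟩)
    · exact Or.inr (Or.inr ⟨a, Or.inl ⟨h.symm, rfl⟩⟩)



lemma adj_root_iff {v : Vk k} : (Gk k).Adj (root k) v ↔ ∃ i, v = hub k i := by
  rw [adj_iff]
  constructor
  · rintro (h | h)
    · simp [root, par] at h
    · rcases v with _ | (i | ⟨a, _ | _⟩) <;>
        simp only [par, Option.some.injEq, reduceCtorEq] at h
      · exact ⟨i, rfl⟩
      · simp [hub, root] at h
      · simp [mid, root] at h
  · rintro ⟨i, rfl⟩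
    right; rfl

lemma adj_hub_iff {i : Fin k} {v : Vk k} :
    (Gk k).Adj (hub k i) v ↔ v = root k ∨ ∃ j, v = mid k ⟨i, j⟩ := by
  rw [adj_iff]
  constructor
  · rintro (h | h)
    · simp only [par, hub, Option.some.injEq] at h
      exact Or.inl h.symm
    · rcases v with _ | (i' | ⟨a, _ | _⟩) <;>
        simp only [par, Option.some.injEq, reduceCtorEq] at h
      · simp [root, hub] at h
      · simp only [hub, Sum.inr.injEq, Sum.inl.injEq] at h
        subst h
        exact Or.inr ⟨a.2, rfl⟩
      · simp [mid, hub] at h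
  · rintro (rfl | ⟨j, rfl⟩)
    · left; rfl
    · right; rfl

lemma adj_mid_iff {a : A k} {v : Vk k} :
    (Gk k).Adj (mid k a) v ↔ v = hub k a.1 ∨ v = leaf k a := by
  rw [adj_iff]
  constructor
  · rintro (h | h)
    · simp only [par, mid, Option.some.injEq] at h
      exact Or.inl h.symm
    · rcases v with _ | (i' | ⟨b, _ | _⟩) <;>
        simp only [par, Option.some.injEq, reduceCtorEq] at h
      · simp [root, mid] at h
      · simp [hub, mid] at h
      · simp only [mid, Sum.inr.injEq, Prod.mk.injEq, and_true] at h
        subst h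
        exact Or.inr rfl
  · rintro (rfl | rfl)
    · left; rfl
    · right; rfl

lemma adj_leaf_iff {a : A k} {v : Vk k} :
    (Gk k).Adj (leaf k a) v ↔ v = mid k a := by
  rw [adj_iff]
  constructor
  · rintro (h | h)
    · simp only [par, leaf, Option.some.injEq] at h
      exact h.symm
    · rcases v with _ | (i' | ⟨b, _ | _⟩) <;>
        simp only [par, Option.some.injEq, reduceCtorEq] at h <;>
        simp [root, hub, mid, leaf] at h
  · rintro rfl
    left; rfl



/-! ### Edge names and distinctness -/

def rEdge (i : Fin k) : Sym2 (Vk k) := s(root k, hub k i)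
def hEdge (a : A k) : Sym2 (Vk k) := s(hub k a.1, mid k a)
def aEdge (a : A k) : Sym2 (Vk k) := s(mid k a, leaf k a)

lemma rEdge_inj : Function.Injective (rEdge (k := k)) := by
  intro i i' h
  simp only [rEdge, Sym2.eq_iff, root, hub, mid, leaf, Sum.inr.injEq, Sum.inl.injEq,
    reduceCtorEq, and_false, false_and, or_false] at h
  exact h.2

lemma mid_inj : Function.Injective (mid k) := by
  intro a a' h
  simpa only [mid, Sum.inr.injEq, Prod.mk.injEq, and_true] using h

lemma hEdge_inj : Function.Injective (hEdge (k := k)) := by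
  intro a a' h
  simp only [hEdge, Sym2.eq_iff, hub, mid, Sum.inr.injEq, reduceCtorEq, Prod.mk.injEq,
    and_false, false_and, and_true, or_false] at h
  exact mid_inj (by simpa only [mid, Sum.inr.injEq, Prod.mk.injEq, and_true] using h.2)

lemma aEdge_inj : Function.Injective (aEdge (k := k)) := by
  intro a a' h
  simp only [aEdge, Sym2.eq_iff, mid, leaf, Sum.inr.injEq, Prod.mk.injEq, and_true,
    and_false, false_and, Bool.false_eq_true, or_false] at h
  exact h.1

lemma rEdge_ne_hEdge {i : Fin k} {a : A k} : rEdge i ≠ hEdge a := by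
  simp [rEdge, hEdge, Sym2.eq_iff, root, hub, mid]

lemma rEdge_ne_aEdge {i : Fin k} {a : A k} : rEdge i ≠ aEdge a := by
  simp [rEdge, aEdge, Sym2.eq_iff, root, mid, leaf, hub]

lemma hEdge_ne_aEdge {a b : A k} : hEdge a ≠ aEdge b := by
  simp [hEdge, aEdge, Sym2.eq_iff, hub, mid, leaf]

/-! ### Incidence sets -/

variable {E : Set (Sym2 (Vk k))}

lemma inc_root (hE : E ⊆ (Gk k).edgeSet) :
    {e ∈ E | root k ∈ e} = rEdge '' {i | rEdge i ∈ E} := by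
  ext e
  induction e with
  | _ u w =>
    simp only [Set.mem_sep_iff, Set.mem_image, Set.mem_setOf_eq]
    constructor
    · rintro ⟨heE, hv⟩
      have hadj : (Gk k).Adj u w := (Gk k).mem_edgeSet.mp (hE heE)
      rw [Sym2.mem_iff] at hv
      rcases hv with rfl | rfl
      · obtain ⟨i, rfl⟩ := adj_root_iff.mp hadj
        exact ⟨i, heE, rfl⟩
      · obtain ⟨i, rfl⟩ := adj_root_iff.mp hadj.symm
        rw [Sym2.eq_swap] at heE
        exact ⟨i, heE, Sym2.eq_swap⟩
    · rintro ⟨i, hi, heq⟩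
      rw [← heq]
      exact ⟨hi, Sym2.mem_mk_left _ _⟩

lemma inc_hub (hE : E ⊆ (Gk k).edgeSet) (i : Fin k) :
    {e ∈ E | hub k i ∈ e} =
      ({rEdge i} ∩ E) ∪ (fun j : Fin (arms k i) => hEdge ⟨i, j⟩) '' {j | hEdge ⟨i, j⟩ ∈ E} := by
  ext e
  induction e with
  | _ u w =>
    simp only [Set.mem_sep_iff, Set.mem_union, Set.mem_inter_iff, Set.mem_singleton_iff,
      Set.mem_image, Set.mem_setOf_eq]
    constructor
    · rintro ⟨heE, hv⟩
      have hadj : (Gk k).Adj u w := (Gk k).mem_edgeSet.mp (hE heE)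
      rw [Sym2.mem_iff] at hv
      rcases hv with rfl | rfl
      · rcases adj_hub_iff.mp hadj with rfl | ⟨j, rfl⟩
        · exact Or.inl ⟨Sym2.eq_swap.symm, heE⟩
        · exact Or.inr ⟨j, heE, rfl⟩
      · rcases adj_hub_iff.mp hadj.symm with rfl | ⟨j, rfl⟩
        · exact Or.inl ⟨rfl, heE⟩
        · rw [Sym2.eq_swap] at heE
          exact Or.inr ⟨j, heE, Sym2.eq_swap⟩
    · rintro (⟨heq, hmem⟩ | ⟨j, hj, heq⟩)
      · rw [heq] at hmem ⊢
        exact ⟨hmem, Sym2.mem_mk_right _ _⟩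
      · rw [← heq]
        exact ⟨hj, Sym2.mem_mk_left _ _⟩

lemma inc_mid (hE : E ⊆ (Gk k).edgeSet) (a : A k) :
    {e ∈ E | mid k a ∈ e} = ({hEdge a} ∩ E) ∪ ({aEdge a} ∩ E) := by
  ext e
  induction e with
  | _ u w =>
    simp only [Set.mem_sep_iff, Set.mem_union, Set.mem_inter_iff, Set.mem_singleton_iff]
    constructor
    · rintro ⟨heE, hv⟩
      have hadj : (Gk k).Adj u w := (Gk k).mem_edgeSet.mp (hE heE)
      rw [Sym2.mem_iff] at hv
      rcases hv with rfl | rfl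
      · rcases adj_mid_iff.mp hadj with rfl | rfl
        · exact Or.inl ⟨Sym2.eq_swap.symm, heE⟩
        · exact Or.inr ⟨rfl, heE⟩
      · rcases adj_mid_iff.mp hadj.symm with rfl | rfl
        · exact Or.inl ⟨rfl, heE⟩
        · exact Or.inr ⟨Sym2.eq_swap.symm, heE⟩
    · rintro (⟨heq, hmem⟩ | ⟨heq, hmem⟩) <;> rw [heq] at hmem ⊢
      · exact ⟨hmem, Sym2.mem_mk_right _ _⟩
      · exact ⟨hmem, Sym2.mem_mk_left _ _⟩

lemma inc_leaf (hE : E ⊆ (Gk k).edgeSet) (a : A k) :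
    {e ∈ E | leaf k a ∈ e} = {aEdge a} ∩ E := by
  ext e
  induction e with
  | _ u w =>
    simp only [Set.mem_sep_iff, Set.mem_inter_iff, Set.mem_singleton_iff]
    constructor
    · rintro ⟨heE, hv⟩
      have hadj : (Gk k).Adj u w := (Gk k).mem_edgeSet.mp (hE heE)
      rw [Sym2.mem_iff] at hv
      rcases hv with rfl | rfl
      · rcases adj_leaf_iff.mp hadj with rfl
        exact ⟨Sym2.eq_swap.symm, heE⟩
      · rcases adj_leaf_iff.mp hadj.symm with rfl
        exact ⟨rfl, heE⟩
    · rintro ⟨heq, hmem⟩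
      rw [heq] at hmem ⊢
      exact ⟨hmem, Sym2.mem_mk_right _ _⟩



lemma rEdge_mem {i : Fin k} : rEdge i ∈ (Gk k).edgeSet :=
  (Gk k).mem_edgeSet.mpr (adj_iff.mpr (Or.inr rfl))

lemma hEdge_mem {a : A k} : hEdge a ∈ (Gk k).edgeSet :=
  (Gk k).mem_edgeSet.mpr (adj_iff.mpr (Or.inr rfl))

lemma aEdge_mem {a : A k} : aEdge a ∈ (Gk k).edgeSet :=
  (Gk k).mem_edgeSet.mpr (adj_iff.mpr (Or.inr rfl))

lemma partDeg_root_eq (hE : E ⊆ (Gk k).edgeSet) :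
    partDeg E (root k) = {i | rEdge i ∈ E}.ncard := by
  rw [partDeg, inc_root hE, Set.ncard_image_of_injective _ rEdge_inj]

lemma hEdgeFun_inj {i : Fin k} :
    Function.Injective (fun j : Fin (arms k i) => hEdge (k := k) ⟨i, j⟩) := by
  intro j j' h
  simpa using hEdge_inj h

lemma partDeg_hub_aux (hE : E ⊆ (Gk k).edgeSet) (i : Fin k)
    (hall : ∀ j, hEdge ⟨i, j⟩ ∈ E) :
    partDeg E (hub k i) = ({rEdge i} ∩ E).ncard + arms k i := by
  rw [partDeg, inc_hub hE i]
  have h1 : {j : Fin (arms k i) | hEdge ⟨i, j⟩ ∈ E} = Set.univ := by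
    ext j; simp [hall j]
  rw [h1]
  have hdisj : Disjoint ({rEdge i} ∩ E)
      ((fun j : Fin (arms k i) => hEdge (k := k) ⟨i, j⟩) '' Set.univ) := by
    rw [Set.disjoint_left]
    rintro e ⟨he, -⟩ ⟨j, -, rfl⟩
    rw [Set.mem_singleton_iff] at he
    exact rEdge_ne_hEdge he.symm
  rw [Set.ncard_union_eq hdisj (Set.toFinite _) (Set.toFinite _),
    Set.ncard_image_of_injective _ hEdgeFun_inj]
  simp [Set.ncard_univ]

lemma partDeg_hub_mem (hE : E ⊆ (Gk k).edgeSet) (i : Fin k)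
    (hall : ∀ j, hEdge ⟨i, j⟩ ∈ E) (hr : rEdge i ∈ E) :
    partDeg E (hub k i) = 1 + arms k i := by
  rw [partDeg_hub_aux hE i hall,
    Set.inter_eq_left.mpr (Set.singleton_subset_iff.mpr hr), Set.ncard_singleton]

lemma partDeg_hub_not (hE : E ⊆ (Gk k).edgeSet) (i : Fin k)
    (hall : ∀ j, hEdge ⟨i, j⟩ ∈ E) (hr : rEdge i ∉ E) :
    partDeg E (hub k i) = arms k i := by
  rw [partDeg_hub_aux hE i hall, Set.singleton_inter_eq_empty.mpr hr, Set.ncard_empty]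
  omega

lemma partDeg_mid_one (hE : E ⊆ (Gk k).edgeSet) {a : A k}
    (hh : hEdge a ∉ E) (ha : aEdge a ∈ E) : partDeg E (mid k a) = 1 := by
  rw [partDeg, inc_mid hE a]
  have h1 : {hEdge a} ∩ E = (∅ : Set (Sym2 (Vk k))) := by
    ext e; simp only [Set.mem_inter_iff, Set.mem_singleton_iff, Set.mem_empty_iff_false,
      iff_false, not_and]
    rintro rfl; exact hh
  have h2 : {aEdge a} ∩ E = {aEdge a} := by
    ext e; simp only [Set.mem_inter_iff, Set.mem_singleton_iff, and_iff_left_iff_imp]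
    rintro rfl; exact ha
  rw [h1, h2, Set.empty_union, Set.ncard_singleton]

lemma partDeg_mid_two {a : A k} : partDeg (Gk k).edgeSet (mid k a) = 2 := by
  rw [partDeg, inc_mid le_rfl a]
  have h1 : {hEdge a} ∩ (Gk k).edgeSet = {hEdge a} := by
    ext e; simp only [Set.mem_inter_iff, Set.mem_singleton_iff, and_iff_left_iff_imp]
    rintro rfl; exact hEdge_mem
  have h2 : {aEdge a} ∩ (Gk k).edgeSet = {aEdge a} := by
    ext e; simp only [Set.mem_inter_iff, Set.mem_singleton_iff, and_iff_left_iff_imp]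
    rintro rfl; exact aEdge_mem
  rw [h1, h2]
  rw [Set.ncard_union_eq (by simp [Set.disjoint_left, hEdge_ne_aEdge])
    (Set.toFinite _) (Set.toFinite _), Set.ncard_singleton, Set.ncard_singleton]

lemma partDeg_leaf_eq (hE : E ⊆ (Gk k).edgeSet) {a : A k}
    (ha : aEdge a ∈ E) : partDeg E (leaf k a) = 1 := by
  rw [partDeg, inc_leaf hE a]
  have h2 : {aEdge a} ∩ E = {aEdge a} := by
    ext e; simp only [Set.mem_inter_iff, Set.mem_singleton_iff, and_iff_left_iff_imp]
    rintro rfl; exact ha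
  rw [h2, Set.ncard_singleton]

lemma partDeg_leaf_le (hE : E ⊆ (Gk k).edgeSet) (a : A k) :
    partDeg E (leaf k a) ≤ 1 := by
  rw [partDeg, inc_leaf hE a]
  exact le_trans (Set.ncard_le_ncard (Set.inter_subset_left) (Set.toFinite _))
    (le_of_eq (Set.ncard_singleton _))



/-! ### The core non-decomposability -/

theorem no_decomp (hk : 2 < k) :
    ¬ ∃ M I : Set (Sym2 (Vk k)),
        M ∪ I = (Gk k).edgeSet ∧ Disjoint M I ∧
        IsMatchingPart M ∧ IsLocallyIrregularPart I := by
  rintro ⟨M, I, hMI, hdisj, hM, hI⟩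
  have hIsub : I ⊆ (Gk k).edgeSet := hMI ▸ Set.subset_union_right
  -- Lemma A: every hub-mid edge lies in I
  have hA : ∀ a : A k, hEdge a ∈ I := by
    intro a
    by_contra hnot
    have hhM : hEdge a ∈ M := by
      have h := hMI ▸ (hEdge_mem (a := a))
      rcases h with h | h
      · exact h
      · exact absurd h hnot
    have haI : aEdge a ∈ I := by
      have h := hMI ▸ (aEdge_mem (a := a))
      rcases h with h | h
      · exact absurd (Sym2.mem_mk_left _ _ : mid k a ∈ aEdge a)
          (hM _ hhM _ h hEdge_ne_aEdge (mid k a) (Sym2.mem_mk_right _ _))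
      · exact h
    have h1 : partDeg I (mid k a) = 1 :=
      partDeg_mid_one hIsub (Set.disjoint_left.mp hdisj hhM) haI
    have h2 : partDeg I (leaf k a) = 1 := partDeg_leaf_eq hIsub haI
    exact hI (mid k a) (leaf k a) haI (h1.trans h2.symm)
  have hRoot : partDeg I (root k) = {i : Fin k | rEdge i ∈ I}.ncard :=
    partDeg_root_eq hIsub
  by_cases hall : ∀ i : Fin k, rEdge i ∈ I
  · -- all root edges in I
    have hset : {i : Fin k | rEdge (k := k) i ∈ I} = Set.univ := by
      ext i; simp [hall i]
    have hr : partDeg I (root k) = k := by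
      rw [hRoot, hset, Set.ncard_univ, Nat.card_eq_fintype_card, Fintype.card_fin]
    set i2 : Fin k := ⟨2, hk⟩ with hi2
    have hhub : partDeg I (hub k i2) = 1 + arms k i2 :=
      partDeg_hub_mem hIsub i2 (fun j => hA _) (hall i2)
    have harm : arms k i2 = k - 1 := by simp [arms, hi2]
    refine hI (root k) (hub k i2) (hall i2) ?_
    rw [hr, hhub, harm]
    omega
  · push_neg at hall
    obtain ⟨m, hm⟩ := hall
    have hmM : rEdge m ∈ M := by
      have h := hMI ▸ (rEdge_mem (i := m))
      rcases h with h | h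
      · exact h
      · exact absurd h hm
    have hother : ∀ i : Fin k, i ≠ m → rEdge i ∈ I := by
      intro i hne
      have h := hMI ▸ (rEdge_mem (i := i))
      rcases h with h | h
      · exact absurd (Sym2.mem_mk_left _ _ : root k ∈ rEdge i)
          (hM _ hmM _ h (fun he => hne (rEdge_inj he.symm)) (root k)
            (Sym2.mem_mk_left _ _))
      · exact h
    have hset : {i : Fin k | rEdge (k := k) i ∈ I} = ↑(Finset.univ.erase m) := by
      ext i
      simp only [Set.mem_setOf_eq, Finset.coe_erase, Set.mem_diff, Finset.coe_univ,
        Set.mem_univ, true_and, Set.mem_singleton_iff]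
      constructor
      · intro hi
        rintro rfl
        exact hm hi
      · exact hother i
    have hr : partDeg I (root k) = k - 1 := by
      rw [hRoot, hset, Set.ncard_coe_finset, Finset.card_erase_of_mem (Finset.mem_univ m),
        Finset.card_univ, Fintype.card_fin]
    obtain ⟨t, htm, ht2⟩ : ∃ t : Fin k, t ≠ m ∧ (t : ℕ) < 2 := by
      by_cases h0 : (⟨0, by omega⟩ : Fin k) = m
      · refine ⟨⟨1, by omega⟩, ?_, by simp⟩
        rw [← h0]
        intro h
        simpa using congrArg Fin.val h
      · exact ⟨⟨0, by omega⟩, h0, by simp⟩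
    have htI : rEdge t ∈ I := hother t htm
    have hhub : partDeg I (hub k t) = 1 + arms k t :=
      partDeg_hub_mem hIsub t (fun j => hA _) htI
    have harm : arms k t = k - 2 := by simp [arms, ht2]
    refine hI (root k) (hub k t) htI ?_
    rw [hr, hhub, harm]
    omega



/-! ### Max degree -/

lemma partDeg_root_full (hk : 0 < k) : partDeg (Gk k).edgeSet (root k) = k := by
  rw [partDeg_root_eq le_rfl]
  have hset : {i : Fin k | rEdge (k := k) i ∈ (Gk k).edgeSet} = Set.univ := by
    ext i; simp [rEdge_mem]
  rw [hset, Set.ncard_univ, Nat.card_eq_fintype_card, Fintype.card_fin]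

lemma maxDeg_eq (hk : 2 < k) : maxDeg (Gk k) = k := by
  apply le_antisymm
  · apply Finset.sup_le
    intro v _
    rcases v with _ | (i | ⟨a, _ | _⟩)
    · exact le_of_eq (partDeg_root_full (by omega))
    · have := partDeg_hub_mem (le_rfl : (Gk k).edgeSet ⊆ (Gk k).edgeSet) i
        (fun j => hEdge_mem) rEdge_mem
      rw [show (Sum.inr (Sum.inl i) : Vk k) = hub k i from rfl, this]
      have : arms k i ≤ k - 1 := by
        rw [arms]; split <;> omega
      omega
    · rw [show (Sum.inr (Sum.inr (a, false)) : Vk k) = mid k a from rfl, partDeg_mid_two]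
      omega
    · have h1 : aEdge (k := k) a ∈ (Gk k).edgeSet := aEdge_mem
      rw [show (Sum.inr (Sum.inr (a, true)) : Vk k) = leaf k a from rfl,
        partDeg_leaf_eq le_rfl h1]
      omega
  · have h := Finset.le_sup (f := fun v => partDeg (Gk k).edgeSet v)
      (Finset.mem_univ (root k))
    rwa [partDeg_root_full (by omega : 0 < k)] at h

/-! ### Connectivity -/

lemma reach_root (v : Vk k) : (Gk k).Reachable (root k) v := by
  have hrh : ∀ i, (Gk k).Adj (root k) (hub k i) := fun i => adj_iff.mpr (Or.inr rfl)
  have hhm : ∀ a : A k, (Gk k).Adj (hub k a.1) (mid k a) := fun a => adj_iff.mpr (Or.inr rfl)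
  have hml : ∀ a : A k, (Gk k).Adj (mid k a) (leaf k a) := fun a => adj_iff.mpr (Or.inr rfl)
  rcases v with _ | (i | ⟨a, _ | _⟩)
  · rfl
  · exact (hrh i).reachable
  · exact ((hrh a.1).reachable).trans (hhm a).reachable
  · exact (((hrh a.1).reachable).trans (hhm a).reachable).trans (hml a).reachable

lemma connected : (Gk k).Connected :=
  (connected_iff_exists_forall_reachable (G := Gk k)).mpr ⟨root k, reach_root⟩



/-! ### Acyclicity -/

lemma leaf_inj : Function.Injective (leaf k) := by
  intro a a' h
  simpa only [leaf, Sum.inr.injEq, Prod.mk.injEq, and_true] using h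

lemma reach_inv {W : Type*} {H : SimpleGraph W} {S : Set W}
    (h : ∀ a b, H.Adj a b → (a ∈ S ↔ b ∈ S)) :
    ∀ {u v : W}, H.Reachable u v → (u ∈ S ↔ v ∈ S) := by
  intro u v hr
  obtain ⟨p⟩ := hr
  induction p with
  | nil => exact Iff.rfl
  | cons hadj _ ih => exact (h _ _ hadj).trans ih

lemma del_adj {e : Sym2 (Vk k)} {a b : Vk k} :
    ((Gk k) \ fromEdgeSet {e}).Adj a b ↔ (Gk k).Adj a b ∧ s(a, b) ≠ e := by
  simp only [sdiff_adj, fromEdgeSet_adj, Set.mem_singleton_iff, not_and]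
  constructor
  · rintro ⟨h1, h2⟩
    exact ⟨h1, fun he => (h2 he) h1.ne⟩
  · rintro ⟨h1, h2⟩
    exact ⟨h1, fun he _ => h2 he⟩

lemma sep_general {S : Set (Vk k)} {x y : Vk k}
    (hx : x ∈ S) (hy : y ∉ S)
    (hsep : ∀ a b, (Gk k).Adj a b → s(a, b) ≠ s(x, y) → (a ∈ S ↔ b ∈ S)) :
    ¬((Gk k) \ fromEdgeSet {s(x, y)}).Reachable x y := fun hr =>
  hy ((reach_inv (fun a b hab => hsep a b (del_adj.mp hab).1 (del_adj.mp hab).2) hr).mp hx)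

def idx : Vk k → Option (Fin k)
  | Sum.inl _ => none
  | Sum.inr (Sum.inl i) => some i
  | Sum.inr (Sum.inr (a, _)) => some a.1

lemma key_bridge : ∀ x y : Vk k, par k x = some y →
    ¬((Gk k) \ fromEdgeSet {s(x, y)}).Reachable x y := by
  intro x y hpar
  rcases x with _ | (i | ⟨a, _ | _⟩) <;>
    simp only [par, Option.some.injEq, reduceCtorEq] at hpar <;> subst hpar
  -- Case hub i → root
  · apply sep_general (S := {v : Vk k | idx v = some i})
    · rfl
    · simp [idx, root]
    · intro a b hab hne
      rcases adj_elim hab with ⟨i', hc | hc⟩ | ⟨b', hc | hc⟩ | ⟨b', hc | hc⟩ <;>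
        obtain ⟨rfl, rfl⟩ := hc
      · refine iff_of_false (by simp [idx, root]) (fun hcontra => ?_)
        simp only [idx, hub, Set.mem_setOf_eq, Option.some.injEq] at hcontra
        subst hcontra
        exact hne Sym2.eq_swap
      · refine iff_of_false (fun hcontra => ?_) (by simp [idx, root])
        simp only [idx, hub, Set.mem_setOf_eq, Option.some.injEq] at hcontra
        subst hcontra
        exact hne rfl
      · simp [idx, hub, mid]
      · simp [idx, hub, mid]
      · simp [idx, mid, leaf]
      · simp [idx, mid, leaf]
  -- Case mid a → hub a.1
  · apply sep_general (S := {v : Vk k | v = mid k a ∨ v = leaf k a})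
    · exact Or.inl rfl
    · simp [hub, mid, leaf]
    · intro u v hab hne
      rcases adj_elim hab with ⟨i', hc | hc⟩ | ⟨b', hc | hc⟩ | ⟨b', hc | hc⟩ <;>
        obtain ⟨rfl, rfl⟩ := hc
      · exact iff_of_false (by simp [root, mid, leaf]) (by simp [hub, mid, leaf])
      · exact iff_of_false (by simp [hub, mid, leaf]) (by simp [root, mid, leaf])
      · refine iff_of_false (by simp [hub, mid, leaf]) (fun hcontra => ?_)
        rcases hcontra with hcontra | hcontra
        · have hba : b' = a := mid_inj hcontra
          subst hba
          exact hne Sym2.eq_swap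
        · simp [mid, leaf] at hcontra
      · refine iff_of_false (fun hcontra => ?_) (by simp [hub, mid, leaf])
        rcases hcontra with hcontra | hcontra
        · have hba : b' = a := mid_inj hcontra
          subst hba
          exact hne rfl
        · simp [mid, leaf] at hcontra
      · by_cases hba : b' = a
        · subst hba
          exact iff_of_true (Or.inl rfl) (Or.inr rfl)
        · refine iff_of_false ?_ ?_
          · rintro (hc | hc)
            · exact hba (mid_inj hc)
            · simp [mid, leaf] at hc
          · rintro (hc | hc)
            · simp [mid, leaf] at hc
            · exact hba (leaf_inj hc)
      · by_cases hba : b' = a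
        · subst hba
          exact iff_of_true (Or.inr rfl) (Or.inl rfl)
        · refine iff_of_false ?_ ?_
          · rintro (hc | hc)
            · simp [mid, leaf] at hc
            · exact hba (leaf_inj hc)
          · rintro (hc | hc)
            · exact hba (mid_inj hc)
            · simp [mid, leaf] at hc
  -- Case leaf a → mid a
  · apply sep_general (S := {v : Vk k | v = leaf k a})
    · rfl
    · simp [mid, leaf]
    · intro u v hab hne
      rcases adj_elim hab with ⟨i', hc | hc⟩ | ⟨b', hc | hc⟩ | ⟨b', hc | hc⟩ <;>
        obtain ⟨rfl, rfl⟩ := hc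
      · exact iff_of_false (by simp [root, leaf]) (by simp [hub, leaf])
      · exact iff_of_false (by simp [hub, leaf]) (by simp [root, leaf])
      · exact iff_of_false (by simp [hub, leaf]) (by simp [mid, leaf])
      · exact iff_of_false (by simp [mid, leaf]) (by simp [hub, leaf])
      · refine iff_of_false (by simp [mid, leaf]) (fun hcontra => ?_)
        have hba : b' = a := leaf_inj hcontra
        subst hba
        exact hne Sym2.eq_swap
      · refine iff_of_false (fun hcontra => ?_) (by simp [mid, leaf])
        have hba : b' = a := leaf_inj hcontra
        subst hba
        exact hne rfl

lemma acyclic : (Gk k).IsAcyclic := by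
  rw [isAcyclic_iff_forall_adj_isBridge]
  intro u v hadj
  rcases adj_iff.mp hadj with h | h
  · exact isBridge_iff.mpr (key_bridge u v h)
  · refine isBridge_iff.mpr (fun hr => key_bridge v u h ?_)
    rw [Sym2.eq_swap] at hr
    exact hr.symm

lemma isTree : (Gk k).IsTree := ⟨connected, acyclic⟩



/-! ### Transfer along an equivalence -/

section Transfer

variable {α β : Type*}

lemma mem_map_equiv (f : α ≃ β) (v : α) (e : Sym2 α) :
    f v ∈ Sym2.map f e ↔ v ∈ e := by
  rw [Sym2.mem_map]
  constructor
  · rintro ⟨a, ha, hfa⟩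
    rwa [f.injective hfa] at ha
  · intro hv
    exact ⟨v, hv, rfl⟩

lemma partDeg_map_equiv (f : α ≃ β) (E : Set (Sym2 α)) (v : α) :
    partDeg (Sym2.map f '' E) (f v) = partDeg E v := by
  rw [partDeg, partDeg]
  have hset : {e ∈ Sym2.map f '' E | f v ∈ e} = Sym2.map f '' {e ∈ E | v ∈ e} := by
    ext e
    constructor
    · rintro ⟨⟨e0, he0, rfl⟩, hv⟩
      exact ⟨e0, ⟨he0, (mem_map_equiv f v e0).mp hv⟩, rfl⟩
    · rintro ⟨e0, ⟨he0, hv⟩, rfl⟩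
      exact ⟨⟨e0, he0, rfl⟩, (mem_map_equiv f v e0).mpr hv⟩
  rw [hset, Set.ncard_image_of_injective _ (Sym2.map.injective f.injective)]

end Transfer

/-! ### Final assembly -/

theorem main (k : ℕ) (hk : 2 < k) :
    ∃ (n : ℕ) (T : SimpleGraph (Fin n)),
      T.IsTree ∧ maxDeg T = k ∧
      ¬ ∃ M I : Set (Sym2 (Fin n)),
          M ∪ I = T.edgeSet ∧ Disjoint M I ∧
          IsMatchingPart M ∧ IsLocallyIrregularPart I := by
  classical
  set n := Fintype.card (Vk k) with hn
  set f : Fin n ≃ Vk k := (Fintype.equivFin (Vk k)).symm with hf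
  set T : SimpleGraph (Fin n) := (Gk k).comap f with hT
  have hTadj : ∀ a b : Fin n, T.Adj a b ↔ (Gk k).Adj (f a) (f b) := fun a b => Iff.rfl
  -- edge set correspondence
  have hmemedge : ∀ e : Sym2 (Fin n), e ∈ T.edgeSet ↔ Sym2.map f e ∈ (Gk k).edgeSet := by
    intro e
    induction e with
    | _ u w => rfl
  have himage : Sym2.map f '' T.edgeSet = (Gk k).edgeSet := by
    ext e
    constructor
    · rintro ⟨e0, he0, rfl⟩
      exact (hmemedge e0).mp he0
    · intro he
      refine ⟨Sym2.map f.symm e, ?_, ?_⟩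
      · rw [hmemedge, Sym2.map_map]
        simpa [Sym2.map_id] using he
      · rw [Sym2.map_map]
        simp [Sym2.map_id]
  have φinj : Function.Injective (fun a => f a) := f.injective
  refine ⟨n, T, ⟨?_, ?_⟩, ?_, ?_⟩
  · -- Connected
    have : T ≃g (Gk k) := SimpleGraph.Iso.comap f (Gk k)
    exact this.connected_iff.mpr connected
  · -- Acyclic
    intro v c hc
    have hmap : ((c.map (SimpleGraph.Hom.comap f (Gk k))).IsCycle) :=
      (Walk.map_isCycle_iff_of_injective f.injective).mpr hc
    exact acyclic _ hmap
  · -- maxDeg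
    have hpt : ∀ a : Fin n, partDeg T.edgeSet a = partDeg (Gk k).edgeSet (f a) := by
      intro a
      rw [← himage, partDeg_map_equiv f T.edgeSet a]
    rw [maxDeg, ← maxDeg_eq hk, maxDeg]
    apply le_antisymm
    · apply Finset.sup_le
      intro a _
      rw [hpt a]
      exact Finset.le_sup (Finset.mem_univ (f a))
    · apply Finset.sup_le
      intro v _
      have : partDeg (Gk k).edgeSet v = partDeg T.edgeSet (f.symm v) := by
        rw [hpt (f.symm v), f.apply_symm_apply]
      rw [this]
      exact Finset.le_sup (Finset.mem_univ (f.symm v))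
  · -- no decomposition
    rintro ⟨M, I, hU, hdis, hM, hI⟩
    refine no_decomp hk ⟨Sym2.map f '' M, Sym2.map f '' I, ?_, ?_, ?_, ?_⟩
    · rw [← Set.image_union, hU, himage]
    · exact (Set.disjoint_image_iff (Sym2.map.injective f.injective)).mpr hdis
    · rintro e' ⟨e, he, rfl⟩ f' ⟨g, hg, rfl⟩ hne v hv
      intro hvf
      obtain ⟨w, hw, rfl⟩ := Sym2.mem_map.mp hv
      obtain ⟨w', hw', hww'⟩ := Sym2.mem_map.mp hvf
      have : w' = w := f.injective hww'
      subst this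
      exact hM e he g hg (fun h => hne (by rw [h])) w' hw hw'
    · intro u v huv
      obtain ⟨e0, he0, heq⟩ := huv
      have he0' : e0 = s(f.symm u, f.symm v) := by
        have := congrArg (Sym2.map f.symm) heq
        rw [Sym2.map_map] at this
        simpa [Sym2.map_id, Sym2.map_pair_eq] using this
      subst he0'
      have hne := hI (f.symm u) (f.symm v) he0
      have h1 : partDeg (Sym2.map f '' I) u = partDeg I (f.symm u) := by
        have := partDeg_map_equiv f I (f.symm u)
        rwa [f.apply_symm_apply] at this
      have h2 : partDeg (Sym2.map f '' I) v = partDeg I (f.symm v) := by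
        have := partDeg_map_equiv f I (f.symm v)
        rwa [f.apply_symm_apply] at this
      rw [h1, h2]
      exact hne

end Stmt0Aux

/-- For every integer k > 2 there is a finite tree with maximum degree exactly k
whose edge set cannot be partitioned into a matching and a locally irregular part. -/
theorem stmt_0 (k : ℕ) (hk : 2 < k) :
    ∃ (n : ℕ) (T : SimpleGraph (Fin n)),
      T.IsTree ∧ maxDeg T = k ∧
      ¬ ∃ M I : Set (Sym2 (Fin n)),
          M ∪ I = T.edgeSet ∧ Disjoint M I ∧
          IsMatchingPart M ∧ IsLocallyIrregularPart I := by
  exact Stmt0Aux.main k hk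
end

section
/- The edge set of every finite tree T can be partitioned into two (possibly empty) parts R and P such that R is a matching and every connected component of the spanning subgraph with edge set P is either a single edge or a locally irregular graph (a graph in which every two adjacent vertices have distinct degrees). -/
open SimpleGraph

variable {V : Type*}

open scoped Classical in
noncomputable def treeF (r : V) (par : V → V) (dep : V → ℕ)
    (hdep : ∀ v, v ≠ r → dep (par v) + 1 = dep v)
    (k : V → ℕ) (rc : V → V) (v : V) : Bool × ℕ :=
  if h : v = r then (false, k r)
  else
    let s := treeF r par dep hdep k rc (par v)
    if par v ≠ r ∧ s.1 = false ∧ 1 ≤ k (par v) ∧ s.2 = k (par v) ∧ v = rc (par v) then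
      (true, k v)
    else
      (false, if k v = 0 then 1 else if s.2 = k v + 1 then k v else k v + 1)
termination_by dep v
decreasing_by have := hdep v h; omega

theorem tree_core [Fintype V] (r : V) (par : V → V) (dep : V → ℕ)
    (hdep : ∀ v, v ≠ r → dep (par v) + 1 = dep v) :
    ∃ R P : Set (Sym2 V),
      R ∪ P = {e | ∃ v, v ≠ r ∧ e = s(v, par v)} ∧ Disjoint R P ∧
      IsMatchingPart R ∧
      ∀ u v : V, s(u, v) ∈ P →
        (partDeg P u = 1 ∧ partDeg P v = 1) ∨ partDeg P u ≠ partDeg P v := by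
  classical
  -- children sets and counts
  set Ch : V → Set V := fun v => {c | c ≠ r ∧ par c = v} with hCh
  set k : V → ℕ := fun v => (Ch v).ncard with hk
  -- a choice of a child for every vertex that has one
  have hrc' : ∀ v : V, ∃ c, 1 ≤ k v → c ≠ r ∧ par c = v := by
    intro v
    by_cases h : 1 ≤ k v
    · have hne : (Ch v).Nonempty := Set.nonempty_of_ncard_ne_zero (by have h2 : (Ch v).ncard = k v := rfl; omega)
      obtain ⟨c, hc⟩ := hne
      exact ⟨c, fun _ => hc⟩
    · exact ⟨r, fun h' => absurd h' h⟩
  choose rc hrc using hrc'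
  set F : V → Bool × ℕ := treeF r par dep hdep k rc with hF
  -- basic facts about par
  have hpne : ∀ c, c ≠ r → par c ≠ c := by
    intro c hc hpc
    have := hdep c hc
    rw [hpc] at this; omega
  have hinj : ∀ c c', c ≠ r → c' ≠ r → s(c, par c) = s(c', par c') → c = c' := by
    intro c c' hc hc' h
    rw [Sym2.eq_iff] at h
    rcases h with ⟨h1, h2⟩ | ⟨h1, h2⟩
    · exact h1
    · have d1 := hdep c hc
      have d2 := hdep c' hc'
      rw [h2] at d1; rw [← h1] at d2; omega
  -- unfolding lemmas for F
  have hFr : F r = (false, k r) := by rw [hF, treeF]; simp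
  have htrue : ∀ v, v ≠ r →
      (par v ≠ r ∧ (F (par v)).1 = false ∧ 1 ≤ k (par v) ∧ (F (par v)).2 = k (par v) ∧
        v = rc (par v)) → F v = (true, k v) := by
    intro v hv hcond
    rw [hF, treeF, dif_neg hv]
    simp only [← hF]
    rw [if_pos hcond]
  have hfalse : ∀ v, v ≠ r →
      ¬(par v ≠ r ∧ (F (par v)).1 = false ∧ 1 ≤ k (par v) ∧ (F (par v)).2 = k (par v) ∧
        v = rc (par v)) →
      F v = (false, if k v = 0 then 1 else
        if (F (par v)).2 = k v + 1 then k v else k v + 1) := by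
    intro v hv hcond
    rw [hF, treeF, dif_neg hv]
    simp only [← hF]
    rw [if_neg hcond]

  -- derived facts about F
  have hInR_iff : ∀ v, (F v).1 = true ↔
      (v ≠ r ∧ par v ≠ r ∧ (F (par v)).1 = false ∧ 1 ≤ k (par v) ∧
        (F (par v)).2 = k (par v) ∧ v = rc (par v)) := by
    intro v
    by_cases hv : v = r
    · subst hv; rw [hFr]; simp
    · by_cases hcond : (par v ≠ r ∧ (F (par v)).1 = false ∧ 1 ≤ k (par v) ∧
          (F (par v)).2 = k (par v) ∧ v = rc (par v))
      · rw [htrue v hv hcond]; simpa [hv] using hcond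
      · rw [hfalse v hv hcond]; simpa [hv] using hcond
  have hdtrue : ∀ v, (F v).1 = true → (F v).2 = k v := by
    intro v hv
    obtain ⟨h1, hcond⟩ := (hInR_iff v).1 hv
    rw [htrue v h1 hcond]
  have hdval : ∀ v, v ≠ r → (F v).1 = false →
      (F v).2 = (if k v = 0 then 1 else
        if (F (par v)).2 = k v + 1 then k v else k v + 1) := by
    intro v hv hfv
    by_cases hcond : (par v ≠ r ∧ (F (par v)).1 = false ∧ 1 ≤ k (par v) ∧
        (F (par v)).2 = k (par v) ∧ v = rc (par v))
    · rw [htrue v hv hcond] at hfv; simp at hfv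
    · rw [hfalse v hv hcond]
  have hchild : ∀ v c, c ≠ r → par c = v →
      ((F c).1 = true ↔ (v ≠ r ∧ (F v).1 = false ∧ 1 ≤ k v ∧ (F v).2 = k v ∧ c = rc v)) := by
    intro v c hc hpc
    rw [hInR_iff c, hpc]
    simp [hc]
  -- the two parts
  set R : Set (Sym2 V) := {e | ∃ c, c ≠ r ∧ (F c).1 = true ∧ e = s(c, par c)} with hR
  set P : Set (Sym2 V) := {e | ∃ c, c ≠ r ∧ (F c).1 = false ∧ e = s(c, par c)} with hP
  -- degree computation
  have hdeg : ∀ v, partDeg P v = (F v).2 := by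
    intro v
    have himg : {e ∈ P | v ∈ e} =
        (fun c => s(c, par c)) '' {c | (c ≠ r ∧ (F c).1 = false) ∧ (c = v ∨ par c = v)} := by
      ext e
      simp only [hP, Set.mem_setOf_eq, Set.mem_image]
      constructor
      · rintro ⟨⟨c, hc, hfc, rfl⟩, hve⟩
        rw [Sym2.mem_iff] at hve
        refine ⟨c, ⟨⟨hc, hfc⟩, ?_⟩, rfl⟩
        rcases hve with h | h
        · exact Or.inl h.symm
        · exact Or.inr h.symm
      · rintro ⟨c, ⟨⟨hc, hfc⟩, hcv⟩, rfl⟩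
        refine ⟨⟨c, hc, hfc, rfl⟩, ?_⟩
        rw [Sym2.mem_iff]
        rcases hcv with h | h
        · exact Or.inl h.symm
        · exact Or.inr h.symm
    rw [partDeg, himg,
      Set.ncard_image_of_injOn (fun a ha b hb hab => hinj a b ha.1.1 hb.1.1 hab)]
    have hsplit : {c | (c ≠ r ∧ (F c).1 = false) ∧ (c = v ∨ par c = v)} =
        {c | c = v ∧ (v ≠ r ∧ (F v).1 = false)} ∪
          {c | (c ≠ r ∧ (F c).1 = false) ∧ par c = v} := by
      ext c
      simp only [Set.mem_setOf_eq, Set.mem_union]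
      constructor
      · rintro ⟨⟨h1, h2⟩, h3 | h3⟩
        · subst h3; exact Or.inl ⟨rfl, h1, h2⟩
        · exact Or.inr ⟨⟨h1, h2⟩, h3⟩
      · rintro (⟨h0, h1, h2⟩ | ⟨h12, h3⟩)
        · subst h0; exact ⟨⟨h1, h2⟩, Or.inl rfl⟩
        · exact ⟨h12, Or.inr h3⟩
    have hdisj : Disjoint {c | c = v ∧ (v ≠ r ∧ (F v).1 = false)}
        {c | (c ≠ r ∧ (F c).1 = false) ∧ par c = v} := by
      rw [Set.disjoint_left]
      rintro c ⟨rfl, h1, h2⟩ ⟨⟨h1', h2'⟩, h3'⟩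
      exact hpne c h1' h3'
    rw [hsplit, Set.ncard_union_eq hdisj (Set.toFinite _) (Set.toFinite _)]
    have hA1 : {c | c = v ∧ (v ≠ r ∧ (F v).1 = false)}.ncard =
        if v ≠ r ∧ (F v).1 = false then 1 else 0 := by
      split_ifs with h
      · have : {c | c = v ∧ (v ≠ r ∧ (F v).1 = false)} = {v} := by
          ext c; simp [h]
        rw [this, Set.ncard_singleton]
      · have : {c | c = v ∧ (v ≠ r ∧ (F v).1 = false)} = ∅ := by
          ext c; simp only [Set.mem_setOf_eq, Set.mem_empty_iff_false, iff_false]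
          rintro ⟨rfl, h2⟩; exact h h2
        rw [this, Set.ncard_empty]
    have hA2 : {c | (c ≠ r ∧ (F c).1 = false) ∧ par c = v}.ncard =
        k v - (if (v ≠ r ∧ (F v).1 = false ∧ 1 ≤ k v ∧ (F v).2 = k v) then 1 else 0) := by
      split_ifs with h
      · obtain ⟨hv1, hv2, hv3, hv4⟩ := h
        obtain ⟨hrc1, hrc2⟩ := hrc v hv3
        have hmem : rc v ∈ Ch v := ⟨hrc1, hrc2⟩
        have heq : {c | (c ≠ r ∧ (F c).1 = false) ∧ par c = v} = Ch v \ {rc v} := by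
          ext c
          simp only [Set.mem_setOf_eq, Set.mem_diff, Set.mem_singleton_iff, hCh]
          constructor
          · rintro ⟨⟨h1, h2⟩, h3⟩
            refine ⟨⟨h1, h3⟩, fun hcrc => ?_⟩
            have hft : (F c).1 = true := (hchild v c h1 h3).2 ⟨hv1, hv2, hv3, hv4, hcrc⟩
            rw [hft] at h2; simp at h2
          · rintro ⟨⟨h1, h3⟩, hne⟩
            refine ⟨⟨h1, ?_⟩, h3⟩
            by_contra hfc
            have hfc' : (F c).1 = true := by revert hfc; cases (F c).1 <;> simp
            exact hne ((hchild v c h1 h3).1 hfc').2.2.2.2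
        rw [heq, Set.ncard_diff_singleton_of_mem hmem]
      · have heq : {c | (c ≠ r ∧ (F c).1 = false) ∧ par c = v} = Ch v := by
          ext c
          simp only [Set.mem_setOf_eq, hCh]
          constructor
          · rintro ⟨⟨h1, h2⟩, h3⟩; exact ⟨h1, h3⟩
          · rintro ⟨h1, h3⟩
            refine ⟨⟨h1, ?_⟩, h3⟩
            by_contra hfc
            have hfc' : (F c).1 = true := by revert hfc; cases (F c).1 <;> simp
            have hh := (hchild v c h1 h3).1 hfc'
            exact h ⟨hh.1, hh.2.1, hh.2.2.1, hh.2.2.2.1⟩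
        rw [heq]
        have hkk : (Ch v).ncard = k v := rfl
        omega
    rw [hA1, hA2]
    by_cases hv : v = r
    · rw [if_neg (fun h => h.1 hv), if_neg (fun h => h.1 hv)]
      subst hv; rw [hFr]; simp
    · by_cases hInR : (F v).1 = true
      · rw [if_neg (fun h => by rw [hInR] at h; simp at h),
          if_neg (fun h => by rw [hInR] at h; simp at h)]
        rw [hdtrue v hInR]; omega
      · have hfv : (F v).1 = false := by revert hInR; cases (F v).1 <;> simp
        have hd := hdval v hv hfv
        split_ifs at hd with h0 h1
        · rw [if_pos ⟨hv, hfv⟩, if_neg (fun h => absurd h.2.2.1 (by omega))]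
          omega
        · rw [if_pos ⟨hv, hfv⟩, if_pos ⟨hv, hfv, by omega, hd⟩]
          omega
        · rw [if_pos ⟨hv, hfv⟩, if_neg (fun h => by have := h.2.2.2; omega)]
          omega
  refine ⟨R, P, ?_, ?_, ?_, ?_⟩
  · ext e
    simp only [Set.mem_union, hR, hP, Set.mem_setOf_eq]
    constructor
    · rintro (⟨c, h1, h2, rfl⟩ | ⟨c, h1, h2, rfl⟩) <;> exact ⟨c, h1, rfl⟩
    · rintro ⟨c, h1, rfl⟩
      cases hfc : (F c).1
      · exact Or.inr ⟨c, h1, hfc, rfl⟩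
      · exact Or.inl ⟨c, h1, hfc, rfl⟩
  · rw [Set.disjoint_left]
    rintro e ⟨c, h1, h2, rfl⟩ ⟨c', h1', h2', he⟩
    obtain rfl := hinj c c' h1 h1' he
    rw [h2] at h2'; simp at h2'
  · rintro e ⟨c, h1, h2, rfl⟩ f ⟨c', h1', h2', rfl⟩ hef v hv hvf
    have hcc' : c ≠ c' := fun h => hef (by rw [h])
    rw [Sym2.mem_iff] at hv hvf
    obtain ⟨_, hb1, hb2, hb3, hb4, hb5⟩ := (hInR_iff c).1 h2
    obtain ⟨_, hb1', hb2', hb3', hb4', hb5'⟩ := (hInR_iff c').1 h2'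
    rcases hv with rfl | rfl <;> rcases hvf with h | h
    · exact hcc' h
    · rw [← h] at hb2'; rw [h2] at hb2'; simp at hb2'
    · rw [h] at hb2; rw [h2'] at hb2; simp at hb2
    · rw [← h] at hb5'
      exact hcc' (hb5.trans hb5'.symm)
  · intro u v huv
    obtain ⟨c, hc, hfc, he⟩ := huv
    have aux : (partDeg P c = 1 ∧ partDeg P (par c) = 1) ∨
        partDeg P c ≠ partDeg P (par c) := by
      rw [hdeg c, hdeg (par c)]
      have hd := hdval c hc hfc
      split_ifs at hd with h0 h1 <;> omega
    rw [Sym2.eq_iff] at he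
    rcases he with ⟨rfl, rfl⟩ | ⟨rfl, rfl⟩
    · exact aux
    · tauto

/-- The edge set of every finite tree can be partitioned into a matching R and a
part P such that every connected component of the spanning subgraph with edge set P is a single
edge or locally irregular.  (A component is a single edge exactly when both endpoints of one of
its edges have degree 1 in P; a component is locally irregular exactly when each of its edges
has endpoints of distinct degrees in P.  Since components are edge-connected, this is expressed
edge-locally: each edge of P either has both endpoint degrees equal to 1, or distinct degrees.) -/
theorem stmt_1 {V : Type*} [Fintype V] (T : SimpleGraph V) (hT : T.IsTree) :
    ∃ R P : Set (Sym2 V),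
      R ∪ P = T.edgeSet ∧ Disjoint R P ∧
      IsMatchingPart R ∧
      ∀ u v : V, s(u, v) ∈ P →
        (partDeg P u = 1 ∧ partDeg P v = 1) ∨ partDeg P u ≠ partDeg P v := by
  classical
  have hconn := hT.isConnected
  obtain ⟨r⟩ := hconn.nonempty
  -- adjacent vertices have different distances from the root
  have hdistne : ∀ u v : V, T.Adj u v → T.dist r u ≠ T.dist r v := by
    intro u v hadj heq
    obtain ⟨p, hp, hlen⟩ := hconn.exists_path_of_dist r v
    by_cases hu : u ∈ p.support
    · have hspec := congrArg Walk.length (p.take_spec hu)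
      rw [Walk.length_append] at hspec
      have hd1 : (p.dropUntil u hu).length ≠ 0 := by
        intro h0
        exact hadj.ne (Walk.eq_of_length_eq_zero h0)
      have hdu : T.dist r u ≤ (p.takeUntil u hu).length := dist_le _
      omega
    · have hw2 : (p.concat hadj.symm).IsPath := by
        rw [← Walk.isPath_reverse_iff, Walk.reverse_concat]
        exact hp.reverse.cons (by simpa [Walk.support_reverse] using hu)
      obtain ⟨q, hq, hqlen⟩ := hconn.exists_path_of_dist r u
      have huniq := hT.IsAcyclic.path_unique ⟨p.concat hadj.symm, hw2⟩ ⟨q, hq⟩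
      have hlen2 : (p.concat hadj.symm).length = q.length :=
        congrArg (fun z : T.Path r u => z.1.length) huniq
      rw [Walk.length_concat] at hlen2
      omega
  -- uniqueness of the neighbour closer to the root
  have huniq : ∀ u u' v : V, T.Adj u v → T.Adj u' v →
      T.dist r u + 1 = T.dist r v → T.dist r u' + 1 = T.dist r v → u = u' := by
    intro u u' v hadj hadj' hd hd'
    obtain ⟨p, hp, hlen⟩ := hconn.exists_path_of_dist r u
    obtain ⟨p', hp', hlen'⟩ := hconn.exists_path_of_dist r u'
    have hv : v ∉ p.support := by
      intro hmem
      have h1 := dist_le (p.takeUntil v hmem)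
      have h2 := Walk.length_takeUntil_le p hmem
      omega
    have hv' : v ∉ p'.support := by
      intro hmem
      have h1 := dist_le (p'.takeUntil v hmem)
      have h2 := Walk.length_takeUntil_le p' hmem
      omega
    have hw : (p.concat hadj).IsPath := by
      rw [← Walk.isPath_reverse_iff, Walk.reverse_concat]
      exact hp.reverse.cons (by simpa [Walk.support_reverse] using hv)
    have hw' : (p'.concat hadj').IsPath := by
      rw [← Walk.isPath_reverse_iff, Walk.reverse_concat]
      exact hp'.reverse.cons (by simpa [Walk.support_reverse] using hv')
    have heqp := hT.IsAcyclic.path_unique ⟨p.concat hadj, hw⟩ ⟨p'.concat hadj', hw'⟩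
    have heqw : (p.concat hadj) = (p'.concat hadj') := congrArg Subtype.val heqp
    have h1 : (p.concat hadj).reverse.getVert 1 = u := by
      rw [Walk.reverse_concat, Walk.getVert_cons_succ]
      exact Walk.getVert_zero _
    have h1' : (p'.concat hadj').reverse.getVert 1 = u' := by
      rw [Walk.reverse_concat, Walk.getVert_cons_succ]
      exact Walk.getVert_zero _
    rw [← h1, ← h1', heqw]
  -- parent existence
  have hex : ∀ v : V, ∃ u, v ≠ r → T.Adj u v ∧ T.dist r u + 1 = T.dist r v := by
    intro v
    by_cases hv : v = r
    · exact ⟨v, fun h => absurd hv h⟩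
    · have hd0 : T.dist r v ≠ 0 := by
        intro h0
        exact hv ((hconn.dist_eq_zero_iff).1 h0).symm
      obtain ⟨w, hwlen⟩ := hconn.exists_walk_length_eq_dist r v
      obtain ⟨x, hadj, q, hq⟩ := Walk.exists_eq_cons_of_ne hv w.reverse
      have hql : q.length + 1 = T.dist r v := by
        have := congrArg Walk.length hq
        rw [Walk.length_reverse] at this
        simp only [Walk.length_cons] at this
        omega
      have hx1 : T.dist r x ≤ q.length := by
        rw [SimpleGraph.dist_comm]
        exact dist_le q
      have hx2 : T.dist r v ≤ T.dist r x + 1 := by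
        have t0 := hconn.dist_triangle (u := r) (v := x) (w := v)
        have t1 : T.dist x v = 1 := dist_eq_one_iff_adj.mpr hadj.symm
        omega
      exact ⟨x, fun _ => ⟨hadj.symm, by omega⟩⟩
  choose par hpar using hex
  have hpar1 : ∀ v, v ≠ r → T.Adj (par v) v := fun v hv => (hpar v hv).1
  have hdep : ∀ v, v ≠ r → T.dist r (par v) + 1 = T.dist r v := fun v hv => (hpar v hv).2
  -- edge set characterization
  have hedge : T.edgeSet = {e | ∃ v, v ≠ r ∧ e = s(v, par v)} := by
    ext e
    induction e using Sym2.ind with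
    | _ u v =>
      simp only [mem_edgeSet, Set.mem_setOf_eq]
      constructor
      · intro hadj
        have hne := hdistne u v hadj
        have t1 : T.dist u v = 1 := dist_eq_one_iff_adj.mpr hadj
        have t2 : T.dist v u = 1 := dist_eq_one_iff_adj.mpr hadj.symm
        have t3 := hconn.dist_triangle (u := r) (v := u) (w := v)
        have t4 := hconn.dist_triangle (u := r) (v := v) (w := u)
        have hrr : T.dist r r = 0 := dist_self
        rcases Nat.lt_or_ge (T.dist r u) (T.dist r v) with h | h
        · have hv : v ≠ r := by
            intro hvr; subst hvr; omega
          have heq : u = par v := huniq u (par v) v hadj (hpar1 v hv) (by omega) (hdep v hv)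
          exact ⟨v, hv, by rw [← heq]; exact Sym2.eq_swap⟩
        · have h' : T.dist r v < T.dist r u := by omega
          have hu : u ≠ r := by
            intro hur; subst hur; omega
          have heq : v = par u := huniq v (par u) u hadj.symm (hpar1 u hu) (by omega) (hdep u hu)
          exact ⟨u, hu, by rw [← heq]⟩
      · rintro ⟨w, hw, he⟩
        rw [Sym2.eq_iff] at he
        rcases he with ⟨rfl, rfl⟩ | ⟨rfl, rfl⟩
        · exact (hpar1 _ hw).symm
        · exact hpar1 _ hw
  obtain ⟨R, P, h1, h2, h3, h4⟩ := tree_core r par (T.dist r) hdep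
  exact ⟨R, P, by rw [h1, hedge], h2, h3, h4⟩
end

section
/- The edge set of every finite tree T can be partitioned into three (possibly empty) parts M₁, M₂ and I such that M₁ and M₂ are matchings and I is a locally irregular part, i.e. for every edge uv ∈ I the number of edges of I incident to u differs from the number of edges of I incident to v. -/
open SimpleGraph

variable {V : Type*}

section StmtTwoAuxSection

namespace StmtTwoAux


open scoped Classical in
/-- The decision rule at a vertex. -/
noncomputable def ruleF {V : Type*} (C : Finset V) (L : V → Prop) (E : Prop) (D : ℕ) :
    ℕ × Option V :=
  if E then
    if C.card = 0 then (1, none)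
    else if C.card + 1 = D then (C.card, C.toList.head?)
    else (C.card + 1, none)
  else
    if C.card = 1 then
      (if ∀ w ∈ C, L w then (0, C.toList.head?) else (1, none))
    else (C.card, none)

variable {V : Type*} {C : Finset V} {L : V → Prop} {E : Prop} {D : ℕ}

lemma head?_toList_of_nonempty (h : C.Nonempty) : ∃ x ∈ C, C.toList.head? = some x := by
  cases hl : C.toList with
  | nil => exact absurd (Finset.toList_eq_nil.mp hl) (Finset.nonempty_iff_ne_empty.mp h)
  | cons a l =>
    refine ⟨a, ?_, rfl⟩
    have : a ∈ C.toList := by rw [hl]; exact List.mem_cons_self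
    rwa [Finset.mem_toList] at this

lemma mem_of_head?_toList {x : V} (h : C.toList.head? = some x) : x ∈ C := by
  have := List.eq_cons_of_mem_head? (x := x) (l := C.toList) (by rw [h]; rfl)
  have hx : x ∈ C.toList := by rw [this]; exact List.mem_cons_self
  rwa [Finset.mem_toList] at hx

lemma ruleF_snd_mem {x : V} (h : (ruleF C L E D).2 = some x) : x ∈ C := by
  classical
  unfold ruleF at h
  split_ifs at h <;> simp_all <;> exact mem_of_head?_toList h

lemma ruleF_val_pos (hE : E) :
    (ruleF C L E D).1 = (ruleF C L E D).2.elim C.card (fun _ => C.card - 1) + 1 := by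
  classical
  rw [ruleF, if_pos hE]
  split_ifs with h0 hD
  · simp [h0]
  · obtain ⟨x, hx, hh⟩ := head?_toList_of_nonempty (Finset.card_pos.mp (Nat.pos_of_ne_zero h0))
    have hc : 1 ≤ C.card := Finset.card_pos.mpr ⟨x, hx⟩
    simp only [hh]
    simp only [Option.elim]
    omega
  · simp

lemma ruleF_val_neg (hE : ¬E) :
    (ruleF C L E D).1 = (ruleF C L E D).2.elim C.card (fun _ => C.card - 1) := by
  classical
  rw [ruleF, if_neg hE]
  split_ifs with h1 hall
  · obtain ⟨x, hx, hh⟩ := head?_toList_of_nonempty (Finset.card_pos.mp (h1 ▸ Nat.one_pos))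
    rw [hh]
    simp [h1]
  · simp [h1]
  · simp

/-- Degree at an included (non-excluded) vertex differs from the parent's degree,
provided `D ≠ 1` whenever the vertex is a leaf. -/
lemma ruleF_ne (hE : E) (h1 : C = ∅ → D ≠ 1) : (ruleF C L E D).1 ≠ D := by
  classical
  rw [ruleF, if_pos hE]
  split_ifs with h0 hD
  · have := h1 (Finset.card_eq_zero.mp h0)
    simp only []
    omega
  · simp only []
    omega
  · simp only []
    omega

/-- If the degree is `1`, then every included child is a non-leaf. -/
lemma ruleF_nonleaf (h : (ruleF C L E D).1 = 1) {w : V} (hw : w ∈ C)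
    (hni : (ruleF C L E D).2 ≠ some w) : ¬ L w := by
  classical
  by_cases hE : E
  · rw [ruleF, if_pos hE] at h hni
    split_ifs at h hni with h0 hD
    · rw [Finset.card_eq_zero] at h0; simp [h0] at hw
    · simp only at h hni
      obtain ⟨x, hx, hh⟩ := head?_toList_of_nonempty (Finset.card_pos.mp (Nat.pos_of_ne_zero h0))
      rw [Finset.card_eq_one] at h
      obtain ⟨a, rfl⟩ := h
      simp only [Finset.mem_singleton] at hx hw
      rw [hh, hx, hw] at hni
      exact absurd rfl hni
    · simp only [] at h
      omega
  · rw [ruleF, if_neg hE] at h hni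
    split_ifs at h hni with h1 hall
    · rw [Finset.card_eq_one] at h1
      obtain ⟨a, rfl⟩ := h1
      simp only [Finset.mem_singleton] at hw
      subst hw
      simpa using hall
    · simp only [] at h
      exact absurd h h1


section Graph

open SimpleGraph Walk

variable {V : Type*} {T : SimpleGraph V}

lemma adj_dist (hT : T.IsTree) (r : V) {u v : V} (h : T.Adj u v) :
    T.dist r v = T.dist r u + 1 ∨ T.dist r u = T.dist r v + 1 := by
  classical
  have conn := hT.isConnected
  have huv : T.dist u v = 1 := dist_eq_one_iff_adj.mpr h
  have hvu : T.dist v u = 1 := dist_eq_one_iff_adj.mpr h.symm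
  have t1 : T.dist r v ≤ T.dist r u + 1 := huv ▸ conn.dist_triangle
  have t2 : T.dist r u ≤ T.dist r v + 1 := hvu ▸ conn.dist_triangle
  have hne : T.dist r u ≠ T.dist r v := by
    intro heq
    obtain ⟨P, hP, hPl⟩ := conn.exists_path_of_dist r u
    have hv : v ∉ P.support := by
      intro hm
      have h1 := SimpleGraph.dist_le (P.takeUntil v hm)
      have h2 := P.length_takeUntil_le hm
      have h4 := congrArg Walk.length (P.take_spec hm)
      rw [Walk.length_append] at h4
      have h5 : (P.dropUntil v hm).length = 0 := by omega
      exact h.ne' (Walk.eq_of_length_eq_zero h5)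
    have hQ : (P.concat h).IsPath := by
      rw [← Walk.isPath_reverse_iff, Walk.reverse_concat, Walk.cons_isPath_iff]
      exact ⟨hP.reverse, by rwa [Walk.support_reverse, List.mem_reverse]⟩
    obtain ⟨R, hR, hRl⟩ := conn.exists_path_of_dist r v
    have hQR := (hT.existsUnique_path r v).unique hQ hR
    have hlen : (P.concat h).length = R.length := by rw [hQR]
    rw [Walk.length_concat] at hlen
    omega
  omega

lemma parent_exists (hT : T.IsTree) (r : V) {v : V} (hv : v ≠ r) :
    ∃ u, T.Adj u v ∧ T.dist r u + 1 = T.dist r v := by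
  have conn := hT.isConnected
  have hme : T.dist r v ≠ 0 := by
    intro h0
    exact hv ((conn.dist_eq_zero_iff).mp h0).symm
  obtain ⟨P, hP, hPl⟩ := conn.exists_path_of_dist r v
  cases hPr : P.reverse with
  | nil =>
    exfalso
    have : P.length = 0 := by
      have := congrArg Walk.length hPr
      rwa [Walk.length_reverse] at this
    omega
  | cons hadj q =>
    rename_i u
    refine ⟨u, hadj.symm, ?_⟩
    have hlq : q.length + 1 = T.dist r v := by
      have := congrArg Walk.length hPr
      rw [Walk.length_reverse] at this
      simpa [Nat.add_comm] using this.symm.trans (by rw [hPl])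
    have h1 : T.dist r u ≤ q.length := by
      have := SimpleGraph.dist_le q.reverse
      rwa [Walk.length_reverse] at this
    rcases adj_dist hT r hadj.symm with h | h <;> omega

lemma parent_unique (hT : T.IsTree) (r : V) {u₁ u₂ v : V} (h₁ : T.Adj u₁ v) (h₂ : T.Adj u₂ v)
    (hd₁ : T.dist r u₁ + 1 = T.dist r v) (hd₂ : T.dist r u₂ + 1 = T.dist r v) : u₁ = u₂ := by
  classical
  have conn := hT.isConnected
  obtain ⟨P₁, hP₁, hl₁⟩ := conn.exists_path_of_dist r u₁
  obtain ⟨P₂, hP₂, hl₂⟩ := conn.exists_path_of_dist r u₂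
  have hv₁ : v ∉ P₁.support := by
    intro hm
    have := SimpleGraph.dist_le (P₁.takeUntil v hm)
    have := P₁.length_takeUntil_le hm
    omega
  have hv₂ : v ∉ P₂.support := by
    intro hm
    have := SimpleGraph.dist_le (P₂.takeUntil v hm)
    have := P₂.length_takeUntil_le hm
    omega
  have hQ₁ : (P₁.concat h₁).IsPath := by
    rw [← Walk.isPath_reverse_iff, Walk.reverse_concat, Walk.cons_isPath_iff]
    exact ⟨hP₁.reverse, by rwa [Walk.support_reverse, List.mem_reverse]⟩
  have hQ₂ : (P₂.concat h₂).IsPath := by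
    rw [← Walk.isPath_reverse_iff, Walk.reverse_concat, Walk.cons_isPath_iff]
    exact ⟨hP₂.reverse, by rwa [Walk.support_reverse, List.mem_reverse]⟩
  have hQR := (hT.existsUnique_path r v).unique hQ₁ hQ₂
  obtain ⟨hv, -⟩ := Walk.concat_inj hQR
  exact hv


end Graph
open scoped Classical in
noncomputable def treeF {V : Type*} (dep : V → ℕ) (par : V → V) (chl : V → Finset V) (r : V)
    (hdec : ∀ v, v ≠ r → dep (par v) < dep v) (v : V) : ℕ × Option V :=
  if h : v = r then ruleF (chl v) (fun w => chl w = ∅) False 0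
  else
    ruleF (chl v) (fun w => chl w = ∅)
      ((treeF dep par chl r hdec (par v)).2 ≠ some v)
      ((treeF dep par chl r hdec (par v)).1)
termination_by dep v
decreasing_by exact hdec v h

variable {V : Type*} {dep : V → ℕ} {par : V → V} {chl : V → Finset V} {r : V}
  {hdec : ∀ v, v ≠ r → dep (par v) < dep v}

lemma treeF_root : treeF dep par chl r hdec r = ruleF (chl r) (fun w => chl w = ∅) False 0 := by
  rw [treeF]
  rw [dif_pos rfl]

lemma treeF_ne {v : V} (hv : v ≠ r) :
    treeF dep par chl r hdec v = ruleF (chl v) (fun w => chl w = ∅)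
      ((treeF dep par chl r hdec (par v)).2 ≠ some v)
      ((treeF dep par chl r hdec (par v)).1) := by
  conv_lhs => rw [treeF]
  rw [dif_neg hv]


end StmtTwoAux

end StmtTwoAuxSection

/-- The edge set of every finite tree can be partitioned into two matchings and a
locally irregular part. -/
theorem stmt_2 {V : Type*} [Fintype V] (T : SimpleGraph V) (hT : T.IsTree) :
    ∃ M₁ M₂ I : Set (Sym2 V),
      M₁ ∪ M₂ ∪ I = T.edgeSet ∧
      Disjoint M₁ M₂ ∧ Disjoint M₁ I ∧ Disjoint M₂ I ∧
      IsMatchingPart M₁ ∧ IsMatchingPart M₂ ∧ IsLocallyIrregularPart I := by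
  classical
  obtain ⟨r⟩ : Nonempty V := hT.isConnected.nonempty
  -- parent function
  obtain ⟨par, hpadj, hpdep⟩ : ∃ par : V → V, (∀ v, v ≠ r → T.Adj (par v) v) ∧
      (∀ v, v ≠ r → T.dist r (par v) + 1 = T.dist r v) := by
    have hex : ∀ v, v ≠ r → ∃ u, T.Adj u v ∧ T.dist r u + 1 = T.dist r v := fun v hv =>
      StmtTwoAux.parent_exists hT r hv
    refine ⟨fun v => if h : v = r then v else (hex v h).choose, fun v hv => ?_, fun v hv => ?_⟩
    · simp only [dif_neg hv]; exact (hex v hv).choose_spec.1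
    · simp only [dif_neg hv]; exact (hex v hv).choose_spec.2
  have hdist_r : T.dist r r = 0 := SimpleGraph.dist_self
  have hne_r : ∀ v, v ≠ r → 1 ≤ T.dist r v := by
    intro v hv
    have := hT.isConnected.pos_dist_of_ne (fun h => hv h.symm)
    omega
  have heq_r : ∀ v, T.dist r v = 0 → v = r := by
    intro v h0
    exact ((hT.isConnected.dist_eq_zero_iff).mp h0).symm
  -- uniqueness of parent
  have hpuniq : ∀ u v, T.Adj u v → T.dist r u + 1 = T.dist r v → u = par v := by
    intro u v h hd
    have hv : v ≠ r := by
      intro hvr; subst hvr; omega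
    exact StmtTwoAux.parent_unique hT r h (hpadj v hv) hd (hpdep v hv)
  -- children
  obtain ⟨chl, hchl0⟩ : ∃ chl : V → Finset V, ∀ v w,
      w ∈ chl v ↔ (T.Adj v w ∧ T.dist r w = T.dist r v + 1) :=
    ⟨fun v => Finset.univ.filter (fun w => T.Adj v w ∧ T.dist r w = T.dist r v + 1),
      fun v w => by simp⟩
  have hchl : ∀ v w, w ∈ chl v ↔ (w ≠ r ∧ par w = v) := by
    intro v w
    rw [hchl0]
    constructor
    · rintro ⟨ha, hd⟩
      have hw : w ≠ r := by
        intro hwr; subst hwr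
        have := hne_r v (by intro hvr; subst hvr; omega)
        omega
      exact ⟨hw, (hpuniq v w ha (by omega)).symm⟩
    · rintro ⟨hw, rfl⟩
      exact ⟨hpadj w hw, by have := hpdep w hw; omega⟩
  have hdec : ∀ v, v ≠ r → T.dist r (par v) < T.dist r v := by
    intro v hv; have := hpdep v hv; omega
  set f : V → ℕ × Option V := StmtTwoAux.treeF (T.dist r) par chl r hdec with hfdef
  have hfr : f r = StmtTwoAux.ruleF (chl r) (fun w => chl w = ∅) False 0 :=
    StmtTwoAux.treeF_root
  have hfv : ∀ v, v ≠ r → f v = StmtTwoAux.ruleF (chl v) (fun w => chl w = ∅)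
      ((f (par v)).2 ≠ some v) ((f (par v)).1) := fun v hv => StmtTwoAux.treeF_ne hv
  obtain ⟨eps, heps⟩ : ∃ eps : V → Prop, ∀ v, eps v ↔ (v ≠ r ∧ (f (par v)).2 ≠ some v) :=
    ⟨_, fun v => Iff.rfl⟩
  obtain ⟨I, hI⟩ : ∃ I : Set (Sym2 V), ∀ e, e ∈ I ↔ ∃ v, eps v ∧ e = s(par v, v) :=
    ⟨_, fun e => Iff.rfl⟩
  obtain ⟨M₁, hM₁⟩ : ∃ M : Set (Sym2 V), ∀ e, e ∈ M ↔
      ∃ v, (v ≠ r ∧ (f (par v)).2 = some v) ∧ Even (T.dist r v) ∧ e = s(par v, v) :=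
    ⟨_, fun e => Iff.rfl⟩
  obtain ⟨M₂, hM₂⟩ : ∃ M : Set (Sym2 V), ∀ e, e ∈ M ↔
      ∃ v, (v ≠ r ∧ (f (par v)).2 = some v) ∧ ¬ Even (T.dist r v) ∧ e = s(par v, v) :=
    ⟨_, fun e => Iff.rfl⟩
  -- injectivity of e ↦ deeper endpoint
  have hinj : ∀ v w, v ≠ r → w ≠ r → s(par v, v) = s(par w, w) → v = w := by
    intro v w hv hw h
    rw [Sym2.eq_iff] at h
    rcases h with ⟨h1, h2⟩ | ⟨h1, h2⟩
    · exact h2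
    · exfalso
      have d1 := hpdep v hv
      have d2 := hpdep w hw
      rw [h1] at d1
      rw [← h2] at d2
      omega
  -- every edge has the canonical form
  have hform : ∀ e ∈ T.edgeSet, ∃ v, v ≠ r ∧ e = s(par v, v) := by
    intro e he
    induction e with
    | h u w =>
      rw [SimpleGraph.mem_edgeSet] at he
      rcases StmtTwoAux.adj_dist hT r he with h | h
      · have hw : w ≠ r := by intro hwr; subst hwr; omega
        refine ⟨w, hw, ?_⟩
        rw [hpuniq u w he (by omega)]
      · have hu : u ≠ r := by intro hur; subst hur; omega
        refine ⟨u, hu, ?_⟩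
        rw [hpuniq w u he.symm (by omega), Sym2.eq_swap]
  have hedge : ∀ v, v ≠ r → s(par v, v) ∈ T.edgeSet := fun v hv =>
    T.mem_edgeSet.mpr (hpadj v hv)
  have hunion : M₁ ∪ M₂ ∪ I = T.edgeSet := by
    ext e
    simp only [Set.mem_union, hM₁ e, hM₂ e, hI e]
    constructor
    · rintro ((⟨v, ⟨hv, _⟩, _, rfl⟩ | ⟨v, ⟨hv, _⟩, _, rfl⟩) | ⟨v, hv, rfl⟩)
      · exact hedge v hv
      · exact hedge v hv
      · exact hedge v ((heps v).mp hv).1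
    · intro he
      obtain ⟨v, hv, rfl⟩ := hform _ he
      by_cases h2 : (f (par v)).2 = some v
      · by_cases hev : Even (T.dist r v)
        · exact Or.inl (Or.inl ⟨v, ⟨hv, h2⟩, hev, rfl⟩)
        · exact Or.inl (Or.inr ⟨v, ⟨hv, h2⟩, hev, rfl⟩)
      · exact Or.inr ⟨v, (heps v).mpr ⟨hv, h2⟩, rfl⟩
  have hd12 : Disjoint M₁ M₂ := by
    rw [Set.disjoint_left]
    rintro e he1 he2
    rw [hM₁] at he1
    rw [hM₂] at he2
    obtain ⟨v, ⟨hv, _⟩, hev, rfl⟩ := he1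
    obtain ⟨w, ⟨hw, _⟩, hew, hew'⟩ := he2
    rw [hinj v w hv hw hew'] at hev
    exact hew hev
  have hd1I : Disjoint M₁ I := by
    rw [Set.disjoint_left]
    rintro e he1 he2
    rw [hM₁] at he1
    rw [hI] at he2
    obtain ⟨v, ⟨hv, h2⟩, hev, rfl⟩ := he1
    obtain ⟨w, hw, hew'⟩ := he2
    obtain ⟨hw1, hw2⟩ := (heps w).mp hw
    rw [← hinj v w hv hw1 hew'] at hw2
    exact hw2 h2
  have hd2I : Disjoint M₂ I := by
    rw [Set.disjoint_left]
    rintro e he1 he2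
    rw [hM₂] at he1
    rw [hI] at he2
    obtain ⟨v, ⟨hv, h2⟩, hev, rfl⟩ := he1
    obtain ⟨w, hw, hew'⟩ := he2
    obtain ⟨hw1, hw2⟩ := (heps w).mp hw
    rw [← hinj v w hv hw1 hew'] at hw2
    exact hw2 h2
  have hmatch : ∀ (M : Set (Sym2 V)) (Q : ℕ → Prop),
      (∀ e, e ∈ M ↔ ∃ v, (v ≠ r ∧ (f (par v)).2 = some v) ∧ Q (T.dist r v) ∧ e = s(par v, v)) →
      (∀ n, Q n → ¬ Q (n + 1)) → IsMatchingPart M := by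
    intro M Q hM hQ e he e' he' hne x hx hx'
    rw [hM] at he he'
    obtain ⟨v, ⟨hv, h2⟩, hqv, rfl⟩ := he
    obtain ⟨w, ⟨hw, h2'⟩, hqw, rfl⟩ := he'
    have hvw : v ≠ w := fun h => hne (by rw [h])
    rw [Sym2.mem_iff] at hx hx'
    have dv := hpdep v hv
    have dw := hpdep w hw
    rcases hx with rfl | rfl
    · rcases hx' with h | h
      · rw [h] at h2
        rw [h2'] at h2
        exact hvw (Option.some_injective _ h2.symm)
      · rw [← h] at hqw
        rw [← dv] at hqv
        exact hQ _ hqw hqv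
    · rcases hx' with h | h
      · rw [← h] at dw
        rw [← dw] at hqw
        exact hQ _ hqv hqw
      · exact hvw h
  have hmatch1 : IsMatchingPart M₁ :=
    hmatch M₁ Even hM₁ (by intro n hn h1; rw [Nat.even_add_one] at h1; exact h1 hn)
  have hmatch2 : IsMatchingPart M₂ :=
    hmatch M₂ (fun n => ¬ Even n) hM₂
      (by intro n hn h1; rw [Nat.even_add_one] at h1; exact h1 hn)
  -- degree computation
  have hsnd_mem : ∀ v x, (f v).2 = some x → x ∈ chl v := by
    intro v x hx
    by_cases hv : v = r
    · subst hv; rw [hfr] at hx; exact StmtTwoAux.ruleF_snd_mem hx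
    · rw [hfv v hv] at hx; exact StmtTwoAux.ruleF_snd_mem hx
  have hIdeg : ∀ v, partDeg I v =
      ((chl v).filter (fun w => eps w)).card + (if eps v then 1 else 0) := by
    intro v
    have hset : {e ∈ I | v ∈ e} =
        (fun w => s(v, w)) '' (((chl v).filter (fun w => eps w)) : Set V) ∪
        (if eps v then {s(par v, v)} else ∅) := by
      ext e
      simp only [Set.mem_setOf_eq, Set.mem_union, Set.mem_image, Finset.coe_filter,
        Set.mem_sep_iff]
      constructor
      · rintro ⟨heI, hve⟩
        rw [hI] at heI
        obtain ⟨w, hw, rfl⟩ := heI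
        obtain ⟨hw1, hw2⟩ := (heps w).mp hw
        rw [Sym2.mem_iff] at hve
        rcases hve with h | h
        · left
          refine ⟨w, ⟨(hchl v w).mpr ⟨hw1, h.symm⟩, hw⟩, by rw [h]⟩
        · right
          subst h
          rw [if_pos hw]
          exact Set.mem_singleton _
      · rintro (⟨w, ⟨hmem, hepsw⟩, rfl⟩ | h)
        · obtain ⟨hwr, hwp⟩ := (hchl v w).mp hmem
          refine ⟨(hI _).mpr ⟨w, hepsw, by rw [hwp]⟩, Sym2.mem_iff.mpr (Or.inl rfl)⟩
        · split_ifs at h with hev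
          · rw [Set.mem_singleton_iff] at h
            subst h
            exact ⟨(hI _).mpr ⟨v, hev, rfl⟩, Sym2.mem_iff.mpr (Or.inr rfl)⟩
          · exact absurd h (Set.notMem_empty _)
    have hdisj : Disjoint ((fun w => s(v, w)) '' (((chl v).filter (fun w => eps w)) : Set V))
        (if eps v then ({s(par v, v)} : Set (Sym2 V)) else ∅) := by
      rw [Set.disjoint_left]
      rintro e ⟨w, hw, rfl⟩ h
      split_ifs at h with hev
      · rw [Set.mem_singleton_iff, Sym2.eq_iff] at h
        have hvr : v ≠ r := ((heps v).mp hev).1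
        have hd := hpdep v hvr
        rw [Finset.coe_filter, Set.mem_setOf_eq] at hw
        have hwd := ((hchl0 v w).mp hw.1).2
        rcases h with ⟨h1, h2⟩ | ⟨h1, h2⟩
        · rw [← h1] at hd; omega
        · rw [h2] at hwd; omega
      · exact absurd h (Set.notMem_empty _)
    rw [partDeg, hset, Set.ncard_union_eq hdisj (Set.toFinite _) (Set.toFinite _)]
    congr 1
    · rw [Set.ncard_image_of_injOn, Set.ncard_coe_finset]
      intro a _ b _ hab
      exact (Sym2.congr_right).mp hab
    · split_ifs
      · exact Set.ncard_singleton _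
      · exact Set.ncard_empty _
  have hcnt : ∀ v, ((chl v).filter (fun w => eps w)).card
      = (f v).2.elim (chl v).card (fun _ => (chl v).card - 1) := by
    intro v
    have hfilter : (chl v).filter (fun w => eps w)
        = (chl v).filter (fun w => (f v).2 ≠ some w) := by
      apply Finset.filter_congr
      intro w hw
      obtain ⟨hw1, hw2⟩ := (hchl v w).mp hw
      rw [heps w, hw2]
      simp [hw1]
    rw [hfilter]
    cases h2 : (f v).2 with
    | none =>
      simp only [Option.elim]
      rw [Finset.filter_true_of_mem]
      intro w hw
      simp
    | some x =>
      have hx := hsnd_mem v x h2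
      simp only [Option.elim]
      have herase : (chl v).filter (fun w => (some x : Option V) ≠ some w) = (chl v).erase x := by
        ext w
        rw [Finset.mem_filter, Finset.mem_erase]
        constructor
        · rintro ⟨h3, h4⟩
          exact ⟨fun h5 => h4 (by rw [h5]), h3⟩
        · rintro ⟨h3, h4⟩
          exact ⟨h4, fun h5 => h3 (Option.some_injective _ h5).symm⟩
      rw [herase, Finset.card_erase_of_mem hx]
  have hval : ∀ v, (f v).1
      = ((chl v).filter (fun w => eps w)).card + (if eps v then 1 else 0) := by
    intro v
    rw [hcnt v]
    by_cases hv : v = r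
    · subst hv
      rw [if_neg (by rw [heps]; simp)]
      rw [hfr, StmtTwoAux.ruleF_val_neg not_false]
      rw [add_zero]
    · by_cases hE : (f (par v)).2 ≠ some v
      · rw [if_pos ((heps v).mpr ⟨hv, hE⟩)]
        rw [hfv v hv]
        exact StmtTwoAux.ruleF_val_pos hE
      · rw [if_neg (fun hc => hE ((heps v).mp hc).2)]
        rw [hfv v hv, StmtTwoAux.ruleF_val_neg hE, add_zero]
  have hdeg_eq : ∀ v, partDeg I v = (f v).1 := by
    intro v
    rw [hIdeg v, hval v]
  have hnl : ∀ u w, w ∈ chl u → (f u).2 ≠ some w → (f u).1 = 1 → chl w ≠ ∅ := by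
    intro u w hw hni h1
    by_cases hu : u = r
    · subst hu
      rw [hfr] at hni h1
      exact StmtTwoAux.ruleF_nonleaf h1 hw hni
    · rw [hfv u hu] at hni h1
      exact StmtTwoAux.ruleF_nonleaf h1 hw hni
  have hkey : ∀ v, eps v → (f v).1 ≠ (f (par v)).1 := by
    intro v hv'
    obtain ⟨hv, hE⟩ := (heps v).mp hv'
    rw [hfv v hv]
    apply StmtTwoAux.ruleF_ne hE
    intro hempty h1
    exact (hnl (par v) v ((hchl (par v) v).mpr ⟨hv, rfl⟩) hE h1) hempty
  have hirr : IsLocallyIrregularPart I := by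
    intro a b hab
    rw [hI] at hab
    obtain ⟨v, hv', heq⟩ := hab
    have hne := hkey v hv'
    rw [Sym2.eq_iff] at heq
    rcases heq with ⟨h1, h2⟩ | ⟨h1, h2⟩
    · rw [hdeg_eq, hdeg_eq, h1, h2]
      exact Ne.symm hne
    · rw [hdeg_eq, hdeg_eq, h1, h2]
      exact hne
  exact ⟨M₁, M₂, I, hunion, hd12, hd1I, hd2I, hmatch1, hmatch2, hirr⟩
end

section
/- For every finite graph G with at least one edge, the edge set E(G) can be partitioned into at most Δ(G) parts each of which is locally regular, where Δ(G) denotes the maximum degree of G. (Equivalently, the regular chromatic index χ'_reg(G) is at most Δ(G).) -/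
open SimpleGraph

variable {V : Type*}

section helpers
variable [Fintype V]

lemma partDeg_mono {E F : Set (Sym2 V)} (h : E ⊆ F) (v : V) : partDeg E v ≤ partDeg F v :=
  Set.ncard_le_ncard (fun e he => ⟨h he.1, he.2⟩) (Set.toFinite _)

lemma one_le_partDeg {E : Set (Sym2 V)} {v : V} {e : Sym2 V} (he : e ∈ E) (hv : v ∈ e) :
    1 ≤ partDeg E v := by
  have h : 0 < partDeg E v := by
    rw [partDeg, Set.ncard_pos (Set.toFinite _)]
    exact ⟨e, he, hv⟩
  omega

lemma partDeg_eq_zero {E : Set (Sym2 V)} {v : V} (h : ∀ e ∈ E, v ∉ e) : partDeg E v = 0 := by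
  rw [partDeg]
  convert Set.ncard_empty (Sym2 V)
  ext e
  simp only [Set.mem_setOf_eq, Set.mem_empty_iff_false, iff_false, not_and]
  exact h e

lemma partDeg_diff {E F : Set (Sym2 V)} (h : F ⊆ E) (v : V) :
    partDeg (E \ F) v = partDeg E v - partDeg F v := by
  have hset : {e ∈ E \ F | v ∈ e} = {e ∈ E | v ∈ e} \ {e ∈ F | v ∈ e} := by
    ext e
    simp only [Set.mem_setOf_eq, Set.mem_diff]
    tauto
  have hsub : {e ∈ F | v ∈ e} ⊆ {e ∈ E | v ∈ e} := fun e he => ⟨h he.1, he.2⟩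
  rw [partDeg, hset, Set.ncard_diff hsub (Set.toFinite _)]
  rfl

lemma partDeg_insert_mem {E : Set (Sym2 V)} {e : Sym2 V} (he : e ∉ E) {v : V} (hv : v ∈ e) :
    partDeg (insert e E) v = 1 + partDeg E v := by
  have hset : {f ∈ insert e E | v ∈ f} = insert e {f ∈ E | v ∈ f} := by
    ext f
    constructor
    · rintro ⟨(rfl | hf), hvf⟩
      · exact Or.inl rfl
      · exact Or.inr ⟨hf, hvf⟩
    · rintro (rfl | ⟨hf, hvf⟩)
      · exact ⟨Or.inl rfl, hv⟩
      · exact ⟨Or.inr hf, hvf⟩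
  rw [partDeg, hset, Set.ncard_insert_of_notMem (fun h => he h.1) (Set.toFinite _)]
  rw [partDeg]
  omega

lemma partDeg_insert_not_mem {E : Set (Sym2 V)} {e : Sym2 V} {v : V} (hv : v ∉ e) :
    partDeg (insert e E) v = partDeg E v := by
  have hset : {f ∈ insert e E | v ∈ f} = {f ∈ E | v ∈ f} := by
    ext f
    constructor
    · rintro ⟨(rfl | hf), hvf⟩
      · exact absurd hvf hv
      · exact ⟨hf, hvf⟩
    · rintro ⟨hf, hvf⟩
      exact ⟨Or.inr hf, hvf⟩
  rw [partDeg, hset]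
  rfl

lemma partDeg_edgeSet_eq (G : SimpleGraph V) (v : V) :
    partDeg G.edgeSet v = {w | G.Adj v w}.ncard := by
  classical
  have h1 : partDeg G.edgeSet v = (G.incidenceSet v).ncard := rfl
  rw [h1, ← Nat.card_coe_set_eq, ← Nat.card_coe_set_eq]
  exact Nat.card_congr (G.incidenceSetEquivNeighborSet v)


/-- Key covering lemma: from an injective choice of neighbors on `A`, build a locally
regular edge set covering `A` and touching only `A ∪ σ '' A`. -/
lemma exists_cover (G : SimpleGraph V) :
    ∀ (n : ℕ) (A : Finset V) (σ : V → V), A.card ≤ n → Set.InjOn σ ↑A →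
      (∀ a ∈ A, G.Adj a (σ a)) →
      ∃ F : Set (Sym2 V), F ⊆ G.edgeSet ∧ IsLocallyRegularPart F ∧
        (∀ a ∈ A, 1 ≤ partDeg F a) ∧
        (∀ e ∈ F, ∀ v, v ∈ e → v ∈ A ∨ ∃ a ∈ A, σ a = v) := by
  classical
  intro n
  induction n with
  | zero =>
    intro A σ hcard _ _
    have hA : A = ∅ := Finset.card_eq_zero.mp (Nat.le_zero.mp hcard)
    subst hA
    refine ⟨∅, by simp, ?_, by simp, by simp⟩
    intro u v h
    exact absurd h (Set.notMem_empty _)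
  | succ n ih =>
    intro A σ hcard hinj hadj
    by_cases hstart : ∃ a₀ ∈ A, a₀ ∉ A.image σ
    · -- path-start case: peel one edge
      obtain ⟨a₀, ha₀, ha₀img⟩ := hstart
      set b := σ a₀ with hb
      set A' : Finset V := (A.erase a₀).erase b with hA'
      have hA'sub : A' ⊆ A := (Finset.erase_subset _ _).trans (Finset.erase_subset _ _)
      have hA'card : A'.card ≤ n := by
        have h1 : (A.erase a₀).card = A.card - 1 := Finset.card_erase_of_mem ha₀
        have h2 : A'.card ≤ (A.erase a₀).card := Finset.card_erase_le
        have h3 : 1 ≤ A.card := Finset.card_pos.mpr ⟨a₀, ha₀⟩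
        omega
      obtain ⟨F', hF'sub, hF'reg, hF'cov, hF'touch⟩ :=
        ih A' σ hA'card (hinj.mono (by exact_mod_cast hA'sub)) (fun a ha => hadj a (hA'sub ha))
      have ha₀A' : a₀ ∉ A' := by simp [hA']
      have hbA' : b ∉ A' := Finset.notMem_erase _ _
      -- a₀ and b are untouched by F'
      have h1 : ∀ e ∈ F', a₀ ∉ e := by
        intro e he hmem
        rcases hF'touch e he a₀ hmem with h | ⟨a, ha, hav⟩
        · exact ha₀A' h
        · exact ha₀img (Finset.mem_image.mpr ⟨a, hA'sub ha, hav⟩)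
      have h2 : ∀ e ∈ F', b ∉ e := by
        intro e he hmem
        rcases hF'touch e he b hmem with h | ⟨a, ha, hav⟩
        · exact hbA' h
        · exact (Finset.mem_erase.mp (Finset.mem_erase.mp ha).2).1 (hinj (hA'sub ha) ha₀ hav)
      have hne : a₀ ≠ b := (hadj a₀ ha₀).ne
      have henew : s(a₀, b) ∉ F' := fun h => h1 _ h (Sym2.mem_mk_left _ _)
      refine ⟨insert s(a₀, b) F', ?_, ?_, ?_, ?_⟩
      · exact Set.insert_subset ((G.mem_edgeSet).mpr (hadj a₀ ha₀)) hF'sub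
      · -- locally regular
        intro x y hxy
        rcases Set.mem_insert_iff.mp hxy with heq | hmem
        · -- the new edge itself
          have hx : x ∈ s(a₀, b) := heq ▸ Sym2.mem_mk_left x y
          have hy : y ∈ s(a₀, b) := heq ▸ Sym2.mem_mk_right x y
          have hdx : partDeg F' x = 0 := by
            apply partDeg_eq_zero
            intro e he hmm
            rcases Sym2.mem_iff.mp hx with rfl | rfl
            · exact h1 e he hmm
            · exact h2 e he hmm
          have hdy : partDeg F' y = 0 := by
            apply partDeg_eq_zero
            intro e he hmm
            rcases Sym2.mem_iff.mp hy with rfl | rfl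
            · exact h1 e he hmm
            · exact h2 e he hmm
          rw [partDeg_insert_mem henew hx, partDeg_insert_mem henew hy, hdx, hdy]
        · -- an old edge: its endpoints avoid the new edge
          have hx : x ∉ s(a₀, b) := by
            intro hx
            rcases Sym2.mem_iff.mp hx with rfl | rfl
            · exact h1 _ hmem (Sym2.mem_mk_left _ _)
            · exact h2 _ hmem (Sym2.mem_mk_left _ _)
          have hy : y ∉ s(a₀, b) := by
            intro hy
            rcases Sym2.mem_iff.mp hy with rfl | rfl
            · exact h1 _ hmem (Sym2.mem_mk_right _ _)
            · exact h2 _ hmem (Sym2.mem_mk_right _ _)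
          rw [partDeg_insert_not_mem hx, partDeg_insert_not_mem hy]
          exact hF'reg x y hmem
      · -- covers A
        intro a ha
        by_cases haA' : a ∈ A'
        · exact (hF'cov a haA').trans (partDeg_mono (Set.subset_insert _ _) a)
        · have hab : a = a₀ ∨ a = b := by
            by_contra hcon
            push_neg at hcon
            exact haA' (Finset.mem_erase.mpr ⟨hcon.2, Finset.mem_erase.mpr ⟨hcon.1, ha⟩⟩)
          have hmem : a ∈ s(a₀, b) := by
            rcases hab with rfl | rfl
            · exact Sym2.mem_mk_left _ _
            · exact Sym2.mem_mk_right _ _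
          exact one_le_partDeg (Set.mem_insert _ _) hmem
      · -- touched vertices
        intro e he v hv
        rcases Set.mem_insert_iff.mp he with rfl | hmem
        · rcases Sym2.mem_iff.mp hv with rfl | rfl
          · exact Or.inl ha₀
          · exact Or.inr ⟨a₀, ha₀, rfl⟩
        · rcases hF'touch e hmem v hv with h | ⟨a, ha, hav⟩
          · exact Or.inl (hA'sub h)
          · exact Or.inr ⟨a, hA'sub ha, hav⟩
    · -- permutation case: σ maps A onto A; take all edges s(a, σ a)
      push_neg at hstart
      have himg : A = A.image σ :=
        Finset.eq_of_subset_of_card_le (fun a ha => hstart a ha)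
          (le_of_eq (Finset.card_image_of_injOn hinj))
      have hmem : ∀ a ∈ A, σ a ∈ A := by
        intro a ha
        rw [himg]
        exact Finset.mem_image_of_mem σ ha
      have hsurj : ∀ u ∈ A, ∃ a ∈ A, σ a = u := by
        intro u hu
        rw [himg] at hu
        exact Finset.mem_image.mp hu
      have hne : ∀ a ∈ A, σ a ≠ a := fun a ha => (hadj a ha).ne'
      set F : Set (Sym2 V) := (fun a => s(a, σ a)) '' ↑A with hF
      have hdeg : ∀ u ∈ A, partDeg F u = if σ (σ u) = u then 1 else 2 := by
        intro u hu
        obtain ⟨c, hc, hcu⟩ := hsurj u hu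
        have hset : {e ∈ F | u ∈ e} = {s(u, σ u), s(c, σ c)} := by
          ext e
          constructor
          · rintro ⟨⟨a, ha, rfl⟩, hue⟩
            rcases Sym2.mem_iff.mp hue with rfl | rfl
            · exact Or.inl rfl
            · have : a = c := hinj ha hc (by rw [hcu])
              subst this
              exact Or.inr rfl
          · rintro (rfl | rfl)
            · exact ⟨⟨u, hu, rfl⟩, Sym2.mem_mk_left _ _⟩
            · exact ⟨⟨c, hc, rfl⟩, by rw [hcu]; exact Sym2.mem_mk_right _ _⟩
        rw [partDeg, hset]
        by_cases hcase : σ (σ u) = u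
        · have hcσu : c = σ u := hinj hc (hmem u hu) (by rw [hcu, hcase])
          rw [if_pos hcase]
          subst hcσu
          rw [hcu]
          rw [Sym2.eq_swap, Set.pair_eq_singleton]
          exact Set.ncard_singleton _
        · rw [if_neg hcase]
          apply Set.ncard_pair
          intro hcon
          rw [Sym2.eq_iff] at hcon
          rcases hcon with ⟨h1, h2⟩ | ⟨h1, h2⟩
          · exact hne u hu (by rw [h2]; exact hcu)
          · exact hcase (by rw [h2]; exact hcu)
      have hstep : ∀ a ∈ A, partDeg F a = partDeg F (σ a) := by
        intro a ha
        rw [hdeg a ha, hdeg (σ a) (hmem a ha)]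
        by_cases hcase : σ (σ a) = a
        · rw [if_pos hcase, if_pos (by rw [hcase])]
        · rw [if_neg hcase, if_neg (fun h => hcase (hinj (hmem _ (hmem a ha)) ha h))]
      refine ⟨F, ?_, ?_, ?_, ?_⟩
      · rintro e ⟨a, ha, rfl⟩
        exact (G.mem_edgeSet).mpr (hadj a ha)
      · intro x y hxy
        obtain ⟨a, ha, heq⟩ := hxy
        rw [Sym2.eq_iff] at heq
        rcases heq with ⟨h1, h2⟩ | ⟨h1, h2⟩
        · rw [← h1, ← h2]
          exact hstep a ha
        · rw [← h1, ← h2]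
          exact (hstep a ha).symm
      · intro a ha
        rw [hdeg a ha]
        split <;> omega
      · rintro e ⟨a, ha, rfl⟩ v hv
        rcases Sym2.mem_iff.mp hv with rfl | rfl
        · exact Or.inl ha
        · exact Or.inr ⟨a, ha, rfl⟩

/-- Hall's theorem gives an injective choice of neighbors on the set of max-degree vertices. -/
lemma exists_sdr (G : SimpleGraph V) (D : ℕ) (hpos : 0 < D)
    (hmax : ∀ v, partDeg G.edgeSet v ≤ D) (A : Finset V)
    (hA : ∀ a ∈ A, partDeg G.edgeSet a = D) :
    ∃ σ : V → V, Set.InjOn σ ↑A ∧ ∀ a ∈ A, G.Adj a (σ a) := by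
  classical
  set nbr : V → Finset V := fun v => (Set.toFinite {w | G.Adj v w}).toFinset with hnbr
  have hmemnbr : ∀ v w, w ∈ nbr v ↔ G.Adj v w := by
    intro v w
    simp [hnbr, Set.Finite.mem_toFinset]
  have hcardnbr : ∀ v, (nbr v).card = partDeg G.edgeSet v := by
    intro v
    rw [partDeg_edgeSet_eq, Set.ncard_eq_toFinset_card _ (Set.toFinite _)]
  have hall : ∀ s : Finset ↥A, s.card ≤ (s.biUnion fun a => nbr ↑a).card := by
    intro s
    set U := s.biUnion fun a => nbr (↑a : V) with hU
    have hsubU : ∀ a ∈ s, nbr (↑a : V) ⊆ U := by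
      intro a ha w hw
      exact Finset.mem_biUnion.mpr ⟨a, ha, hw⟩
    have hstep1 : ∀ a ∈ s, nbr (↑a : V) = U.filter (fun w => G.Adj ↑a w) := by
      intro a ha
      ext w
      simp only [Finset.mem_filter, hmemnbr]
      exact ⟨fun h => ⟨hsubU a ha ((hmemnbr _ w).mpr h), h⟩, fun h => h.2⟩
    have hkey : D * s.card ≤ D * U.card := by
      calc D * s.card = ∑ _a ∈ s, D := by rw [Finset.sum_const, smul_eq_mul, mul_comm]
        _ = ∑ a ∈ s, (nbr (↑a : V)).card := by
            refine Finset.sum_congr rfl fun a ha => ?_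
            rw [hcardnbr, hA ↑a a.2]
        _ = ∑ a ∈ s, (U.filter (fun w => G.Adj ↑a w)).card := by
            exact Finset.sum_congr rfl fun a ha => by rw [hstep1 a ha]
        _ = ∑ a ∈ s, ∑ w ∈ U, if G.Adj ↑a w then 1 else 0 := by
            exact Finset.sum_congr rfl fun a _ => Finset.card_filter _ _
        _ = ∑ w ∈ U, ∑ a ∈ s, if G.Adj ↑a w then 1 else 0 := Finset.sum_comm
        _ = ∑ w ∈ U, (s.filter (fun a : ↥A => G.Adj ↑a w)).card := by
            exact Finset.sum_congr rfl fun w _ => (Finset.card_filter _ _).symm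
        _ ≤ ∑ _w ∈ U, D := by
            refine Finset.sum_le_sum fun w _ => ?_
            have hinj : (s.filter (fun a : ↥A => G.Adj ↑a w)).card ≤ (nbr w).card := by
              refine Finset.card_le_card_of_injOn (fun a : ↥A => (a : V)) ?_ ?_
              · intro a ha
                rw [Finset.mem_coe, hmemnbr]
                exact ((Finset.mem_filter.mp (Finset.mem_coe.mp ha)).2).symm
              · exact fun a _ b _ h => Subtype.ext h
            calc (s.filter (fun a : ↥A => G.Adj ↑a w)).card ≤ (nbr w).card := hinj
              _ = partDeg G.edgeSet w := hcardnbr w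
              _ ≤ D := hmax w
        _ = D * U.card := by rw [Finset.sum_const, smul_eq_mul, mul_comm]
    exact Nat.le_of_mul_le_mul_left hkey hpos
  obtain ⟨f, hfinj, hf⟩ := (Finset.all_card_le_biUnion_card_iff_exists_injective
    (fun a : ↥A => nbr ↑a)).mp hall
  refine ⟨fun v => if h : v ∈ A then f ⟨v, h⟩ else v, ?_, ?_⟩
  · intro a ha b hb hab
    have ha' : a ∈ A := ha
    have hb' : b ∈ A := hb
    simp only [dif_pos ha', dif_pos hb'] at hab
    exact congrArg Subtype.val (hfinj hab)
  · intro a ha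
    simp only [dif_pos ha]
    exact (hmemnbr a _).mp (hf ⟨a, ha⟩)

/-- Main induction: a graph with all degrees at most `D` decomposes into `D` locally
regular (possibly empty) parts. -/
lemma main_induction :
    ∀ (D : ℕ) (G : SimpleGraph V), (∀ v, partDeg G.edgeSet v ≤ D) →
      ∃ P : Fin D → Set (Sym2 V),
        (⋃ i, P i) = G.edgeSet ∧
        (∀ i j, i ≠ j → Disjoint (P i) (P j)) ∧
        ∀ i, IsLocallyRegularPart (P i) := by
  classical
  intro D
  induction D with
  | zero =>
    intro G hmax
    have hempty : G.edgeSet = ∅ := by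
      rw [Set.eq_empty_iff_forall_notMem]
      intro e
      induction e using Sym2.ind with
      | _ u v =>
        intro he
        have := one_le_partDeg he (Sym2.mem_mk_left u v)
        have := hmax u
        omega
    refine ⟨fun i => i.elim0, ?_, fun i => i.elim0, fun i => i.elim0⟩
    rw [hempty]
    exact Set.iUnion_of_empty _
  | succ D ih =>
    intro G hmax
    set A : Finset V := Finset.univ.filter (fun v => partDeg G.edgeSet v = D + 1) with hAdef
    have hAmem : ∀ a ∈ A, partDeg G.edgeSet a = D + 1 := by
      intro a ha
      exact (Finset.mem_filter.mp ha).2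
    obtain ⟨σ, hσinj, hσadj⟩ := exists_sdr G (D + 1) (Nat.succ_pos D) hmax A hAmem
    obtain ⟨F, hFsub, hFreg, hFcov, _⟩ :=
      exists_cover G A.card A σ le_rfl hσinj hσadj
    set G' := G.deleteEdges F with hG'
    have hG'edge : G'.edgeSet = G.edgeSet \ F := G.edgeSet_deleteEdges F
    have hmax' : ∀ v, partDeg G'.edgeSet v ≤ D := by
      intro v
      rw [hG'edge, partDeg_diff hFsub]
      by_cases hv : partDeg G.edgeSet v = D + 1
      · have hvA : v ∈ A := Finset.mem_filter.mpr ⟨Finset.mem_univ v, hv⟩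
        have := hFcov v hvA
        omega
      · have := hmax v
        omega
    obtain ⟨P', hU', hdis', hreg'⟩ := ih G' hmax'
    have hP'sub : ∀ j, P' j ⊆ G.edgeSet \ F := by
      intro j
      rw [← hG'edge, ← hU']
      exact Set.subset_iUnion P' j
    have hdisjF : ∀ k, Disjoint F (P' k) :=
      fun k => Set.disjoint_left.mpr fun e heF heP => ((hP'sub k heP).2 heF)
    refine ⟨Fin.cases F P', ?_, ?_, ?_⟩
    · ext e
      simp only [Set.mem_iUnion]
      constructor
      · rintro ⟨i, hi⟩
        revert hi
        refine Fin.cases ?_ ?_ i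
        · intro hi
          rw [Fin.cases_zero] at hi
          exact hFsub hi
        · intro j hi
          rw [Fin.cases_succ] at hi
          exact (hP'sub j hi).1
      · intro he
        by_cases hF : e ∈ F
        · exact ⟨0, by rw [Fin.cases_zero]; exact hF⟩
        · have : e ∈ G'.edgeSet := by rw [hG'edge]; exact ⟨he, hF⟩
          rw [← hU'] at this
          obtain ⟨j, hj⟩ := Set.mem_iUnion.mp this
          exact ⟨j.succ, by rw [Fin.cases_succ]; exact hj⟩
    · intro i j
      refine Fin.cases ?_ ?_ i <;> [skip; intro a] <;> refine Fin.cases ?_ ?_ j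
      · intro h
        exact absurd rfl h
      · intro k _
        simp only [Fin.cases_zero, Fin.cases_succ]
        exact hdisjF k
      · intro _
        simp only [Fin.cases_zero, Fin.cases_succ]
        exact (hdisjF a).symm
      · intro k h
        simp only [Fin.cases_succ]
        exact hdis' a k (fun hak => h (by rw [hak]))
    · intro i
      refine Fin.cases ?_ ?_ i
      · simp only [Fin.cases_zero]
        exact hFreg
      · intro j
        simp only [Fin.cases_succ]
        exact hreg' j

/-- every finite graph with at least one edge admits a partition of its edge set
into at most Δ(G) locally regular parts. -/
theorem stmt_3 {V : Type*} [Fintype V] (G : SimpleGraph V) (hE : G.edgeSet.Nonempty) :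
    ∃ (t : ℕ) (P : Fin t → Set (Sym2 V)),
      t ≤ maxDeg G ∧
      (⋃ i, P i) = G.edgeSet ∧
      (∀ i j, i ≠ j → Disjoint (P i) (P j)) ∧
      ∀ i, IsLocallyRegularPart (P i) := by
  classical
  obtain ⟨P, hU, hdis, hreg⟩ :=
    main_induction (maxDeg G) G (fun v => Finset.le_sup (Finset.mem_univ v))
  exact ⟨maxDeg G, P, le_rfl, hU, hdis, hreg⟩
end helpers
end

section
/- If the edge set of a finite graph G can be partitioned into r parts each of which is a regular part, then the number of distinct values occurring among the vertex degrees of G is at most 2^r. Consequently, any graph whose vertices realize more than 2^r distinct degrees has regular number greater than r. -/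
open SimpleGraph

variable {V : Type*}

/-- if the edge set of a finite graph can be partitioned into r regular parts,
then at most 2^r distinct values occur among the vertex degrees. -/
theorem stmt_6 {V : Type*} [Fintype V] (G : SimpleGraph V) (r : ℕ)
    (P : Fin r → Set (Sym2 V))
    (hcover : (⋃ i, P i) = G.edgeSet)
    (hdisj : ∀ i j, i ≠ j → Disjoint (P i) (P j))
    (hreg : ∀ i, IsRegularPart (P i)) :
    (Finset.univ.image fun v : V => partDeg G.edgeSet v).card ≤ 2 ^ r := by
  simp only [IsRegularPart] at hreg
  classical
  choose ρ hρ1 hρ2 using hreg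
  have hfin : ∀ (E : Set (Sym2 V)) (v : V), {e ∈ E | v ∈ e}.Finite := by
    intro E v
    exact Set.toFinite _
  have hsum : ∀ v : V, partDeg G.edgeSet v = ∑ i, partDeg (P i) v := by
    intro v
    unfold partDeg
    rw [← hcover]
    have hset : {e ∈ ⋃ i, P i | v ∈ e} = ⋃ i, {e ∈ P i | v ∈ e} := by
      ext e
      simp only [Set.mem_setOf_eq, Set.mem_iUnion]
      tauto
    rw [hset]
    rw [Set.ncard_eq_toFinset_card _ (Set.toFinite _)]
    have htf : (Set.toFinite (⋃ i, {e ∈ P i | v ∈ e})).toFinset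
        = Finset.univ.biUnion (fun i => (hfin (P i) v).toFinset) := by
      ext e
      simp only [Set.Finite.mem_toFinset, Set.mem_iUnion, Finset.mem_biUnion,
        Finset.mem_univ, true_and]
    rw [htf, Finset.card_biUnion]
    · exact Finset.sum_congr rfl fun i _ => by
        rw [Set.ncard_eq_toFinset_card _ (hfin (P i) v)]
    · intro i _ j _ hij
      have := hdisj i j hij
      simp only [Finset.disjoint_left, Set.Finite.mem_toFinset, Set.mem_setOf_eq]
      intro e he hf
      exact this.ne_of_mem he.1 hf.1 rfl
  have hval : ∀ v : V, ∀ i : Fin r, partDeg (P i) v = 0 ∨ partDeg (P i) v = ρ i := by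
    intro v i
    by_cases h : ∃ e ∈ P i, v ∈ e
    · exact Or.inr (hρ2 i v h)
    · left
      unfold partDeg
      have he : {e ∈ P i | v ∈ e} = ∅ := by
        ext e
        simp only [Set.mem_setOf_eq, Set.mem_empty_iff_false, iff_false]
        intro he
        exact h ⟨e, he.1, he.2⟩
      rw [he, Set.ncard_empty]
  have hsub : (Finset.univ.image fun v : V => partDeg G.edgeSet v)
      ⊆ Finset.univ.image (fun s : Finset (Fin r) => ∑ i ∈ s, ρ i) := by
    intro d hd
    simp only [Finset.mem_image, Finset.mem_univ, true_and] at hd ⊢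
    obtain ⟨v, rfl⟩ := hd
    refine ⟨Finset.univ.filter (fun i => partDeg (P i) v ≠ 0), ?_⟩
    rw [hsum v]
    rw [Finset.sum_filter]
    refine Finset.sum_congr rfl fun i _ => ?_
    rcases hval v i with h | h
    · simp [h]
    · rw [h]
      by_cases h0 : ρ i = 0
      · simp [h0]
      · simp [h, h0]
  calc (Finset.univ.image fun v : V => partDeg G.edgeSet v).card
      ≤ (Finset.univ.image (fun s : Finset (Fin r) => ∑ i ∈ s, ρ i)).card :=
        Finset.card_le_card hsub
    _ ≤ (Finset.univ : Finset (Finset (Fin r))).card := Finset.card_image_le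
    _ = 2 ^ r := by simp
end

section
/- For every natural number n there exists a finite graph G whose edge set can be partitioned into two parts each of which is locally regular, while every partition of E(G) into regular parts requires at least n parts; that is, the difference between the regular number and the regular chromatic index of a graph can be arbitrarily large. -/
open SimpleGraph

variable {V : Type*}

namespace Stmt7Aux

lemma partDeg_eq_ncard {V : Type*} (E : Set (Sym2 V)) (v : V) :
    partDeg E v = {u | s(v, u) ∈ E}.ncard := by
  rw [partDeg]
  have himg : {e ∈ E | v ∈ e} = (fun u => s(v, u)) '' {u | s(v, u) ∈ E} := by
    ext e
    simp only [Set.mem_setOf_eq, Set.mem_image]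
    constructor
    · rintro ⟨he, hv⟩
      obtain ⟨u, rfl⟩ := Sym2.mem_iff_exists.mp hv
      exact ⟨u, he, rfl⟩
    · rintro ⟨u, hu, rfl⟩
      exact ⟨hu, Sym2.mem_mk_left v u⟩
  rw [himg, Set.ncard_image_of_injOn]
  intro a _ b _ hab
  rcases Sym2.eq_iff.mp hab with ⟨_, h⟩ | ⟨h1, h2⟩
  · exact h
  · exact h2.trans h1

lemma partDeg_mono {V : Type*} [Fintype V] {E F : Set (Sym2 V)} (h : E ⊆ F) (v : V) :
    partDeg E v ≤ partDeg F v :=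
  Set.ncard_le_ncard (fun e he => ⟨h he.1, he.2⟩) (Set.toFinite _)

lemma partDeg_eq_zero {V : Type*} {E : Set (Sym2 V)} {v : V}
    (h : ¬ ∃ e ∈ E, v ∈ e) : partDeg E v = 0 := by
  rw [partDeg]
  have hempty : {e ∈ E | v ∈ e} = ∅ := by
    ext e
    simp only [Set.mem_setOf_eq, Set.mem_empty_iff_false, iff_false]
    rintro ⟨h1, h2⟩
    exact h ⟨e, h1, h2⟩
  simp [hempty]

lemma partDeg_sum {V : Type*} [Fintype V] {t : ℕ} (P : Fin t → Set (Sym2 V))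
    (hd : ∀ i j, i ≠ j → Disjoint (P i) (P j)) (v : V) :
    partDeg (⋃ i, P i) v = ∑ i, partDeg (P i) v := by
  classical
  have hfin : ∀ i : Fin t, {e ∈ P i | v ∈ e}.Finite := fun i => Set.toFinite _
  have hU : {e ∈ ⋃ i, P i | v ∈ e}.Finite := Set.toFinite _
  have key : hU.toFinset = Finset.univ.biUnion fun i => (hfin i).toFinset := by
    ext e
    simp only [Set.Finite.mem_toFinset, Set.mem_setOf_eq, Finset.mem_biUnion,
      Finset.mem_univ, true_and, Set.mem_iUnion]
    tauto
  rw [partDeg, Set.ncard_eq_toFinset_card _ hU, key, Finset.card_biUnion]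
  · apply Finset.sum_congr rfl
    intro i _
    rw [partDeg, Set.ncard_eq_toFinset_card _ (hfin i)]
  · intro i _ j _ hij
    rw [Function.onFun, Finset.disjoint_left]
    intro e hei hej
    rw [Set.Finite.mem_toFinset] at hei hej
    exact Set.disjoint_left.mp (hd i j hij) hei.1 hej.1

lemma ncard_le_seg {M c : ℕ} (h : c < M) : {j : Fin M | j.val ≤ c}.ncard = c + 1 := by
  have himg : {j : Fin M | j.val ≤ c} = (Fin.castLE h) '' Set.univ := by
    ext j
    simp only [Set.mem_setOf_eq, Set.image_univ, Set.mem_range]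
    constructor
    · intro hj
      exact ⟨⟨j.val, by omega⟩, by apply Fin.ext; simp⟩
    · rintro ⟨a, rfl⟩
      have := a.isLt
      simp only [Fin.coe_castLE]
      omega
  rw [himg, Set.ncard_image_of_injective _ (Fin.castLE_injective h), Set.ncard_univ,
    Nat.card_eq_fintype_card, Fintype.card_fin]

lemma ncard_ge_seg {c : ℕ} : {j : Fin (2 * c + 1) | c ≤ j.val}.ncard = c + 1 := by
  have hf : Function.Injective
      (fun a : Fin (c + 1) => (⟨c + a.val, by have := a.isLt; omega⟩ : Fin (2 * c + 1))) := by
    intro a b hab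
    apply Fin.ext
    have := congrArg Fin.val hab
    simp only at this
    omega
  have himg : {j : Fin (2 * c + 1) | c ≤ j.val} =
      (fun a : Fin (c + 1) => (⟨c + a.val, by have := a.isLt; omega⟩ : Fin (2 * c + 1))) ''
        Set.univ := by
    ext j
    simp only [Set.image_univ, Set.mem_range, Set.mem_setOf_eq]
    constructor
    · intro hj
      refine ⟨⟨j.val - c, by have := j.isLt; omega⟩, ?_⟩
      apply Fin.ext
      simp only
      omega
    · rintro ⟨a, rfl⟩
      simp
  rw [himg, Set.ncard_image_of_injective _ hf, Set.ncard_univ,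
    Nat.card_eq_fintype_card, Fintype.card_fin]

lemma ncard_seg_le_erase {M c : ℕ} (h : c < M) (x : Fin M) (hx : x.val ≤ c) :
    {j : Fin M | j.val ≤ c ∧ j ≠ x}.ncard = c := by
  have hset : {j : Fin M | j.val ≤ c ∧ j ≠ x} = {j : Fin M | j.val ≤ c} \ {x} := by
    ext j
    simp only [Set.mem_setOf_eq, Set.mem_diff, Set.mem_singleton_iff]
  rw [hset, Set.ncard_diff_singleton_of_mem (by simpa using hx),
    ncard_le_seg h]
  omega

lemma ncard_seg_ge_erase {c : ℕ} (x : Fin (2 * c + 1)) (hx : c ≤ x.val) :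
    {j : Fin (2 * c + 1) | c ≤ j.val ∧ j ≠ x}.ncard = c := by
  have hset : {j : Fin (2 * c + 1) | c ≤ j.val ∧ j ≠ x} =
      {j : Fin (2 * c + 1) | c ≤ j.val} \ {x} := by
    ext j
    simp only [Set.mem_setOf_eq, Set.mem_diff, Set.mem_singleton_iff]
  rw [hset, Set.ncard_diff_singleton_of_mem (by simpa using hx),
    ncard_ge_seg]
  omega

lemma ncard_ne {M : ℕ} (x : Fin M) : {j : Fin M | j ≠ x}.ncard = M - 1 := by
  have hset : {j : Fin M | j ≠ x} = (Set.univ : Set (Fin M)) \ {x} := by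
    ext j
    simp
  rw [hset, Set.ncard_diff_singleton_of_mem (Set.mem_univ x),
    Set.ncard_univ, Nat.card_eq_fintype_card, Fintype.card_fin]

/-! ### the construction: `n` disjoint components, component `k` is two cliques
`K_{n^(k+1)+1}` glued at a center vertex. -/

/-- vertex type -/
abbrev W (n : ℕ) := Σ k : Fin n, Fin (2 * n ^ (k.val + 1) + 1)

def GW (n : ℕ) : SimpleGraph (W n) where
  Adj a b := a.1 = b.1 ∧ a ≠ b ∧
    ((a.2.val ≤ n ^ (a.1.val + 1) ∧ b.2.val ≤ n ^ (b.1.val + 1)) ∨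
     (n ^ (a.1.val + 1) ≤ a.2.val ∧ n ^ (b.1.val + 1) ≤ b.2.val))
  symm := by
    constructor
    rintro a b ⟨h1, h2, h3⟩
    exact ⟨h1.symm, h2.symm, h3.imp (fun h => ⟨h.2, h.1⟩) (fun h => ⟨h.2, h.1⟩)⟩
  loopless := by
    constructor
    rintro a ⟨_, h, _⟩
    exact h rfl

lemma GW_adj_iff {n : ℕ} {a b : W n} :
    (GW n).Adj a b ↔ a.1 = b.1 ∧ a ≠ b ∧
      ((a.2.val ≤ n ^ (a.1.val + 1) ∧ b.2.val ≤ n ^ (b.1.val + 1)) ∨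
       (n ^ (a.1.val + 1) ≤ a.2.val ∧ n ^ (b.1.val + 1) ≤ b.2.val)) := Iff.rfl

lemma mk_ne_mk {n : ℕ} {k : Fin n} {x j : Fin (2 * n ^ (k.val + 1) + 1)} (h : j ≠ x) :
    (⟨k, x⟩ : W n) ≠ ⟨k, j⟩ :=
  fun he => h (sigma_mk_injective he).symm

def Epart1 (n : ℕ) : Set (Sym2 (W n)) :=
  {e | e ∈ (GW n).edgeSet ∧ ∀ v ∈ e, v.2.val ≤ n ^ (v.1.val + 1)}

def Epart2 (n : ℕ) : Set (Sym2 (W n)) := (GW n).edgeSet \ Epart1 n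

lemma Epart1_subset (n : ℕ) : Epart1 n ⊆ (GW n).edgeSet := fun _ h => h.1

lemma mem_Epart1 {n : ℕ} {a b : W n} :
    s(a, b) ∈ Epart1 n ↔ (GW n).Adj a b ∧
      a.2.val ≤ n ^ (a.1.val + 1) ∧ b.2.val ≤ n ^ (b.1.val + 1) := by
  unfold Epart1
  simp only [Set.mem_setOf_eq, SimpleGraph.mem_edgeSet]
  constructor
  · rintro ⟨h1, h2⟩
    exact ⟨h1, h2 a (Sym2.mem_mk_left _ _), h2 b (Sym2.mem_mk_right _ _)⟩
  · rintro ⟨h1, h2, h3⟩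
    refine ⟨h1, ?_⟩
    intro v hv
    rcases Sym2.mem_iff.mp hv with rfl | rfl
    · exact h2
    · exact h3

lemma mem_Epart2 {n : ℕ} {a b : W n} :
    s(a, b) ∈ Epart2 n ↔ (GW n).Adj a b ∧
      ¬(a.2.val ≤ n ^ (a.1.val + 1) ∧ b.2.val ≤ n ^ (b.1.val + 1)) := by
  unfold Epart2
  rw [Set.mem_diff, SimpleGraph.mem_edgeSet, mem_Epart1]
  tauto

/-- neighbors within Epart1 of a left vertex -/
lemma nbrs_E1 {n : ℕ} (k : Fin n) (x : Fin (2 * n ^ (k.val + 1) + 1))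
    (hx : x.val ≤ n ^ (k.val + 1)) :
    {u : W n | s(⟨k, x⟩, u) ∈ Epart1 n} =
      Sigma.mk k '' {j | j.val ≤ n ^ (k.val + 1) ∧ j ≠ x} := by
  ext u
  obtain ⟨l, j⟩ := u
  simp only [Set.mem_setOf_eq, Set.mem_image]
  constructor
  · intro h
    obtain ⟨hadj, _, hcondb⟩ := mem_Epart1.mp h
    obtain ⟨hfst, hne, _⟩ := GW_adj_iff.mp hadj
    have hkl : k = l := hfst
    subst hkl
    exact ⟨j, ⟨hcondb, fun hj => hne (by rw [hj])⟩, rfl⟩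
  · rintro ⟨j', ⟨hle, hne⟩, heq⟩
    cases heq
    exact mem_Epart1.mpr ⟨GW_adj_iff.mpr ⟨rfl, mk_ne_mk hne, Or.inl ⟨hx, hle⟩⟩, hx, hle⟩

/-- neighbors within Epart2 of a right vertex -/
lemma nbrs_E2 {n : ℕ} (k : Fin n) (x : Fin (2 * n ^ (k.val + 1) + 1))
    (hx : n ^ (k.val + 1) ≤ x.val) :
    {u : W n | s(⟨k, x⟩, u) ∈ Epart2 n} =
      Sigma.mk k '' {j | n ^ (k.val + 1) ≤ j.val ∧ j ≠ x} := by
  ext u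
  obtain ⟨l, j⟩ := u
  simp only [Set.mem_setOf_eq, Set.mem_image]
  constructor
  · intro h
    obtain ⟨hadj, hnc⟩ := mem_Epart2.mp h
    obtain ⟨hfst, hne, hside⟩ := GW_adj_iff.mp hadj
    have hkl : k = l := hfst
    subst hkl
    refine ⟨j, ⟨?_, fun hj => hne (by rw [hj])⟩, rfl⟩
    rcases hside with ⟨h1, h2⟩ | ⟨h1, h2⟩
    · exact absurd ⟨h1, h2⟩ hnc
    · exact h2
  · rintro ⟨j', ⟨hge, hne⟩, heq⟩
    cases heq
    refine mem_Epart2.mpr ⟨GW_adj_iff.mpr ⟨rfl, mk_ne_mk hne, Or.inr ⟨hx, hge⟩⟩, ?_⟩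
    rintro ⟨h1, h2⟩
    have h1' : x.val ≤ n ^ (k.val + 1) := h1
    have h2' : j'.val ≤ n ^ (k.val + 1) := h2
    apply hne
    apply Fin.ext
    omega

lemma partDeg_E1_left {n : ℕ} (k : Fin n) (x : Fin (2 * n ^ (k.val + 1) + 1))
    (hx : x.val ≤ n ^ (k.val + 1)) :
    partDeg (Epart1 n) (⟨k, x⟩ : W n) = n ^ (k.val + 1) := by
  rw [partDeg_eq_ncard, nbrs_E1 k x hx,
    Set.ncard_image_of_injective _ sigma_mk_injective,
    ncard_seg_le_erase (by omega) x hx]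

lemma partDeg_E2_right {n : ℕ} (k : Fin n) (x : Fin (2 * n ^ (k.val + 1) + 1))
    (hx : n ^ (k.val + 1) ≤ x.val) :
    partDeg (Epart2 n) (⟨k, x⟩ : W n) = n ^ (k.val + 1) := by
  rw [partDeg_eq_ncard, nbrs_E2 k x hx,
    Set.ncard_image_of_injective _ sigma_mk_injective,
    ncard_seg_ge_erase x hx]

/-- the neighbours of a vertex, as a set -/
lemma partDeg_edgeSet {n : ℕ} (v : W n) :
    partDeg (GW n).edgeSet v = {u | (GW n).Adj v u}.ncard := by
  rw [partDeg_eq_ncard]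
  rfl

lemma nbrs_center {n : ℕ} (k : Fin n) (x : Fin (2 * n ^ (k.val + 1) + 1))
    (hx : x.val = n ^ (k.val + 1)) :
    {u : W n | (GW n).Adj ⟨k, x⟩ u} = Sigma.mk k '' {j | j ≠ x} := by
  ext u
  obtain ⟨l, j⟩ := u
  simp only [Set.mem_setOf_eq, Set.mem_image]
  constructor
  · intro hadj
    obtain ⟨hfst, hne, _⟩ := GW_adj_iff.mp hadj
    have hkl : k = l := hfst
    subst hkl
    exact ⟨j, fun hj => hne (by rw [hj]), rfl⟩
  · rintro ⟨j', hne, heq⟩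
    cases heq
    refine GW_adj_iff.mpr ⟨rfl, mk_ne_mk hne, ?_⟩
    rcases le_total j'.val (n ^ (k.val + 1)) with h | h
    · exact Or.inl ⟨le_of_eq hx, h⟩
    · exact Or.inr ⟨le_of_eq hx.symm, h⟩

lemma deg_center {n : ℕ} (k : Fin n) :
    partDeg (GW n).edgeSet (⟨k, ⟨n ^ (k.val + 1), by omega⟩⟩ : W n) = 2 * n ^ (k.val + 1) := by
  rw [partDeg_edgeSet, nbrs_center k _ rfl,
    Set.ncard_image_of_injective _ sigma_mk_injective, ncard_ne]
  omega

lemma deg_noncenter {n : ℕ} (k : Fin n) (x : Fin (2 * n ^ (k.val + 1) + 1))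
    (hx : x.val ≠ n ^ (k.val + 1)) :
    partDeg (GW n).edgeSet (⟨k, x⟩ : W n) ≤ n ^ (k.val + 1) := by
  rw [partDeg_edgeSet]
  rcases Nat.lt_or_ge x.val (n ^ (k.val + 1)) with h | h
  · have hsub : {u : W n | (GW n).Adj ⟨k, x⟩ u} ⊆
        Sigma.mk k '' {j | j.val ≤ n ^ (k.val + 1) ∧ j ≠ x} := by
      rintro ⟨l, j⟩ hadj
      obtain ⟨hfst, hne, hside⟩ := GW_adj_iff.mp hadj
      have hkl : k = l := hfst
      subst hkl
      refine ⟨j, ⟨?_, fun hj => hne (by rw [hj])⟩, rfl⟩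
      rcases hside with ⟨_, h2⟩ | ⟨h1, _⟩
      · exact h2
      · have h1' : n ^ (k.val + 1) ≤ x.val := h1
        omega
    calc {u : W n | (GW n).Adj ⟨k, x⟩ u}.ncard
        ≤ (Sigma.mk k '' {j | j.val ≤ n ^ (k.val + 1) ∧ j ≠ x}).ncard :=
          Set.ncard_le_ncard hsub (Set.toFinite _)
      _ = n ^ (k.val + 1) := by
          rw [Set.ncard_image_of_injective _ sigma_mk_injective,
            ncard_seg_le_erase (by omega) x (le_of_lt h)]
  · have hgt : n ^ (k.val + 1) < x.val := by omega
    have hsub : {u : W n | (GW n).Adj ⟨k, x⟩ u} ⊆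
        Sigma.mk k '' {j | n ^ (k.val + 1) ≤ j.val ∧ j ≠ x} := by
      rintro ⟨l, j⟩ hadj
      obtain ⟨hfst, hne, hside⟩ := GW_adj_iff.mp hadj
      have hkl : k = l := hfst
      subst hkl
      refine ⟨j, ⟨?_, fun hj => hne (by rw [hj])⟩, rfl⟩
      rcases hside with ⟨h1, _⟩ | ⟨_, h2⟩
      · have h1' : x.val ≤ n ^ (k.val + 1) := h1
        omega
      · exact h2
    calc {u : W n | (GW n).Adj ⟨k, x⟩ u}.ncard
        ≤ (Sigma.mk k '' {j | n ^ (k.val + 1) ≤ j.val ∧ j ≠ x}).ncard :=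
          Set.ncard_le_ncard hsub (Set.toFinite _)
      _ = n ^ (k.val + 1) := by
          rw [Set.ncard_image_of_injective _ sigma_mk_injective,
            ncard_seg_ge_erase x h]

/-- the 2-decomposition into locally regular parts -/
lemma decomp (n : ℕ) :
    Epart1 n ∪ Epart2 n = (GW n).edgeSet ∧ Disjoint (Epart1 n) (Epart2 n) ∧
    IsLocallyRegularPart (Epart1 n) ∧ IsLocallyRegularPart (Epart2 n) := by
  refine ⟨Set.union_diff_cancel (Epart1_subset n), disjoint_sdiff_self_right, ?_, ?_⟩
  · intro u v h
    obtain ⟨hadj, hu, hv⟩ := mem_Epart1.mp h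
    obtain ⟨k, x⟩ := u
    obtain ⟨l, y⟩ := v
    have hkl : k = l := (GW_adj_iff.mp hadj).1
    subst hkl
    rw [partDeg_E1_left k x hu, partDeg_E1_left k y hv]
  · intro u v h
    obtain ⟨hadj, hnc⟩ := mem_Epart2.mp h
    obtain ⟨k, x⟩ := u
    obtain ⟨l, y⟩ := v
    have hkl : k = l := (GW_adj_iff.mp hadj).1
    subst hkl
    rcases (GW_adj_iff.mp hadj).2.2 with ⟨h1, h2⟩ | ⟨h1, h2⟩
    · exact absurd ⟨h1, h2⟩ hnc
    · rw [partDeg_E2_right k x h1, partDeg_E2_right k y h2]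

/-! ### the lower bound -/

lemma lower (n : ℕ) (hn : 1 ≤ n) (t : ℕ) (P : Fin t → Set (Sym2 (W n)))
    (hU : (⋃ i, P i) = (GW n).edgeSet)
    (hd : ∀ i j, i ≠ j → Disjoint (P i) (P j))
    (hreg : ∀ i, IsRegularPart (P i)) : n ≤ t := by
  by_contra hlt
  push_neg at hlt
  classical
  choose r hr1 hr2 using hreg
  have hPsub : ∀ i, P i ⊆ (GW n).edgeSet := fun i => hU ▸ Set.subset_iUnion P i
  -- the family of parts of degree at most n^(k+1)
  let A : ℕ → Finset (Fin t) := fun k => Finset.univ.filter (fun i => r i ≤ n ^ (k + 1))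
  have hmemA : ∀ k i, i ∈ A k ↔ r i ≤ n ^ (k + 1) := by
    intro k i
    simp [A]
  have hAmono : ∀ k, A k ⊆ A (k + 1) := by
    intro k i hi
    rw [hmemA] at hi ⊢
    exact le_trans hi (Nat.pow_le_pow_right hn (by omega))
  have hAcard : ∀ k, (A k).card ≤ t := by
    intro k
    calc (A k).card ≤ Finset.univ.card := Finset.card_filter_le _ _
      _ = t := by simp
  -- the degree inequality at the center vertex of component k
  have hdeg : ∀ k, k < n → 2 * n ^ (k + 1) ≤ ∑ i ∈ A k, r i := by
    intro k hk
    set kk : Fin n := ⟨k, hk⟩ with hkk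
    set vk : W n := ⟨kk, ⟨n ^ (kk.val + 1), by omega⟩⟩ with hvk
    set I : Finset (Fin t) := Finset.univ.filter (fun i => ∃ e ∈ P i, vk ∈ e) with hI
    have hIA : I ⊆ A k := by
      intro i hi
      rw [hI, Finset.mem_filter] at hi
      obtain ⟨-, e, heP, hve⟩ := hi
      rw [hmemA]
      obtain ⟨u, rfl⟩ := Sym2.mem_iff_exists.mp hve
      have hedge : (GW n).Adj vk u := (SimpleGraph.mem_edgeSet _).mp (hPsub i heP)
      obtain ⟨l, j⟩ := u
      obtain ⟨hfst, hne, -⟩ := GW_adj_iff.mp hedge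
      have hkl : kk = l := hfst
      subst hkl
      have hjval : j.val ≠ n ^ (k + 1) := by
        intro hjv
        apply hne
        rw [hvk]
        congr 1
        exact (Fin.ext hjv).symm
      have h1 : r i = partDeg (P i) (⟨kk, j⟩ : W n) :=
        (hr2 i ⟨kk, j⟩ ⟨s(vk, ⟨kk, j⟩), heP, Sym2.mem_mk_right _ _⟩).symm
      calc r i = partDeg (P i) (⟨kk, j⟩ : W n) := h1
        _ ≤ partDeg (GW n).edgeSet (⟨kk, j⟩ : W n) := partDeg_mono (hPsub i) _
        _ ≤ n ^ (k + 1) := deg_noncenter kk j hjval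
    have hsum1 : ∑ i ∈ I, r i = ∑ i ∈ I, partDeg (P i) vk := by
      apply Finset.sum_congr rfl
      intro i hi
      rw [hI, Finset.mem_filter] at hi
      exact (hr2 i vk hi.2).symm
    have hsum2 : ∑ i ∈ I, partDeg (P i) vk = ∑ i, partDeg (P i) vk := by
      apply Finset.sum_subset (Finset.subset_univ I)
      intro i _ hni
      rw [hI, Finset.mem_filter] at hni
      exact partDeg_eq_zero (fun hex => hni ⟨Finset.mem_univ i, hex⟩)
    have hsum3 : ∑ i, partDeg (P i) vk = 2 * n ^ (k + 1) := by
      rw [← partDeg_sum P hd vk, hU]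
      exact deg_center kk
    calc 2 * n ^ (k + 1) = ∑ i ∈ I, r i := by rw [hsum1, hsum2, hsum3]
      _ ≤ ∑ i ∈ A k, r i := Finset.sum_le_sum_of_subset hIA
  -- bounding sums by cardinalities
  have hsumA : ∀ k, ∑ i ∈ A k, r i ≤ (A k).card * n ^ (k + 1) := by
    intro k
    have := Finset.sum_le_card_nsmul (A k) r (n ^ (k + 1))
      (fun i hi => (hmemA k i).mp hi)
    simpa [smul_eq_mul] using this
  -- the staircase induction
  have key : ∀ k, k < n → 2 * (k + 1) ≤ (A k).card := by
    intro k
    induction k with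
    | zero =>
      intro h0
      have h1 := hdeg 0 h0
      have h2 := hsumA 0
      have hpos : 0 < n ^ (0 + 1) := pow_pos (by omega) _
      have := Nat.le_of_mul_le_mul_right (le_trans h1 h2) hpos
      omega
    | succ k ih =>
      intro hk1
      have hk : k < n := by omega
      have h2k := ih hk
      have hstep := hdeg (k + 1) hk1
      have hsplit : ∑ i ∈ A (k + 1) \ A k, r i + ∑ i ∈ A k, r i = ∑ i ∈ A (k + 1), r i :=
        Finset.sum_sdiff (hAmono k)
      have hb1 : ∑ i ∈ A k, r i ≤ t * n ^ (k + 1) :=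
        le_trans (hsumA k) (Nat.mul_le_mul_right _ (hAcard k))
      have hb2 : ∑ i ∈ A (k + 1) \ A k, r i ≤ (A (k + 1) \ A k).card * n ^ (k + 2) := by
        have := Finset.sum_le_card_nsmul (A (k + 1) \ A k) r (n ^ (k + 2))
          (fun i hi => (hmemA (k + 1) i).mp (Finset.mem_sdiff.mp hi).1)
        simpa [smul_eq_mul] using this
      set a := (A (k + 1) \ A k).card with ha
      have hNpos : 0 < n ^ (k + 1) := pow_pos (by omega) _
      have ha2 : 2 ≤ a := by
        by_contra hcon
        push_neg at hcon
        have hA1 : a * n ^ (k + 2) ≤ n ^ (k + 2) := by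
          calc a * n ^ (k + 2) ≤ 1 * n ^ (k + 2) := Nat.mul_le_mul_right _ (by omega)
            _ = n ^ (k + 2) := one_mul _
        have hchain : 2 * n ^ (k + 2) ≤ t * n ^ (k + 1) + n ^ (k + 2) := by
          calc 2 * n ^ (k + 2) ≤ ∑ i ∈ A (k + 1), r i := hstep
            _ = ∑ i ∈ A (k + 1) \ A k, r i + ∑ i ∈ A k, r i := hsplit.symm
            _ ≤ a * n ^ (k + 2) + t * n ^ (k + 1) := Nat.add_le_add hb2 hb1
            _ ≤ n ^ (k + 2) + t * n ^ (k + 1) := Nat.add_le_add_right hA1 _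
            _ = t * n ^ (k + 1) + n ^ (k + 2) := Nat.add_comm _ _
        have hpow : n ^ (k + 2) = n * n ^ (k + 1) := by ring
        have hmul : n * n ^ (k + 1) ≤ t * n ^ (k + 1) := by omega
        have := Nat.le_of_mul_le_mul_right hmul hNpos
        omega
      have hcards : a + (A k).card = (A (k + 1)).card :=
        Finset.card_sdiff_add_card_eq_card (hAmono k)
      omega
  have hfin := key (n - 1) (by omega)
  have hle := hAcard (n - 1)
  omega

/-! ### transfer along an equivalence -/

lemma map_symm_map {α β : Type*} (e : α ≃ β) (z : Sym2 α) :
    Sym2.map ⇑e.symm (Sym2.map ⇑e z) = z := by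
  induction z using Sym2.ind with
  | _ x y => simp [Sym2.map_pair_eq]

lemma map_map_symm {α β : Type*} (e : α ≃ β) (z : Sym2 β) :
    Sym2.map ⇑e (Sym2.map ⇑e.symm z) = z := by
  induction z using Sym2.ind with
  | _ x y => simp [Sym2.map_pair_eq]

lemma sym2_map_injective {α β : Type*} (e : α ≃ β) :
    Function.Injective (Sym2.map ⇑e) := by
  intro z w h
  have := congrArg (Sym2.map ⇑e.symm) h
  rwa [map_symm_map, map_symm_map] at this

lemma mem_image_sym2 {α β : Type*} (e : α ≃ β) {E : Set (Sym2 α)} {z : Sym2 β} :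
    z ∈ Sym2.map ⇑e '' E ↔ Sym2.map ⇑e.symm z ∈ E := by
  constructor
  · rintro ⟨w, hw, rfl⟩
    rwa [map_symm_map]
  · intro h
    exact ⟨_, h, map_map_symm e z⟩

lemma image_symm_image {α β : Type*} (e : α ≃ β) (E : Set (Sym2 α)) :
    Sym2.map ⇑e.symm '' (Sym2.map ⇑e '' E) = E := by
  rw [← Set.image_comp]
  have hcomp : (Sym2.map ⇑e.symm) ∘ (Sym2.map ⇑e) = id := funext fun z => map_symm_map e z
  rw [hcomp, Set.image_id]

lemma image_image_symm {α β : Type*} (e : α ≃ β) (E : Set (Sym2 β)) :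
    Sym2.map ⇑e '' (Sym2.map ⇑e.symm '' E) = E := by
  rw [← Set.image_comp]
  have hcomp : (Sym2.map ⇑e) ∘ (Sym2.map ⇑e.symm) = id := funext fun z => map_map_symm e z
  rw [hcomp, Set.image_id]

lemma partDeg_map {α β : Type*} (e : α ≃ β) (E : Set (Sym2 α)) (v : α) :
    partDeg (Sym2.map ⇑e '' E) (e v) = partDeg E v := by
  rw [partDeg_eq_ncard, partDeg_eq_ncard]
  have hset : {u | s(e v, u) ∈ Sym2.map ⇑e '' E} = ⇑e '' {w | s(v, w) ∈ E} := by
    ext u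
    rw [Set.mem_setOf_eq, mem_image_sym2, Sym2.map_pair_eq]
    simp only [Equiv.symm_apply_apply]
    constructor
    · intro h
      exact ⟨e.symm u, h, by simp⟩
    · rintro ⟨w, hw, rfl⟩
      simpa using hw
  rw [hset, Set.ncard_image_of_injective _ e.injective]

lemma edgeSet_comap' {α β : Type*} (e : α ≃ β) (G : SimpleGraph α) :
    (SimpleGraph.comap (⇑e.symm) G).edgeSet = Sym2.map ⇑e '' G.edgeSet := by
  ext z
  induction z using Sym2.ind with
  | _ a b =>
    rw [SimpleGraph.mem_edgeSet, SimpleGraph.comap_adj, mem_image_sym2, Sym2.map_pair_eq,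
      SimpleGraph.mem_edgeSet]

end Stmt7Aux


open Stmt7Aux in
/-- the gap between the regular number and the regular chromatic index can be
arbitrarily large: for every n there is a finite graph decomposable into two locally regular
parts, every partition of whose edge set into regular parts uses at least n parts. -/
theorem stmt_7 (n : ℕ) :
    ∃ (m : ℕ) (G : SimpleGraph (Fin m)),
      (∃ E₁ E₂ : Set (Sym2 (Fin m)),
        E₁ ∪ E₂ = G.edgeSet ∧ Disjoint E₁ E₂ ∧
        IsLocallyRegularPart E₁ ∧ IsLocallyRegularPart E₂) ∧
      ∀ (t : ℕ) (P : Fin t → Set (Sym2 (Fin m))),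
        (⋃ i, P i) = G.edgeSet →
        (∀ i j, i ≠ j → Disjoint (P i) (P j)) →
        (∀ i, IsRegularPart (P i)) →
        n ≤ t := by
  rcases Nat.eq_zero_or_pos n with rfl | hn
  · refine ⟨1, ⊥, ⟨∅, ∅, by simp, by simp, ?_, ?_⟩, fun t P _ _ _ => Nat.zero_le t⟩
    · intro u v h
      exact absurd h (Set.notMem_empty _)
    · intro u v h
      exact absurd h (Set.notMem_empty _)
  · classical
    obtain ⟨hun, hdis, hlr1, hlr2⟩ := decomp n
    let e := Fintype.equivFin (W n)
    refine ⟨Fintype.card (W n), SimpleGraph.comap (⇑e.symm) (GW n),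
      ⟨Sym2.map ⇑e '' Epart1 n, Sym2.map ⇑e '' Epart2 n, ?_, ?_, ?_, ?_⟩, ?_⟩
    · rw [← Set.image_union, hun, edgeSet_comap']
    · exact (Set.disjoint_image_iff (sym2_map_injective e)).mpr hdis
    · intro a b hab
      rw [mem_image_sym2, Sym2.map_pair_eq] at hab
      have h1 := hlr1 (e.symm a) (e.symm b) hab
      have ha := partDeg_map e (Epart1 n) (e.symm a)
      have hb := partDeg_map e (Epart1 n) (e.symm b)
      rw [Equiv.apply_symm_apply] at ha hb
      rw [ha, hb]
      exact h1
    · intro a b hab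
      rw [mem_image_sym2, Sym2.map_pair_eq] at hab
      have h1 := hlr2 (e.symm a) (e.symm b) hab
      have ha := partDeg_map e (Epart2 n) (e.symm a)
      have hb := partDeg_map e (Epart2 n) (e.symm b)
      rw [Equiv.apply_symm_apply] at ha hb
      rw [ha, hb]
      exact h1
    · intro t P hUP hdP hregP
      apply lower n hn t (fun i => Sym2.map ⇑e.symm '' P i)
      · rw [← Set.image_iUnion, hUP, edgeSet_comap', image_symm_image]
      · intro i j hij
        exact (Set.disjoint_image_iff (sym2_map_injective e.symm)).mpr (hdP i j hij)
      · intro i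
        obtain ⟨r, hr1, hr2⟩ := hregP i
        refine ⟨r, hr1, ?_⟩
        rintro v ⟨edge, hmem, hvedge⟩
        have hpd : partDeg (Sym2.map ⇑e.symm '' P i) v = partDeg (P i) (e v) := by
          have h := partDeg_map e (Sym2.map ⇑e.symm '' P i) v
          rw [image_image_symm] at h
          exact h.symm
        rw [hpd]
        apply hr2
        refine ⟨Sym2.map ⇑e edge, ?_, Sym2.mem_map.mpr ⟨v, hvedge, rfl⟩⟩
        have := Set.mem_image_of_mem (Sym2.map ⇑e) hmem
        rwa [image_image_symm] at this
end

section
/- Let G be a finite graph in which every vertex has degree 2 or 4. Then E(G) can be partitioned into two (possibly empty) parts E₁ and E₂ such that in each part every vertex incident to an edge of that part has degree exactly 2 in that part; i.e., G can be decomposed into two 2-regular parts. -/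
open SimpleGraph

variable {V : Type*}

namespace Stmt8Aux

variable {V : Type*} [DecidableEq V] {G : SimpleGraph V}

def wdeg {a b : V} (p : G.Walk a b) (v : V) : ℕ :=
  p.edges.countP (fun e => decide (v ∈ e))

@[simp] lemma wdeg_nil {a v : V} : wdeg (Walk.nil : G.Walk a a) v = 0 := rfl

lemma wdeg_cons {a w b v : V} (h : G.Adj a w) (q : G.Walk w b) :
    wdeg (Walk.cons h q) v = (if v = a ∨ v = w then 1 else 0) + wdeg q v := by
  simp only [wdeg, Walk.edges_cons, List.countP_cons]
  by_cases hv : v = a ∨ v = w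
  · simp [Sym2.mem_iff, hv]
    omega
  · rw [not_or] at hv
    simp [Sym2.mem_iff, hv.1, hv.2]

lemma wdeg_spec {a b : V} (p : G.Walk a b) (v : V) :
    wdeg p v + (if v = a then 1 else 0) + (if v = b then 1 else 0)
      = 2 * p.support.count v := by
  induction p with
  | nil =>
    simp only [wdeg_nil, Walk.support_nil, List.count_cons, List.count_nil, beq_iff_eq]
    split_ifs <;> first | omega | simp_all
  | cons h q ih =>
    have hne2 := fun (h1 : v = _) (h2 : v = _) => h.ne (h1.symm.trans h2)
    rw [wdeg_cons h q, Walk.support_cons, List.count_cons]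
    simp only [beq_iff_eq]
    split_ifs at ih ⊢ <;> first | omega | tauto

/-- for a closed walk, each vertex has even incidence count, twice the visits -/
lemma wdeg_closed {u : V} (p : G.Walk u u) (v : V) :
    wdeg p v = 2 * p.support.tail.count v := by
  have h := wdeg_spec p v
  rw [Walk.support_eq_cons, List.count_cons] at h
  simp only [beq_iff_eq] at h
  split_ifs at h <;> first | omega | simp_all

lemma eq_end_of_odd_wdeg {a b v : V} (p : G.Walk a b) (hv : v ≠ a)
    (ho : ¬ (2 ∣ wdeg p v)) : v = b := by
  have h := wdeg_spec p v
  rw [if_neg hv] at h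
  by_contra hb
  rw [if_neg hb] at h
  omega

lemma one_le_wdeg_end {w b : V} (q : G.Walk w b) (h : 0 < q.length) : 1 ≤ wdeg q b := by
  induction q with
  | nil => simp at h
  | cons h' q'' ih =>
    cases q'' with
    | nil => simp [wdeg_cons]
    | cons h2 q3 =>
      have := ih (by simp)
      rw [wdeg_cons]
      omega

lemma one_le_wdeg_start {w b : V} (q : G.Walk w b) (h : 0 < q.length) : 1 ≤ wdeg q w := by
  cases q with
  | nil => simp at h
  | cons h' q'' => rw [wdeg_cons]; simp

section Coloring

variable (f : V → Bool)

/-- colors the edges of a walk, starting with color `c`, flipping the color each time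
the walk enters a vertex `w` with `f w = true`. -/
def col : {a b : V} → G.Walk a b → Bool → List (Sym2 V × Bool)
  | _, _, @Walk.cons _ _ a w _ h q, c => (s(a, w), c) :: col q (xor (f w) c)
  | _, _, Walk.nil, _ => []

/-- the color that would be given to the next edge after the walk -/
def endc : {a b : V} → G.Walk a b → Bool → Bool
  | _, _, @Walk.cons _ _ _ w _ _ q, c => endc q (xor (f w) c)
  | _, _, Walk.nil, c => c

@[simp] lemma col_nil {a : V} {c : Bool} : col f (Walk.nil : G.Walk a a) c = [] := by simp [col]

@[simp] lemma col_cons {a w b : V} (h : G.Adj a w) (q : G.Walk w b) (c : Bool) :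
    col f (Walk.cons h q) c = (s(a, w), c) :: col f q (xor (f w) c) := by simp [col]

@[simp] lemma endc_nil {a : V} {c : Bool} : endc f (Walk.nil : G.Walk a a) c = c := by simp [endc]

@[simp] lemma endc_cons {a w b : V} (h : G.Adj a w) (q : G.Walk w b) (c : Bool) :
    endc f (Walk.cons h q) c = endc f q (xor (f w) c) := by simp [endc]

lemma col_map_fst {a b : V} (p : G.Walk a b) (c : Bool) :
    (col f p c).map Prod.fst = p.edges := by
  induction p generalizing c with
  | nil => rfl
  | cons h q ih => simp [ih]

/-- count of edges at `v` of color `b₀` -/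
def cnt (L : List (Sym2 V × Bool)) (v : V) (b₀ : Bool) : ℕ :=
  L.countP (fun x => decide (v ∈ x.1) && (x.2 == b₀))

@[simp] lemma cnt_nil {v : V} {b₀ : Bool} : cnt ([] : List (Sym2 V × Bool)) v b₀ = 0 := rfl

lemma cnt_cons {e : Sym2 V} {c : Bool} {L : List (Sym2 V × Bool)} {v : V} {b₀ : Bool} :
    cnt ((e, c) :: L) v b₀ = (if v ∈ e ∧ c = b₀ then 1 else 0) + cnt L v b₀ := by
  simp only [cnt, List.countP_cons]
  by_cases h1 : v ∈ e <;> by_cases h2 : c = b₀ <;> simp [h1, h2] <;> omega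

lemma cnt_true_add_cnt_false {a b : V} (p : G.Walk a b) (c : Bool) (v : V) :
    cnt (col f p c) v true + cnt (col f p c) v false = wdeg p v := by
  induction p generalizing c with
  | nil => simp
  | cons h q ih =>
    rename_i a' w' b'
    rw [col_cons, wdeg_cons h q, cnt_cons, cnt_cons, ← ih (xor (f w') c)]
    by_cases hv : v = a' ∨ v = w' <;>
      cases c <;> simp [Sym2.mem_iff, hv] <;> omega

lemma endc_formula : ∀ {a b : V} (p : G.Walk a b) (c : Bool),
    endc f p c = if (p.support.tail.countP f) % 2 = 1 then !c else c
  | _, _, Walk.nil, c => by simp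
  | _, _, @Walk.cons _ _ a' w' b' h q, c => by
    rw [endc_cons, endc_formula q (xor (f w') c), Walk.support_cons, List.tail_cons,
      q.support_eq_cons, List.countP_cons]
    cases hw : f w' <;>
      rcases Nat.mod_two_eq_zero_or_one (q.support.tail.countP f) with h2 | h2 <;>
      cases c <;> simp [hw, h2, Nat.add_mod]

lemma flip_bal : ∀ {a b : V} (p : G.Walk a b) (c : Bool) (v : V), f v = true →
    (cnt (col f p c) v true : ℤ) - (cnt (col f p c) v false : ℤ)
      = (if v = a then (if c then 1 else -1) else 0)
        + (if v = b then (if endc f p c then -1 else 1) else 0)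
  | _, _, @Walk.nil _ _ a', c, v, hv => by
    by_cases hva : v = a' <;> cases c <;> simp [hva]
  | _, _, @Walk.cons _ _ a' w' b' h q, c, v, hv => by
    rw [col_cons, cnt_cons, cnt_cons, endc_cons]
    by_cases hva : v = a' <;> by_cases hvw : v = w'
    · exact absurd (hva.symm.trans hvw) h.ne
    all_goals (
      have hne2 : ¬(v = a' ∧ v = w') := fun ⟨h1, h2⟩ => h.ne (h1.symm.trans h2)
      have ih := flip_bal q (xor (f w') c) v hv
      try have hfw : f w' = true := hvw ▸ hv
      cases hend : endc f q (xor (f w') c) <;> cases c <;>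
        simp only [Bool.xor_false, Bool.xor_true, Sym2.mem_iff, and_true, and_false,
          if_false, if_true, Bool.false_eq_true, Bool.true_eq_false, eq_self_iff_true,
          hend] at ih ⊢ <;>
        split_ifs at ih ⊢ <;> first | omega | tauto | simp_all)

lemma cnt_col_le_wdeg {a b : V} (p : G.Walk a b) (c : Bool) (v : V) (b₀ : Bool) :
    cnt (col f p c) v b₀ ≤ wdeg p v := by
  have := cnt_true_add_cnt_false f p c v
  cases b₀ <;> omega

lemma cnt_end_zero : ∀ {a b : V} (p : G.Walk a b) (c : Bool), f b = false →
    wdeg p b ≤ 1 → cnt (col f p c) b (!(endc f p c)) = 0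
  | _, _, Walk.nil, c, hb, hw => by simp
  | _, _, @Walk.cons _ _ a' w' b' h q, c, hb, hw => by
    rw [wdeg_cons h q] at hw
    rw [col_cons, cnt_cons, endc_cons]
    by_cases hbe : b' = a' ∨ b' = w'
    · rw [if_pos hbe] at hw
      have hq0 : wdeg q b' = 0 := by omega
      rcases hbe with hba | hbw
      · exfalso
        rcases q with _ | ⟨h2, q3⟩
        · exact h.ne hba.symm
        · have h1 := one_le_wdeg_end (Walk.cons h2 q3) (by simp)
          omega
      · subst hbw
        rcases q with _ | ⟨h2, q3⟩
        · cases c <;> simp [hb]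
        · exfalso
          have h1 := one_le_wdeg_start (Walk.cons h2 q3) (by simp)
          omega
    · rw [if_neg hbe] at hw
      rw [if_neg (by simp only [Sym2.mem_iff]; tauto)]
      simpa using cnt_end_zero q (xor (f w') c) hb (by omega)

lemma mono_of_wdeg_le_two : ∀ {a b : V} (p : G.Walk a b) (c : Bool) (v : V), f v = false →
    wdeg p v ≤ 2 →
    (cnt (col f p c) v true = 0 ∨ cnt (col f p c) v false = 0) ∨
      (v = a ∧ v = b ∧ endc f p c ≠ c)
  | _, _, Walk.nil, c, v, hv, hw => by simp
  | _, _, @Walk.cons _ _ a' w' b' h q, c, v, hv, hw => by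
    rw [wdeg_cons h q] at hw
    rw [col_cons, cnt_cons, cnt_cons, endc_cons]
    by_cases hva : v = a' <;> by_cases hvw : v = w'
    · exact absurd (hva.symm.trans hvw) h.ne
    · -- v = a', v ≠ w'
      rw [if_pos (Or.inl hva)] at hw
      have hq1 : wdeg q v ≤ 1 := by omega
      have hme : v ∈ s(a', w') := by simp [Sym2.mem_iff, hva]
      rcases Nat.lt_or_ge (wdeg q v) 1 with h0 | h1
      · have hz : ∀ c₀ b₀, cnt (col f q c₀) v b₀ = 0 := fun c₀ b₀ => by
          have h5 := cnt_true_add_cnt_false f q c₀ v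
          cases b₀ <;> omega
        refine Or.inl ?_
        cases c
        · exact Or.inl (by simp [hme, hz])
        · exact Or.inr (by simp [hme, hz])
      · have hvb : v = b' := eq_end_of_odd_wdeg q hvw (by omega)
        subst hvb
        have h7 := cnt_end_zero f q (xor (f w') c) hv hq1
        by_cases hdc : endc f q (xor (f w') c) = c
        · rw [hdc] at h7
          refine Or.inl ?_
          cases c <;> simp only [Bool.not_false, Bool.not_true] at h7
          · exact Or.inl (by simp [hme]; simpa using h7)
          · exact Or.inr (by simp [hme]; simpa using h7)
        · exact Or.inr ⟨hva, rfl, hdc⟩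
    · -- v = w'
      have hfw : f w' = false := hvw ▸ hv
      rcases q with _ | ⟨h2, q3⟩
      · refine Or.inl ?_
        cases c
        · exact Or.inl (by simp)
        · exact Or.inr (by simp)
      · rename_i x
        rw [if_pos (Or.inr hvw), wdeg_cons h2 q3, if_pos (Or.inl hvw)] at hw
        have hq3 : wdeg q3 v = 0 := by omega
        have hz : ∀ c₀ b₀, cnt (col f q3 c₀) v b₀ = 0 := fun c₀ b₀ => by
          have h6 := cnt_true_add_cnt_false f q3 c₀ v
          cases b₀ <;> omega
        rw [col_cons, cnt_cons, cnt_cons]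
        have hme1 : v ∈ s(a', w') := by simp [Sym2.mem_iff, hvw]
        have hme2 : v ∈ s(w', x) := by simp [Sym2.mem_iff, hvw]
        refine Or.inl ?_
        cases c
        · exact Or.inl (by simp [hme1, hme2, hfw, hz])
        · exact Or.inr (by simp [hme1, hme2, hfw, hz])
    · -- v not in first edge
      rw [if_neg (by tauto)] at hw
      rw [if_neg (by simp only [Sym2.mem_iff]; tauto), if_neg (by simp only [Sym2.mem_iff]; tauto)]
      simp only [zero_add]
      rcases mono_of_wdeg_le_two q (xor (f w') c) v hv (by omega) with hm | ⟨hva', _, _⟩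
      · exact Or.inl hm
      · exact absurd hva' hvw


lemma mem_support_of_mem_edge {a b : V} (p : G.Walk a b) {e : Sym2 V} {v : V}
    (he : e ∈ p.edges) (hv : v ∈ e) : v ∈ p.support := by
  induction e with
  | _ x y =>
    rcases Sym2.mem_iff.mp hv with rfl | rfl
    · exact p.fst_mem_support_of_mem_edges he
    · exact p.snd_mem_support_of_mem_edges he

lemma countP_even_of_count_two (l : List V) (g : V → Bool)
    (h : ∀ v, g v = true → l.count v = 2) : l.countP g % 2 = 0 := by
  rw [List.countP_eq_length_filter]
  have hms := Multiset.toFinset_sum_count_eq (↑(l.filter g) : Multiset V)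
  have h2 : ∀ a ∈ (↑(l.filter g) : Multiset V).toFinset, Multiset.count a (↑(l.filter g) : Multiset V) = 2 := by
    intro a ha
    rw [Multiset.mem_toFinset, Multiset.mem_coe, List.mem_filter] at ha
    rw [Multiset.coe_count, List.count_filter ha.2]
    exact h a ha.2
  rw [Finset.sum_congr rfl h2, Finset.sum_const, smul_eq_mul] at hms
  simp only [Multiset.coe_card] at hms
  omega

lemma ncard_cnt (L : List (Sym2 V × Bool)) (hL : (L.map Prod.fst).Nodup) (v : V) (b : Bool) :
    partDeg {e | (e, b) ∈ L} v = cnt L v b := by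
  have hset : {e ∈ {e | (e, b) ∈ L} | v ∈ e}
      = ↑(((L.filter (fun x => decide (v ∈ x.1) && (x.2 == b))).map Prod.fst).toFinset) := by
    ext e
    simp only [Set.mem_setOf_eq, Finset.coe_sort_coe, List.coe_toFinset, List.mem_map,
      List.mem_filter, Set.mem_setOf_eq]
    constructor
    · rintro ⟨hmem, hve⟩
      exact ⟨(e, b), ⟨hmem, by simp [hve]⟩, rfl⟩
    · rintro ⟨⟨e', b'⟩, ⟨hmem, hcond⟩, rfl⟩
      simp only [Bool.and_eq_true, decide_eq_true_eq, beq_iff_eq] at hcond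
      exact ⟨hcond.2 ▸ hmem, hcond.1⟩
  rw [partDeg, hset, Set.ncard_coe_finset,
    List.toFinset_card_of_nodup (hL.sublist (List.filter_sublist.map Prod.fst)),
    List.length_map, ← List.countP_eq_length_filter]
  rfl

lemma good_walk {u : V} (p : G.Walk u u) (hp : p.IsTrail)
    (hdeg : ∀ v, v ∈ p.support → wdeg p v = 2 ∨ wdeg p v = 4) :
    ∃ E₁ E₂ : Set (Sym2 V), E₁ ∪ E₂ = {e | e ∈ p.edges} ∧ Disjoint E₁ E₂ ∧
      IsRegularPartOfDeg 2 E₁ ∧ IsRegularPartOfDeg 2 E₂ := by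
  classical
  set f : V → Bool := fun v => decide (wdeg p v = 4) with hf
  have hmap : (col f p false).map Prod.fst = p.edges := col_map_fst f p false
  have hnodup : ((col f p false).map Prod.fst).Nodup := by rw [hmap]; exact hp.edges_nodup
  have hendc : endc f p false = false := by
    rw [endc_formula]
    have heven : (p.support.tail.countP f) % 2 = 0 := by
      apply countP_even_of_count_two
      intro v hfv
      have h4 : wdeg p v = 4 := by simpa [hf] using hfv
      have := wdeg_closed p v
      omega
    simp [heven]
  have hkey : ∀ b : Bool, IsRegularPartOfDeg 2 {e | (e, b) ∈ col f p false} := by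
    intro b v ⟨e, he, hve⟩
    have hL : (e, b) ∈ col f p false := he
    have hsupp : v ∈ p.support := by
      apply mem_support_of_mem_edge p _ hve
      rw [← hmap]
      exact List.mem_map.mpr ⟨(e, b), hL, rfl⟩
    have hsum := cnt_true_add_cnt_false f p false v
    have hpos : 0 < cnt (col f p false) v b := by
      apply List.countP_pos_iff.mpr
      exact ⟨(e, b), hL, by simp [hve]⟩
    rw [ncard_cnt (col f p false) hnodup v b]
    rcases hdeg v hsupp with h2 | h4
    · have hfv : f v = false := by simp [hf, h2]
      rcases mono_of_wdeg_le_two f p false v hfv (by omega) with hm | ⟨_, _, hne⟩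
      · cases b <;> rcases hm with hm | hm <;> omega
      · exact absurd hendc hne
    · have hfv : f v = true := by simp [hf, h4]
      have hbal := flip_bal f p false v hfv
      rw [hendc] at hbal
      split_ifs at hbal <;> cases b <;> omega
  refine ⟨{e | (e, true) ∈ col f p false}, {e | (e, false) ∈ col f p false}, ?_, ?_, hkey true, hkey false⟩
  · ext e
    simp only [Set.mem_union, Set.mem_setOf_eq]
    constructor
    · rintro (h1 | h1) <;>
        · rw [← hmap]; exact List.mem_map.mpr ⟨_, h1, rfl⟩
    · intro he
      rw [← hmap] at he
      rcases List.mem_map.mp he with ⟨⟨e', b'⟩, hmem, rfl⟩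
      cases b'
      · exact Or.inr hmem
      · exact Or.inl hmem
  · rw [Set.disjoint_left]
    intro e h1 h2
    have := List.inj_on_of_nodup_map hnodup h1 h2 rfl
    simp at this

end Coloring

section Hierholzer

/-- the degree of a vertex in a finite edge set -/
def fdeg (F : Finset (Sym2 V)) (v : V) : ℕ := (F.filter (fun e => v ∈ e)).card

lemma fdeg_erase_mem {F : Finset (Sym2 V)} {e : Sym2 V} (he : e ∈ F) {v : V} (hv : v ∈ e) :
    fdeg (F.erase e) v = fdeg F v - 1 := by
  rw [fdeg, Finset.filter_erase,
    Finset.card_erase_of_mem (Finset.mem_filter.mpr ⟨he, hv⟩)]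
  rfl

lemma fdeg_erase_not_mem {F : Finset (Sym2 V)} {e : Sym2 V} {v : V} (hv : v ∉ e) :
    fdeg (F.erase e) v = fdeg F v := by
  have he' : e ∉ F.filter (fun e => v ∈ e) := fun hmem => hv (Finset.mem_filter.mp hmem).2
  rw [fdeg, Finset.filter_erase, Finset.erase_eq_of_notMem he']
  rfl

lemma one_le_fdeg {F : Finset (Sym2 V)} {e : Sym2 V} (he : e ∈ F) {v : V} (hv : v ∈ e) :
    1 ≤ fdeg F v :=
  Finset.card_pos.mpr ⟨e, Finset.mem_filter.mpr ⟨he, hv⟩⟩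

lemma wdeg_eq_fdeg {a b : V} (p : G.Walk a b) (hp : p.IsTrail) (v : V) :
    fdeg p.edges.toFinset v = wdeg p v := by
  have hst : p.edges.toFinset.filter (fun e => v ∈ e)
      = (p.edges.filter (fun e => decide (v ∈ e))).toFinset := by
    ext e
    simp [List.mem_filter]
  rw [fdeg, hst, List.toFinset_card_of_nodup (hp.edges_nodup.filter _), wdeg,
    List.countP_eq_length_filter]

lemma exists_open_trail (G : SimpleGraph V) :
    ∀ (n : ℕ) (F : Finset (Sym2 V)), F.card ≤ n → ↑F ⊆ G.edgeSet →
    ∀ u v : V, u ≠ v → ¬ 2 ∣ fdeg F u → (∀ w, w ≠ u → w ≠ v → 2 ∣ fdeg F w) →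
    ∃ p : G.Walk u v, p.IsTrail ∧ ∀ e ∈ p.edges, e ∈ F := by
  intro n
  induction n with
  | zero =>
    intro F hc _ u v _ hu _
    interval_cases h : F.card
    · rw [Finset.card_eq_zero] at h
      subst h
      exact absurd (by simp [fdeg]) hu
  | succ n ih =>
    intro F hc hFE u v huv hu hw
    have h0 : 0 < fdeg F u := by
      rcases Nat.eq_zero_or_pos (fdeg F u) with h | h
      · exact absurd (h ▸ dvd_zero 2) hu
      · exact h
    obtain ⟨e, he⟩ := Finset.card_pos.mp h0
    rw [Finset.mem_filter] at he
    obtain ⟨w, rfl⟩ := Sym2.mem_iff_exists.mp he.2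
    have hadj : G.Adj u w := G.mem_edgeSet.mp (hFE he.1)
    by_cases hwv : w = v
    · subst hwv
      refine ⟨Walk.cons hadj Walk.nil, ?_, ?_⟩
      · rw [Walk.isTrail_cons]
        exact ⟨Walk.IsTrail.nil, by simp⟩
      · intro e' he'
        simp only [Walk.edges_cons, Walk.edges_nil, List.mem_singleton] at he'
        exact he' ▸ he.1
    · have hcard : (F.erase s(u, w)).card ≤ n := by
        rw [Finset.card_erase_of_mem he.1]
        omega
      have hsub : ↑(F.erase s(u, w)) ⊆ G.edgeSet :=
        Set.Subset.trans (by exact_mod_cast Finset.erase_subset _ _) hFE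
      have huw : u ≠ w := hadj.ne
      have hu1 : 1 ≤ fdeg F u := one_le_fdeg he.1 he.2
      have hw1 : 1 ≤ fdeg F w := one_le_fdeg he.1 (Sym2.mem_mk_right u w)
      have hu' : 2 ∣ fdeg (F.erase s(u, w)) u := by
        rw [fdeg_erase_mem he.1 he.2]
        omega
      have hweven : 2 ∣ fdeg F w := hw w (Ne.symm huw) hwv
      have hw' : ¬ 2 ∣ fdeg (F.erase s(u, w)) w := by
        rw [fdeg_erase_mem he.1 (Sym2.mem_mk_right u w)]
        omega
      have hothers : ∀ x, x ≠ w → x ≠ v → 2 ∣ fdeg (F.erase s(u, w)) x := by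
        intro x hxw hxv
        by_cases hxu : x = u
        · exact hxu ▸ hu'
        · rw [fdeg_erase_not_mem (by simp [Sym2.mem_iff, hxu, hxw])]
          exact hw x hxu hxv
      obtain ⟨p, hp, hpe⟩ := ih (F.erase s(u, w)) hcard hsub w v hwv hw' hothers
      refine ⟨Walk.cons hadj p, ?_, ?_⟩
      · rw [Walk.isTrail_cons]
        exact ⟨hp, fun hmem => Finset.notMem_erase _ _ (hpe _ hmem)⟩
      · intro e' he'
        rw [Walk.edges_cons, List.mem_cons] at he'
        rcases he' with rfl | he'
        · exact he.1
        · exact Finset.mem_of_mem_erase (hpe _ he')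

lemma exists_closed_trail (G : SimpleGraph V) (F : Finset (Sym2 V)) (hFE : ↑F ⊆ G.edgeSet)
    (heven : ∀ v, 2 ∣ fdeg F v) (u : V) (hu : 0 < fdeg F u) :
    ∃ p : G.Walk u u, p.IsTrail ∧ (∀ e ∈ p.edges, e ∈ F) ∧ 0 < p.length := by
  obtain ⟨e, he⟩ := Finset.card_pos.mp hu
  rw [Finset.mem_filter] at he
  obtain ⟨w, rfl⟩ := Sym2.mem_iff_exists.mp he.2
  have hadj : G.Adj u w := G.mem_edgeSet.mp (hFE he.1)
  have huw : u ≠ w := hadj.ne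
  have hu1 : 1 ≤ fdeg F u := one_le_fdeg he.1 he.2
  have hw1 : 1 ≤ fdeg F w := one_le_fdeg he.1 (Sym2.mem_mk_right u w)
  have hu' : ¬ 2 ∣ fdeg (F.erase s(u, w)) u := by
    rw [fdeg_erase_mem he.1 he.2]
    have := heven u
    omega
  have hw' : ¬ 2 ∣ fdeg (F.erase s(u, w)) w := by
    rw [fdeg_erase_mem he.1 (Sym2.mem_mk_right u w)]
    have := heven w
    omega
  have hothers : ∀ x, x ≠ w → x ≠ u → 2 ∣ fdeg (F.erase s(u, w)) x := by
    intro x hxw hxu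
    rw [fdeg_erase_not_mem (by simp [Sym2.mem_iff, hxu, hxw])]
    exact heven x
  have hsub : ↑(F.erase s(u, w)) ⊆ G.edgeSet :=
    Set.Subset.trans (by exact_mod_cast Finset.erase_subset _ _) hFE
  obtain ⟨p, hp, hpe⟩ := exists_open_trail G (F.erase s(u, w)).card (F.erase s(u, w)) le_rfl
    hsub w u (Ne.symm huw) hw' hothers
  refine ⟨Walk.cons hadj p, ?_, ?_, by simp⟩
  · rw [Walk.isTrail_cons]
    exact ⟨hp, fun hmem => Finset.notMem_erase _ _ (hpe _ hmem)⟩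
  · intro e' he'
    rw [Walk.edges_cons, List.mem_cons] at he'
    rcases he' with rfl | he'
    · exact he.1
    · exact Finset.mem_of_mem_erase (hpe _ he')

variable (G) in
/-- support-disjointness of closed trails -/
def SDisj (t s : (u : V) × G.Walk u u) : Prop :=
  ∀ x, x ∈ t.2.support → x ∉ s.2.support

lemma sdisj_symm : Symmetric (SDisj (G := G)) := by
  intro t s h x hxs hxt
  exact h x hxt hxs

lemma merge_trails :
    ∀ (m : ℕ) (L : List ((u : V) × G.Walk u u)), L.length ≤ m →
    (∀ t ∈ L, t.2.IsTrail ∧ 0 < t.2.length) →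
    L.Pairwise (SDisj (G := G)) →
    ∀ (u : V) (T : G.Walk u u), T.IsTrail → 0 < T.length →
    (∀ t ∈ L, ∀ e ∈ T.edges, e ∉ t.2.edges) →
    ∃ L' : List ((u : V) × G.Walk u u),
      (∀ t ∈ L', t.2.IsTrail ∧ 0 < t.2.length) ∧
      L'.Pairwise (SDisj (G := G)) ∧
      (∀ e, (∃ t ∈ L', e ∈ t.2.edges) ↔ (e ∈ T.edges ∨ ∃ t ∈ L, e ∈ t.2.edges)) := by
  intro m
  induction m with
  | zero =>
    intro L hlen _ _ u T hT hTpos _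
    rw [Nat.le_zero, List.length_eq_zero_iff] at hlen
    subst hlen
    refine ⟨[⟨u, T⟩], by simp [hT, hTpos], by simp, ?_⟩
    intro e
    simp
  | succ m ih =>
    intro L hlen htrails hpair u T hT hTpos hdisj
    by_cases hex : ∃ t ∈ L, ∃ x, x ∈ t.2.support ∧ x ∈ T.support
    · obtain ⟨t₀, ht₀, x, hxt, hxT⟩ := hex
      have hnodupL : L.Nodup := by
        refine hpair.imp ?_
        intro t s h heq
        subst heq
        exact h t.1 t.2.start_mem_support t.2.start_mem_support
      set S := t₀.2.rotate x hxt with hSdef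
      set T' := (T.takeUntil x hxT).append (S.append (T.dropUntil x hxT)) with hT'def
      have hTedges : (T.takeUntil x hxT).edges ++ (T.dropUntil x hxT).edges = T.edges := by
        rw [← Walk.edges_append, Walk.take_spec]
      have hSperm : List.Perm S.edges t₀.2.edges := (t₀.2.rotate_edges x hxt).perm
      have hT'perm : List.Perm T'.edges (T.edges ++ t₀.2.edges) := by
        rw [hT'def, Walk.edges_append, Walk.edges_append]
        have h2 := List.Perm.append_left (T.takeUntil x hxT).edges
          (List.perm_append_comm (l₁ := S.edges) (l₂ := (T.dropUntil x hxT).edges))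
        refine h2.trans ?_
        rw [← List.append_assoc, hTedges]
        exact List.Perm.append_left _ hSperm
      have hdisj₀ : List.Disjoint T.edges t₀.2.edges := fun {e} heT het₀ =>
        hdisj t₀ ht₀ e heT het₀
      have hT' : T'.IsTrail := by
        rw [Walk.isTrail_def]
        exact hT'perm.nodup_iff.mpr
          (List.Nodup.append hT.edges_nodup (htrails t₀ ht₀).1.edges_nodup hdisj₀)
      have hT'pos : 0 < T'.length := by
        have hlen' : T'.edges.length = T.edges.length + t₀.2.edges.length := by
          rw [hT'perm.length_eq, List.length_append]
        rw [← Walk.length_edges, hlen', Walk.length_edges]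
        omega
      have hT'mem : ∀ e, e ∈ T'.edges ↔ e ∈ T.edges ∨ e ∈ t₀.2.edges := by
        intro e
        rw [hT'perm.mem_iff, List.mem_append]
      have hL'len : (L.erase t₀).length ≤ m := by
        rw [List.length_erase_of_mem ht₀]
        omega
      have herasesub : ∀ t ∈ L.erase t₀, t ∈ L := fun t ht => List.mem_of_mem_erase ht
      have hpair' : (L.erase t₀).Pairwise (SDisj (G := G)) :=
        hpair.sublist List.erase_sublist
      have hLdisj : ∀ t ∈ L, t ≠ t₀ → ∀ e ∈ t₀.2.edges, e ∉ t.2.edges := by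
        intro t ht htne e het₀ het
        induction e with
        | _ y z =>
          have hy₀ : y ∈ t₀.2.support := t₀.2.fst_mem_support_of_mem_edges het₀
          have hy : y ∈ t.2.support := t.2.fst_mem_support_of_mem_edges het
          exact (haveI : Std.Symm (SDisj (G := G)) := ⟨fun _ _ h => sdisj_symm h⟩; hpair.forall) ht₀ ht (fun h => htne h.symm) y hy₀ hy
      have hdisj' : ∀ t ∈ L.erase t₀, ∀ e ∈ T'.edges, e ∉ t.2.edges := by
        intro t ht e heT' het
        have htL : t ∈ L := herasesub t ht
        have htne : t ≠ t₀ := ((hnodupL.mem_erase_iff).mp ht).1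
        rcases (hT'mem e).mp heT' with h1 | h1
        · exact hdisj t htL e h1 het
        · exact hLdisj t htL htne e h1 het
      obtain ⟨L', hL'tr, hL'pair, hL'cov⟩ := ih (L.erase t₀) hL'len
        (fun t ht => htrails t (herasesub t ht)) hpair' u T' hT' hT'pos hdisj'
      refine ⟨L', hL'tr, hL'pair, ?_⟩
      intro e
      rw [hL'cov e, hT'mem e]
      constructor
      · rintro ((h1 | h1) | ⟨t, ht, h2⟩)
        · exact Or.inl h1
        · exact Or.inr ⟨t₀, ht₀, h1⟩
        · exact Or.inr ⟨t, herasesub t ht, h2⟩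
      · rintro (h1 | ⟨t, ht, h2⟩)
        · exact Or.inl (Or.inl h1)
        · by_cases htne : t = t₀
          · exact Or.inl (Or.inr (htne ▸ h2))
          · exact Or.inr ⟨t, (hnodupL.mem_erase_iff).mpr ⟨htne, ht⟩, h2⟩
    · push_neg at hex
      refine ⟨⟨u, T⟩ :: L, ?_, ?_, ?_⟩
      · intro t ht
        rcases List.mem_cons.mp ht with rfl | ht'
        · exact ⟨hT, hTpos⟩
        · exact htrails t ht'
      · rw [List.pairwise_cons]
        refine ⟨fun t ht y hyT hyt => hex t ht y hyt hyT, hpair⟩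
      · intro e
        simp only [List.mem_cons]
        constructor
        · rintro ⟨t, rfl | ht, h2⟩
          · exact Or.inl h2
          · exact Or.inr ⟨t, ht, h2⟩
        · rintro (h1 | ⟨t, ht, h2⟩)
          · exact ⟨⟨u, T⟩, Or.inl rfl, h1⟩
          · exact ⟨t, Or.inr ht, h2⟩

lemma fdeg_sdiff {F S : Finset (Sym2 V)} (hS : S ⊆ F) (v : V) :
    fdeg (F \ S) v = fdeg F v - fdeg S v := by
  have h1 : (F \ S).filter (fun e => v ∈ e) = F.filter (fun e => v ∈ e) \ S.filter (fun e => v ∈ e) := by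
    ext e
    simp only [Finset.mem_filter, Finset.mem_sdiff]
    tauto
  rw [fdeg, h1, Finset.card_sdiff_of_subset (Finset.filter_subset_filter _ hS)]
  rfl

lemma exists_decomp (G : SimpleGraph V) :
    ∀ (n : ℕ) (F : Finset (Sym2 V)), F.card ≤ n → ↑F ⊆ G.edgeSet →
    (∀ v, 2 ∣ fdeg F v) →
    ∃ L : List ((u : V) × G.Walk u u),
      (∀ t ∈ L, t.2.IsTrail ∧ 0 < t.2.length) ∧
      L.Pairwise (SDisj (G := G)) ∧ (∀ e, e ∈ F ↔ ∃ t ∈ L, e ∈ t.2.edges) := by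
  intro n
  induction n with
  | zero =>
    intro F hc _ _
    rw [Nat.le_zero, Finset.card_eq_zero] at hc
    subst hc
    exact ⟨[], by simp, by simp, by simp⟩
  | succ n ih =>
    intro F hc hFE heven
    rcases F.eq_empty_or_nonempty with rfl | ⟨e₀, he₀⟩
    · exact ⟨[], by simp, by simp, by simp⟩
    · induction e₀ with
      | _ y z =>
        have hy : 0 < fdeg F y :=
          Finset.card_pos.mpr ⟨s(y, z), Finset.mem_filter.mpr ⟨he₀, Sym2.mem_mk_left y z⟩⟩
        obtain ⟨T, hTtr, hTsub, hTpos⟩ := exists_closed_trail G F hFE heven y hy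
        set F' := F \ T.edges.toFinset with hF'def
        have hsub' : ↑F' ⊆ G.edgeSet :=
          Set.Subset.trans (by exact_mod_cast Finset.sdiff_subset) hFE
        have hTsubF : T.edges.toFinset ⊆ F := by
          intro e he
          exact hTsub e (List.mem_toFinset.mp he)
        obtain ⟨e₁, he₁⟩ : ∃ e₁, e₁ ∈ T.edges := by
          refine List.exists_mem_of_ne_nil T.edges ?_
          intro hnil
          have := T.length_edges
          rw [hnil] at this
          simp at this
          omega
        have hssub : F' ⊂ F := by
          refine Finset.ssubset_iff_of_subset Finset.sdiff_subset |>.mpr ?_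
          exact ⟨e₁, hTsubF (List.mem_toFinset.mpr he₁), by simp [hF'def, he₁]⟩
        have hcard' : F'.card ≤ n := by
          have := Finset.card_lt_card hssub
          omega
        have heven' : ∀ v, 2 ∣ fdeg F' v := by
          intro v
          rw [hF'def, fdeg_sdiff hTsubF v]
          have hTdeg : fdeg T.edges.toFinset v = wdeg T v := wdeg_eq_fdeg T hTtr v
          have hTeven : 2 ∣ wdeg T v := Dvd.intro _ (wdeg_closed T v).symm
          have hle : fdeg T.edges.toFinset v ≤ fdeg F v :=
            Finset.card_le_card (Finset.filter_subset_filter _ hTsubF)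
          have := heven v
          omega
        obtain ⟨L', hL'tr, hL'pair, hL'cov⟩ := ih F' hcard' hsub' heven'
        have hdisj : ∀ t ∈ L', ∀ e ∈ T.edges, e ∉ t.2.edges := by
          intro t ht e heT het
          have heF' : e ∈ F' := (hL'cov e).mpr ⟨t, ht, het⟩
          rw [hF'def, Finset.mem_sdiff] at heF'
          exact heF'.2 (List.mem_toFinset.mpr heT)
        obtain ⟨L'', hL''tr, hL''pair, hL''cov⟩ := merge_trails L'.length L' le_rfl
          hL'tr hL'pair y T hTtr hTpos hdisj
        refine ⟨L'', hL''tr, hL''pair, ?_⟩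
        intro e
        rw [hL''cov e, ← hL'cov e]
        constructor
        · intro heF
          by_cases heT : e ∈ T.edges
          · exact Or.inl heT
          · refine Or.inr ?_
            rw [hF'def, Finset.mem_sdiff]
            exact ⟨heF, fun hmem => heT (List.mem_toFinset.mp hmem)⟩
        · rintro (h1 | h1)
          · exact hTsub e h1
          · exact (Finset.mem_sdiff.mp (hF'def ▸ h1)).1

end Hierholzer

section Assemble

lemma good_list :
    ∀ (L : List ((u : V) × G.Walk u u)),
    (∀ t ∈ L, t.2.IsTrail) →
    L.Pairwise (SDisj (G := G)) →
    (∀ t ∈ L, ∀ v, v ∈ t.2.support → wdeg t.2 v = 2 ∨ wdeg t.2 v = 4) →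
    ∃ E₁ E₂ : Set (Sym2 V), E₁ ∪ E₂ = {e | ∃ t ∈ L, e ∈ t.2.edges} ∧ Disjoint E₁ E₂ ∧
      IsRegularPartOfDeg 2 E₁ ∧ IsRegularPartOfDeg 2 E₂
  | [], _, _, _ => by
    refine ⟨∅, ∅, by simp, by simp, ?_, ?_⟩ <;>
      · rintro v ⟨e, he, _⟩
        exact absurd he (Set.notMem_empty e)
  | t :: L, htr, hpair, hdeg => by
    obtain ⟨A₁, A₂, hAu, hAd, hA1, hA2⟩ :=
      good_walk t.2 (htr t List.mem_cons_self) (hdeg t List.mem_cons_self)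
    obtain ⟨B₁, B₂, hBu, hBd, hB1, hB2⟩ := good_list L
      (fun s hs => htr s (List.mem_cons_of_mem _ hs))
      (List.pairwise_cons.mp hpair).2
      (fun s hs => hdeg s (List.mem_cons_of_mem _ hs))
    have hhead : ∀ s ∈ L, SDisj (G := G) t s := (List.pairwise_cons.mp hpair).1
    have hA1sub : A₁ ⊆ {e | e ∈ t.2.edges} := hAu ▸ Set.subset_union_left
    have hA2sub : A₂ ⊆ {e | e ∈ t.2.edges} := hAu ▸ Set.subset_union_right
    have hB1sub : B₁ ⊆ {e | ∃ s ∈ L, e ∈ s.2.edges} := hBu ▸ Set.subset_union_left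
    have hB2sub : B₂ ⊆ {e | ∃ s ∈ L, e ∈ s.2.edges} := hBu ▸ Set.subset_union_right
    have hVD : ∀ v, v ∈ t.2.support → ∀ e' ∈ {e | ∃ s ∈ L, e ∈ s.2.edges}, v ∉ e' := by
      rintro v hv e' ⟨s, hs, hes⟩ hve'
      exact hhead s hs v hv (mem_support_of_mem_edge s.2 hes hve')
    have hcross : ∀ e, e ∈ {e | e ∈ t.2.edges} → e ∈ {e | ∃ s ∈ L, e ∈ s.2.edges} → False := by
      intro e het heL
      induction e with
      | _ y z =>
        have hy : y ∈ t.2.support := t.2.fst_mem_support_of_mem_edges het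
        exact hVD y hy _ heL (Sym2.mem_mk_left y z)
    have hreg : ∀ (X Y : Set (Sym2 V)), X ⊆ {e | e ∈ t.2.edges} →
        Y ⊆ {e | ∃ s ∈ L, e ∈ s.2.edges} →
        IsRegularPartOfDeg 2 X → IsRegularPartOfDeg 2 Y → IsRegularPartOfDeg 2 (X ∪ Y) := by
      rintro X Y hXs hYs hX hY v ⟨e, he, hve⟩
      rcases he with heX | heY
      · have hvsup : v ∈ t.2.support := mem_support_of_mem_edge t.2 (hXs heX) hve
        have hset : {x ∈ X ∪ Y | v ∈ x} = {x ∈ X | v ∈ x} := by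
          ext x
          constructor
          · rintro ⟨hx | hy, hvx⟩
            · exact ⟨hx, hvx⟩
            · exact absurd hvx (hVD v hvsup x (hYs hy))
          · rintro ⟨hx, hvx⟩
            exact ⟨Or.inl hx, hvx⟩
        rw [partDeg, hset]
        exact hX v ⟨e, heX, hve⟩
      · have hset : {x ∈ X ∪ Y | v ∈ x} = {x ∈ Y | v ∈ x} := by
          ext x
          constructor
          · rintro ⟨hx | hy, hvx⟩
            · exfalso
              have hvsup : v ∈ t.2.support := mem_support_of_mem_edge t.2 (hXs hx) hvx
              exact hVD v hvsup e (hYs heY) hve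
            · exact ⟨hy, hvx⟩
          · rintro ⟨hy, hvx⟩
            exact ⟨Or.inr hy, hvx⟩
        rw [partDeg, hset]
        exact hY v ⟨e, heY, hve⟩
    refine ⟨A₁ ∪ B₁, A₂ ∪ B₂, ?_, ?_, hreg A₁ B₁ hA1sub hB1sub hA1 hB1,
      hreg A₂ B₂ hA2sub hB2sub hA2 hB2⟩
    · rw [Set.union_union_union_comm, hAu, hBu]
      ext e
      simp only [Set.mem_union, Set.mem_setOf_eq, List.mem_cons]
      constructor
      · rintro (h1 | ⟨s, hs, h2⟩)
        · exact ⟨t, Or.inl rfl, h1⟩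
        · exact ⟨s, Or.inr hs, h2⟩
      · rintro ⟨s, rfl | hs, h2⟩
        · exact Or.inl h2
        · exact Or.inr ⟨s, hs, h2⟩
    · rw [Set.disjoint_left]
      rintro e (h1 | h1) (h2 | h2)
      · exact Set.disjoint_left.mp hAd h1 h2
      · exact hcross e (hA1sub h1) (hB2sub h2)
      · exact hcross e (hA2sub h2) (hB1sub h1)
      · exact Set.disjoint_left.mp hBd h1 h2

end Assemble
end Stmt8Aux

/-- a finite graph all of whose vertex degrees are 2 or 4 can be decomposed into
two 2-regular parts. -/
theorem stmt_8 {V : Type*} [Fintype V] (G : SimpleGraph V)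
    (hdeg : ∀ v : V, partDeg G.edgeSet v = 2 ∨ partDeg G.edgeSet v = 4) :
    ∃ E₁ E₂ : Set (Sym2 V),
      E₁ ∪ E₂ = G.edgeSet ∧ Disjoint E₁ E₂ ∧
      IsRegularPartOfDeg 2 E₁ ∧ IsRegularPartOfDeg 2 E₂ := by
  classical
  open Stmt8Aux in
  obtain ⟨F₀, hF₀⟩ : ∃ F₀ : Finset (Sym2 V), ↑F₀ = G.edgeSet :=
    ⟨(Set.toFinite G.edgeSet).toFinset, Set.Finite.coe_toFinset _⟩
  have hpart : ∀ v, partDeg G.edgeSet v = Stmt8Aux.fdeg F₀ v := by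
    intro v
    rw [partDeg, ← hF₀]
    have : {e ∈ (↑F₀ : Set (Sym2 V)) | v ∈ e} = ↑(F₀.filter (fun e => v ∈ e)) := by
      ext e
      simp
    rw [this, Set.ncard_coe_finset]
    rfl
  have heven : ∀ v, 2 ∣ Stmt8Aux.fdeg F₀ v := by
    intro v
    rcases hdeg v with h | h <;> rw [hpart v] at h <;> omega
  obtain ⟨L, htr, hpair, hcov⟩ := Stmt8Aux.exists_decomp G F₀.card F₀ le_rfl
    (hF₀ ▸ Set.Subset.rfl) heven
  have hdeg' : ∀ t ∈ L, ∀ v, v ∈ t.2.support →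
      Stmt8Aux.wdeg t.2 v = 2 ∨ Stmt8Aux.wdeg t.2 v = 4 := by
    intro t ht v hv
    have hfil : F₀.filter (fun e => v ∈ e) = t.2.edges.toFinset.filter (fun e => v ∈ e) := by
      ext e
      simp only [Finset.mem_filter, List.mem_toFinset]
      constructor
      · rintro ⟨heF, hvE⟩
        obtain ⟨s, hs, hes⟩ := (hcov e).mp heF
        by_cases hst : s = t
        · exact ⟨hst ▸ hes, hvE⟩
        · exfalso
          have hv1 : v ∈ s.2.support := Stmt8Aux.mem_support_of_mem_edge s.2 hes hvE
          exact (haveI : Std.Symm (Stmt8Aux.SDisj G) := ⟨fun _ _ h => Stmt8Aux.sdisj_symm h⟩; hpair.forall) hs ht hst v hv1 hv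
      · rintro ⟨het, hvE⟩
        exact ⟨(hcov e).mpr ⟨t, ht, het⟩, hvE⟩
    have hwf := Stmt8Aux.wdeg_eq_fdeg t.2 (htr t ht).1 v
    have h24 := hdeg v
    rw [hpart v, Stmt8Aux.fdeg, hfil] at h24
    rw [← hwf]
    exact h24
  obtain ⟨E₁, E₂, hu, hd, h1, h2⟩ :=
    Stmt8Aux.good_list L (fun t ht => (htr t ht).1) hpair hdeg'
  refine ⟨E₁, E₂, ?_, hd, h1, h2⟩
  rw [hu, ← hF₀]
  ext e
  simp only [Set.mem_setOf_eq, Finset.coe_sort_coe, Finset.mem_coe]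
  exact (hcov e).symm
end

section
/- Let G be a finite graph in which every vertex has degree 2, 3 or 5, and let G' be the induced subgraph of G on the set of vertices of degree 2 or 5. Then E(G) can be partitioned into two (possibly empty) parts E₁ and E₂ such that E₁ is a 2-regular part and E₂ is a 3-regular part if and only if G' has a 2-factor, i.e., a set F of edges of G' such that every vertex of G' is incident to exactly two edges of F. -/
open SimpleGraph

variable {V : Type*}

section Aux

variable [Finite V]

lemma partDeg_union' {E₁ E₂ : Set (Sym2 V)} (h : Disjoint E₁ E₂) (v : V) :
    partDeg (E₁ ∪ E₂) v = partDeg E₁ v + partDeg E₂ v := by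
  unfold partDeg
  have hs : {e ∈ E₁ ∪ E₂ | v ∈ e} = {e ∈ E₁ | v ∈ e} ∪ {e ∈ E₂ | v ∈ e} := by
    ext e; simp [Set.mem_union, or_and_right]
  rw [hs, Set.ncard_union_eq (h.mono (Set.sep_subset _ _) (Set.sep_subset _ _))
    (Set.toFinite _) (Set.toFinite _)]

lemma partDeg_pos' {E : Set (Sym2 V)} {v : V} (h : ∃ e ∈ E, v ∈ e) :
    1 ≤ partDeg E v := by
  obtain ⟨e, he, hv⟩ := h
  have : 0 < partDeg E v := by
    rw [partDeg, Set.ncard_pos (Set.toFinite _)]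
    exact ⟨e, he, hv⟩
  omega

lemma partDeg_zero' {E : Set (Sym2 V)} {v : V} (h : ¬ ∃ e ∈ E, v ∈ e) :
    partDeg E v = 0 := by
  rw [partDeg, Set.ncard_eq_zero (Set.toFinite _)]
  ext e; simp only [Set.mem_setOf_eq, Set.mem_empty_iff_false, iff_false]
  exact fun ⟨he, hv⟩ => h ⟨e, he, hv⟩

end Aux

/-- for a finite graph all of whose vertex degrees lie in {2, 3, 5}, with G' the
induced subgraph on the vertices of degree 2 or 5, the edge set of G decomposes into a
2-regular part and a 3-regular part iff G' has a 2-factor. -/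
theorem stmt_9 {V : Type*} [Fintype V] (G : SimpleGraph V)
    (hdeg : ∀ v : V, partDeg G.edgeSet v ∈ ({2, 3, 5} : Set ℕ)) :
    (∃ E₁ E₂ : Set (Sym2 V),
        E₁ ∪ E₂ = G.edgeSet ∧ Disjoint E₁ E₂ ∧
        IsRegularPartOfDeg 2 E₁ ∧ IsRegularPartOfDeg 3 E₂) ↔
      (∃ F : Set (Sym2 V),
        F ⊆ {e ∈ G.edgeSet | ∀ v : V, v ∈ e →
              (partDeg G.edgeSet v = 2 ∨ partDeg G.edgeSet v = 5)} ∧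
        ∀ v : V, (partDeg G.edgeSet v = 2 ∨ partDeg G.edgeSet v = 5) →
          partDeg F v = 2) := by
  constructor
  · rintro ⟨E₁, E₂, hunion, hdisj, h2, h3⟩
    have hsum : ∀ v : V, partDeg G.edgeSet v = partDeg E₁ v + partDeg E₂ v := by
      intro v; rw [← hunion, partDeg_union' hdisj]
    -- degrees in E₁ are 0 or 2, in E₂ are 0 or 3
    have hd1 : ∀ v : V, partDeg E₁ v = 0 ∨ partDeg E₁ v = 2 := by
      intro v
      by_cases h : ∃ e ∈ E₁, v ∈ e
      · exact Or.inr (h2 v h)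
      · exact Or.inl (partDeg_zero' h)
    have hd2 : ∀ v : V, partDeg E₂ v = 0 ∨ partDeg E₂ v = 3 := by
      intro v
      by_cases h : ∃ e ∈ E₂, v ∈ e
      · exact Or.inr (h3 v h)
      · exact Or.inl (partDeg_zero' h)
    have key : ∀ v : V, (partDeg G.edgeSet v = 2 ∨ partDeg G.edgeSet v = 5) →
        partDeg E₁ v = 2 := by
      intro v hv
      have hs := hsum v
      have hEd := hdeg v
      simp only [Set.mem_insert_iff, Set.mem_singleton_iff] at hEd
      rcases hd1 v with h1 | h1 <;> rcases hd2 v with h2' | h2' <;>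
        rcases hv with hv | hv <;> omega
    refine ⟨E₁, ?_, fun v hv => key v hv⟩
    intro e he
    have heE : e ∈ G.edgeSet := hunion ▸ Set.mem_union_left _ he
    refine ⟨heE, fun v hv => ?_⟩
    have hE1v : partDeg E₁ v = 2 := h2 v ⟨e, he, hv⟩
    have hs := hsum v
    have := hdeg v
    simp only [Set.mem_insert_iff, Set.mem_singleton_iff] at this
    rcases hd2 v with h2' | h2' <;> rcases this with h | h | h <;> omega
  · rintro ⟨F, hFsub, hF2⟩
    have hFE : F ⊆ G.edgeSet := fun e he => (hFsub he).1
    refine ⟨F, G.edgeSet \ F, Set.union_diff_cancel hFE, Set.disjoint_sdiff_right, ?_, ?_⟩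
    · rintro v ⟨e, he, hv⟩
      exact hF2 v ((hFsub he).2 v hv)
    · rintro v ⟨e, he, hv⟩
      have hsum : partDeg G.edgeSet v = partDeg F v + partDeg (G.edgeSet \ F) v := by
        conv_lhs => rw [← Set.union_diff_cancel hFE]
        rw [partDeg_union' Set.disjoint_sdiff_right]
      have hpos : 1 ≤ partDeg (G.edgeSet \ F) v := partDeg_pos' ⟨e, he, hv⟩
      have := hdeg v
      simp only [Set.mem_insert_iff, Set.mem_singleton_iff] at this
      rcases this with h | h | h
      · have : partDeg F v = 2 := hF2 v (Or.inl h)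
        omega
      · have hF0 : partDeg F v = 0 := by
          apply partDeg_zero'
          rintro ⟨f, hf, hvf⟩
          rcases (hFsub hf).2 v hvf with h' | h' <;> omega
        omega
      · have : partDeg F v = 2 := hF2 v (Or.inr h)
        omega
end

section
/- Let G be a finite graph in which every vertex has degree 1, 3 or 4, and let G' be the induced subgraph of G on the set of vertices of degree 1 or 4. Then E(G) can be partitioned into two (possibly empty) parts E₁ and E₂ such that E₁ is a 1-regular part and E₂ is a 3-regular part if and only if G' has a perfect matching, i.e., a set M of edges of G' such that every vertex of G' is incident to exactly one edge of M. -/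
open SimpleGraph

variable {V : Type*}

lemma partDeg_union_aux {V : Type*} [Finite V] {A B : Set (Sym2 V)} (h : Disjoint A B)
    (v : V) : partDeg (A ∪ B) v = partDeg A v + partDeg B v := by
  unfold partDeg
  rw [show {e ∈ A ∪ B | v ∈ e} = {e ∈ A | v ∈ e} ∪ {e ∈ B | v ∈ e} by
    ext e; simp only [Set.mem_setOf_eq, Set.mem_union]; tauto]
  exact Set.ncard_union_eq
    (Set.disjoint_of_subset (Set.sep_subset _ _) (Set.sep_subset _ _) h)
    (Set.toFinite _) (Set.toFinite _)

lemma partDeg_pos_aux {V : Type*} [Finite V] {E : Set (Sym2 V)} {v : V}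
    (h : ∃ e ∈ E, v ∈ e) : 1 ≤ partDeg E v := by
  obtain ⟨e, he, hv⟩ := h
  have : ({f ∈ E | v ∈ f} : Set (Sym2 V)).Nonempty := ⟨e, he, hv⟩
  exact (Set.ncard_pos (Set.toFinite _)).mpr this

lemma partDeg_zero_aux {V : Type*} {E : Set (Sym2 V)} {v : V}
    (h : ¬ ∃ e ∈ E, v ∈ e) : partDeg E v = 0 := by
  unfold partDeg
  rw [show {e ∈ E | v ∈ e} = (∅ : Set (Sym2 V)) by
    ext e; simp only [Set.mem_setOf_eq, Set.mem_empty_iff_false, iff_false]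
    intro ⟨h1, h2⟩; exact h ⟨e, h1, h2⟩]
  simp

/-- for a finite graph all of whose vertex degrees lie in {1, 3, 4}, with G' the
induced subgraph on the vertices of degree 1 or 4, the edge set of G decomposes into a
1-regular part and a 3-regular part iff G' has a perfect matching. -/
theorem stmt_11 {V : Type*} [Fintype V] (G : SimpleGraph V)
    (hdeg : ∀ v : V, partDeg G.edgeSet v ∈ ({1, 3, 4} : Set ℕ)) :
    (∃ E₁ E₂ : Set (Sym2 V),
        E₁ ∪ E₂ = G.edgeSet ∧ Disjoint E₁ E₂ ∧
        IsRegularPartOfDeg 1 E₁ ∧ IsRegularPartOfDeg 3 E₂) ↔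
      (∃ F : Set (Sym2 V),
        F ⊆ {e ∈ G.edgeSet | ∀ v : V, v ∈ e →
              (partDeg G.edgeSet v = 1 ∨ partDeg G.edgeSet v = 4)} ∧
        ∀ v : V, (partDeg G.edgeSet v = 1 ∨ partDeg G.edgeSet v = 4) →
          partDeg F v = 1) := by
  constructor
  · rintro ⟨E₁, E₂, hunion, hdisj, h1, h3⟩
    have key : ∀ v : V, partDeg G.edgeSet v = partDeg E₁ v + partDeg E₂ v := by
      intro v; rw [← hunion]; exact partDeg_union_aux hdisj v
    refine ⟨E₁, ?_, ?_⟩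
    · intro e he
      refine ⟨hunion ▸ Set.mem_union_left _ he, fun v hv => ?_⟩
      rw [key v, h1 v ⟨e, he, hv⟩]
      by_cases h2 : ∃ f ∈ E₂, v ∈ f
      · rw [h3 v h2]; right; rfl
      · rw [partDeg_zero_aux h2]; left; rfl
    · intro v hv
      by_contra hne
      have hd1 : partDeg E₁ v = 0 := by
        by_cases h1' : ∃ e ∈ E₁, v ∈ e
        · exact absurd (h1 v h1') hne
        · exact partDeg_zero_aux h1'
      have hd2 : partDeg E₂ v = 0 ∨ partDeg E₂ v = 3 := by
        by_cases h2' : ∃ e ∈ E₂, v ∈ e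
        · right; exact h3 v h2'
        · left; exact partDeg_zero_aux h2'
      rcases hv with hv | hv <;> rw [key v, hd1, zero_add] at hv <;> omega
  · rintro ⟨F, hFsub, hF⟩
    have hFE : F ⊆ G.edgeSet := fun e he => (hFsub he).1
    refine ⟨F, G.edgeSet \ F, by rw [Set.union_diff_cancel hFE],
      Set.disjoint_sdiff_right, ?_, ?_⟩
    · rintro v ⟨e, he, hv⟩
      exact hF v ((hFsub he).2 v hv)
    · rintro v ⟨e, ⟨heG, heF⟩, hv⟩
      have key : partDeg G.edgeSet v = partDeg F v + partDeg (G.edgeSet \ F) v := by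
        conv_lhs => rw [← Set.union_diff_cancel hFE]
        exact partDeg_union_aux Set.disjoint_sdiff_right v
      have hpos : 1 ≤ partDeg (G.edgeSet \ F) v :=
        partDeg_pos_aux ⟨e, ⟨heG, heF⟩, hv⟩
      rcases hdeg v with hd | hd | hd
      · -- degree 1: impossible
        have := hF v (Or.inl hd)
        omega
      · -- degree 3: no F edge at v
        have hF0 : partDeg F v = 0 := by
          apply partDeg_zero_aux
          rintro ⟨f, hf, hvf⟩
          rcases (hFsub hf).2 v hvf with h | h <;> omega
        omega
      · -- degree 4
        have hd4 : partDeg G.edgeSet v = 4 := hd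
        have := hF v (Or.inr hd4)
        omega
end
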